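/- arXiv:2112.13886 — 7 statements merged into one kernel-verified Lean document; each statement's English description precedes it below -/
import Mathlib

section
/- If d > 1 divides p-1, then sqrt(((d-1)p+1)/d) ≤ V_1(p) ≤ sqrt((d-1)p + 1), where V_1(p) = Σ_{s=0}^{d-1} |η_s|. -/
open Finset

set_option maxHeartbeats 1000000 in
/-- If `d > 1` divides `p-1`, then `√(((d-1)p+1)/d) ≤ V_1(p) ≤ √((d-1)p + 1)`,
where `V_1(p) = ∑_{s=0}^{d-1} |η_s|`. -/
theorem gaussian_periods_V1_bounds (p d k : ℕ) (hp : p.Prime) (hodd : Odd p)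
    (hd : 1 < d) (hdk : p - 1 = d * k)
    (g : (ZMod p)ˣ) (hg : ∀ x : (ZMod p)ˣ, x ∈ Subgroup.zpowers g)
    (η : ℕ → ℂ)
    (hη : ∀ a : ℕ, η a = ∑ j ∈ Finset.range k,
      Complex.exp (2 * (Real.pi : ℂ) * Complex.I *
        (((g ^ (d * j + a) : (ZMod p)ˣ) : ZMod p).val : ℂ) / (p : ℂ))) :
    Real.sqrt (((d - 1 : ℝ) * p + 1) / d) ≤ ∑ s ∈ Finset.range d, ‖η s‖ ∧
    ∑ s ∈ Finset.range d, ‖η s‖ ≤ Real.sqrt ((d - 1 : ℝ) * p + 1) := by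
  haveI : Fact p.Prime := ⟨hp⟩
  have hp2 : 2 ≤ p := hp.two_le
  have hp3 : 3 ≤ p := by
    have hne : p ≠ 2 := by rintro rfl; exact (by decide : ¬ Odd 2) hodd
    omega
  have hdk0 : 0 < d * k := by omega
  have hd0 : 0 < d := by omega
  have hk0 : 0 < k := by
    rcases Nat.eq_zero_or_pos k with h | h
    · rw [h, Nat.mul_zero] at hdk0; omega
    · exact h
  -- the standard additive character
  set ψ : AddChar (ZMod p) ℂ := ZMod.stdAddChar with hψdef
  have hψη : ∀ a : ℕ, η a = ∑ j ∈ Finset.range k,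
      ψ ((g ^ (d * j + a) : (ZMod p)ˣ) : ZMod p) := by
    intro a
    rw [hη a]
    refine Finset.sum_congr rfl fun j _ => ?_
    rw [hψdef, ZMod.stdAddChar_apply, ZMod.toCircle_apply]
  -- order of g
  have horder : orderOf g = d * k := by
    rw [orderOf_eq_card_of_forall_mem_zpowers hg, Nat.card_eq_fintype_card,
      ZMod.card_units_eq_totient, Nat.totient_prime hp, hdk]
  have hcard : Fintype.card (ZMod p)ˣ = d * k := by
    rw [ZMod.card_units_eq_totient, Nat.totient_prime hp, hdk]
  -- sum over all units as a double sum
  have hsum_units : ∀ F : (ZMod p)ˣ → ℂ,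
      ∑ s ∈ Finset.range d, ∑ j ∈ Finset.range k, F (g ^ (d * j + s))
        = ∑ x : (ZMod p)ˣ, F x := by
    intro F
    have hexp_lt : ∀ q ∈ Finset.range d ×ˢ Finset.range k, d * q.2 + q.1 < d * k := by
      rintro ⟨s, j⟩ hq
      simp only [Finset.mem_product, Finset.mem_range] at hq
      show d * j + s < d * k
      have h1 : d * j + d ≤ d * k := by
        have h := Nat.mul_le_mul_left d hq.2
        rwa [Nat.mul_succ] at h
      omega
    have hinj : ∀ q1 ∈ Finset.range d ×ˢ Finset.range k,
        ∀ q2 ∈ Finset.range d ×ˢ Finset.range k,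
        g ^ (d * q1.2 + q1.1) = g ^ (d * q2.2 + q2.1) → q1 = q2 := by
      rintro ⟨s1, j1⟩ h1 ⟨s2, j2⟩ h2 heq
      have he : d * j1 + s1 = d * j2 + s2 := by
        have := pow_injOn_Iio_orderOf (x := g)
          (by rw [horder]; exact Set.mem_Iio.mpr (hexp_lt _ h1))
          (by rw [horder]; exact Set.mem_Iio.mpr (hexp_lt _ h2)) heq
        exact this
      simp only [Finset.mem_product, Finset.mem_range] at h1 h2
      have hs : s1 = s2 := by
        have e1 : (d * j1 + s1) % d = s1 := by
          rw [Nat.mul_add_mod]; exact Nat.mod_eq_of_lt h1.1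
        have e2 : (d * j2 + s2) % d = s2 := by
          rw [Nat.mul_add_mod]; exact Nat.mod_eq_of_lt h2.1
        rw [← e1, ← e2, he]
      have hj : j1 = j2 := Nat.eq_of_mul_eq_mul_left hd0 (by omega)
      rw [hs, hj]
    have himage : (Finset.range d ×ˢ Finset.range k).image
        (fun q : ℕ × ℕ => g ^ (d * q.2 + q.1)) = Finset.univ := by
      apply Finset.eq_univ_of_card
      rw [Finset.card_image_of_injOn hinj, Finset.card_product, Finset.card_range,
        Finset.card_range, hcard]
    calc ∑ s ∈ Finset.range d, ∑ j ∈ Finset.range k, F (g ^ (d * j + s))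
        = ∑ q ∈ Finset.range d ×ˢ Finset.range k, F (g ^ (d * q.2 + q.1)) := by
          rw [Finset.sum_product]
      _ = ∑ x ∈ (Finset.range d ×ˢ Finset.range k).image
            (fun q : ℕ × ℕ => g ^ (d * q.2 + q.1)), F x := by
          rw [Finset.sum_image hinj]
      _ = ∑ x : (ZMod p)ˣ, F x := by rw [himage]
  -- conjugation of ψ
  have hconj : ∀ x : ZMod p, (starRingEnd ℂ) (ψ x) = ψ (-x) := by
    intro x
    rw [hψdef, AddChar.starComp_apply (R := ZMod p)
      (by rw [ZMod.ringChar_zmod_n]; exact hp.pos), AddChar.inv_apply]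
  -- power rearrangement
  have hpow : ∀ j' t s : ℕ, g ^ (d * ((j' + t) % k) + s)
      = g ^ (d * j' + s) * g ^ (d * t) := by
    intro j' t s
    have h1 : g ^ (d * ((j' + t) % k)) = g ^ (d * (j' + t)) := by
      have : d * ((j' + t) % k) = (d * (j' + t)) % (d * k) := by
        rw [Nat.mul_mod_mul_left]
      rw [this, ← horder, pow_mod_orderOf]
    calc g ^ (d * ((j' + t) % k) + s)
        = g ^ (d * ((j' + t) % k)) * g ^ s := pow_add g _ _
      _ = g ^ (d * (j' + t)) * g ^ s := by rw [h1]
      _ = g ^ (d * j') * g ^ (d * t) * g ^ s := by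
          rw [Nat.mul_add, pow_add]
      _ = g ^ (d * j') * g ^ s * g ^ (d * t) := by
          rw [mul_right_comm]
      _ = g ^ (d * j' + s) * g ^ (d * t) := by rw [pow_add]
  -- sum of ψ over units
  have hUnitsSum : ∀ c : ZMod p,
      ∑ x : (ZMod p)ˣ, ψ ((x : ZMod p) * c) = (if c = 0 then (p : ℂ) else 0) - 1 := by
    intro c
    have h1 : ∑ x : ZMod p, ψ (x * c) = if c = 0 then (Fintype.card (ZMod p) : ℂ) else 0 := by
      rw [hψdef, AddChar.sum_mulShift c (ZMod.isPrimitive_stdAddChar p)]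
      split_ifs <;> simp
    have h2 : ∑ x : (ZMod p)ˣ, ψ ((x : ZMod p) * c)
        = ∑ x ∈ (Finset.univ : Finset (ZMod p)).erase 0, ψ (x * c) := by
      refine Finset.sum_bij' (fun x _ => (x : ZMod p))
        (fun x hx => Units.mk0 x (Finset.ne_of_mem_erase hx)) ?_ ?_ ?_ ?_ ?_
      · intro x _
        exact Finset.mem_erase.mpr ⟨x.ne_zero, Finset.mem_univ _⟩
      · intro x hx; exact Finset.mem_univ _
      · intro x _; exact Units.ext rfl
      · intro x hx; simp
      · intro x _; rfl
    rw [h2, Finset.sum_erase_eq_sub (Finset.mem_univ 0), h1, ZMod.card p]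
    simp
  have swap1 : ∀ f : ℕ → ℕ → ℕ → ℂ,
      ∑ s ∈ Finset.range d, ∑ j' ∈ Finset.range k, ∑ t ∈ Finset.range k, f s j' t
        = ∑ t ∈ Finset.range k, ∑ s ∈ Finset.range d, ∑ j' ∈ Finset.range k, f s j' t := by
    intro f
    calc ∑ s ∈ Finset.range d, ∑ j' ∈ Finset.range k, ∑ t ∈ Finset.range k, f s j' t
        = ∑ s ∈ Finset.range d, ∑ t ∈ Finset.range k, ∑ j' ∈ Finset.range k, f s j' t :=
          Finset.sum_congr rfl fun s _ => Finset.sum_comm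
      _ = ∑ t ∈ Finset.range k, ∑ s ∈ Finset.range d, ∑ j' ∈ Finset.range k, f s j' t :=
          Finset.sum_comm
  -- the key identity : ∑ |η s|² = p - k
  have key : ∑ s ∈ Finset.range d, (‖η s‖) ^ 2 = (p : ℝ) - k := by
    have keyC : ((∑ s ∈ Finset.range d, (‖η s‖) ^ 2 : ℝ) : ℂ)
        = (p : ℂ) - k := by
      push_cast
      have step1 : ∀ s : ℕ, ((‖η s‖ : ℂ)) ^ 2
          = η s * (starRingEnd ℂ) (η s) := by
        intro s
        rw [Complex.mul_conj]
        norm_cast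
        exact Complex.sq_norm _
      calc (∑ s ∈ Finset.range d, ((‖η s‖ : ℂ)) ^ 2)
          = ∑ s ∈ Finset.range d, η s * (starRingEnd ℂ) (η s) := by
            exact Finset.sum_congr rfl fun s _ => step1 s
        _ = ∑ s ∈ Finset.range d, ∑ j' ∈ Finset.range k, ∑ j ∈ Finset.range k,
              ψ (((g ^ (d * j + s) : (ZMod p)ˣ) : ZMod p)
                - ((g ^ (d * j' + s) : (ZMod p)ˣ) : ZMod p)) := by
            refine Finset.sum_congr rfl fun s _ => ?_
            rw [hψη s, map_sum, Finset.sum_mul_sum, Finset.sum_comm]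
            refine Finset.sum_congr rfl fun j' _ => Finset.sum_congr rfl fun j _ => ?_
            rw [hconj, ← AddChar.map_add_eq_mul, sub_eq_add_neg]
        _ = ∑ s ∈ Finset.range d, ∑ j' ∈ Finset.range k, ∑ t ∈ Finset.range k,
              ψ (((g ^ (d * j' + s) : (ZMod p)ˣ) : ZMod p)
                * (((g ^ (d * t) : (ZMod p)ˣ) : ZMod p) - 1)) := by
            refine Finset.sum_congr rfl fun s _ => Finset.sum_congr rfl fun j' hj' => ?_
            have hj'k : j' < k := Finset.mem_range.mp hj'
            refine Finset.sum_bij' (fun j _ => (j + (k - j')) % k)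
              (fun t _ => (j' + t) % k) ?_ ?_ ?_ ?_ ?_
            · intro j _; exact Finset.mem_range.mpr (Nat.mod_lt _ hk0)
            · intro t _; exact Finset.mem_range.mpr (Nat.mod_lt _ hk0)
            · intro j hj
              show (j' + (j + (k - j')) % k) % k = j
              rw [Nat.add_mod_mod]
              have h' : j' + (j + (k - j')) = j + k := by omega
              rw [h', Nat.add_mod_right]
              exact Nat.mod_eq_of_lt (Finset.mem_range.mp hj)
            · intro t ht
              show ((j' + t) % k + (k - j')) % k = t
              rw [Nat.mod_add_mod]
              have h' : j' + t + (k - j') = t + k := by omega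
              rw [h', Nat.add_mod_right]
              exact Nat.mod_eq_of_lt (Finset.mem_range.mp ht)
            · intro j hj
              have hjk := Finset.mem_range.mp hj
              have e1 : (j' + (j + (k - j')) % k) % k = j := by
                rw [Nat.add_mod_mod]
                have h' : j' + (j + (k - j')) = j + k := by omega
                rw [h', Nat.add_mod_right]
                exact Nat.mod_eq_of_lt hjk
              have e2 := hpow j' ((j + (k - j')) % k) s
              rw [e1] at e2
              rw [e2]
              push_cast
              congr 1
              ring
        _ = ∑ t ∈ Finset.range k, ∑ s ∈ Finset.range d, ∑ j' ∈ Finset.range k,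
              ψ (((g ^ (d * j' + s) : (ZMod p)ˣ) : ZMod p)
                * (((g ^ (d * t) : (ZMod p)ˣ) : ZMod p) - 1)) := by
            exact swap1 _
        _ = ∑ t ∈ Finset.range k,
              ((if (((g ^ (d * t) : (ZMod p)ˣ) : ZMod p) - 1 = 0) then (p : ℂ) else 0) - 1) := by
            refine Finset.sum_congr rfl fun t _ => ?_
            rw [hsum_units (fun x => ψ ((x : ZMod p)
              * (((g ^ (d * t) : (ZMod p)ˣ) : ZMod p) - 1))), hUnitsSum]
        _ = ∑ t ∈ Finset.range k, ((if t = 0 then (p : ℂ) else 0) - 1) := by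
            refine Finset.sum_congr rfl fun t ht => ?_
            congr 1
            have hiff : (((g ^ (d * t) : (ZMod p)ˣ) : ZMod p) - 1 = 0) ↔ t = 0 := by
              constructor
              · intro h
                have hu : (g ^ (d * t) : (ZMod p)ˣ) = 1 := by
                  apply Units.ext
                  have : ((g ^ (d * t) : (ZMod p)ˣ) : ZMod p) = 1 := by
                    linear_combination h
                  simpa using this
                have hdvd : d * k ∣ d * t := by
                  rw [← horder]; exact orderOf_dvd_of_pow_eq_one hu
                have hkt : k ∣ t := (Nat.mul_dvd_mul_iff_left hd0).mp hdvd
                exact Nat.eq_zero_of_dvd_of_lt hkt (Finset.mem_range.mp ht)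
              · intro h; subst h; simp
            simp only [hiff]
        _ = (p : ℂ) - k := by
            rw [Finset.sum_sub_distrib, Finset.sum_ite_eq' (Finset.range k) 0 (fun _ => (p : ℂ))]
            simp [Finset.mem_range.mpr hk0]
    have := keyC
    push_cast at this
    exact_mod_cast this
  -- endgame
  set A := ∑ s ∈ Finset.range d, ‖η s‖ with hA
  have hA0 : 0 ≤ A := Finset.sum_nonneg fun s _ => norm_nonneg _
  have hcast : (p : ℝ) - 1 = (d : ℝ) * k := by
    have : ((p - 1 : ℕ) : ℝ) = ((d * k : ℕ) : ℝ) := by rw [hdk]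
    push_cast at this
    rw [Nat.cast_sub (by omega)] at this
    · push_cast at this ⊢
      linarith
  have hlow2 : ((d : ℝ) - 1) * p + 1 = d * ((p : ℝ) - k) := by
    ring_nf
    nlinarith [hcast]
  constructor
  · -- lower bound
    have hdiv : (((d : ℝ) - 1) * p + 1) / d = (p : ℝ) - k := by
      rw [hlow2, mul_div_cancel_left₀]
      exact_mod_cast hd0.ne'
    rw [hdiv]
    have h1 : (p : ℝ) - k ≤ A ^ 2 := by
      rw [← key]
      exact Finset.sum_sq_le_sq_sum_of_nonneg fun s _ => norm_nonneg _
    calc Real.sqrt ((p : ℝ) - k) ≤ Real.sqrt (A ^ 2) := Real.sqrt_le_sqrt h1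
      _ = A := by rw [Real.sqrt_sq hA0]
  · -- upper bound
    have h2 : A ^ 2 ≤ ((d : ℝ) - 1) * p + 1 := by
      rw [hlow2]
      calc A ^ 2 ≤ (Finset.range d).card * ∑ s ∈ Finset.range d, (‖η s‖) ^ 2 :=
            sq_sum_le_card_mul_sum_sq
        _ = d * ((p : ℝ) - k) := by rw [Finset.card_range, key]
    calc A = Real.sqrt (A ^ 2) := by rw [Real.sqrt_sq hA0]
      _ ≤ Real.sqrt (((d : ℝ) - 1) * p + 1) := Real.sqrt_le_sqrt h2
end

section
/- If 2d divides p-1, then for all 0 ≤ m, n ≤ d-1, c_{0,m,n} = c_{0,n,m}; that is, the number of solutions (a,b) ∈ Γ² to a + g^m b = g^n equals the number of solutions to a + g^n b = g^m. -/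
/-- If `2d ∣ p - 1`, then `c_{0,m,n} = c_{0,n,m}` for all `0 ≤ m, n ≤ d-1`. -/
theorem c_symmetric_of_two_d_dvd (p d : ℕ) (hp : p.Prime) (hodd : Odd p)
    (hd : 0 < d) (h2d : 2 * d ∣ p - 1)
    (g : (ZMod p)ˣ) (hg : ∀ x : (ZMod p)ˣ, x ∈ Subgroup.zpowers g)
    (c : ℕ → ℕ → ℕ)
    (hc : ∀ m n : ℕ, c m n =
      Nat.card {ab : (ZMod p)ˣ × (ZMod p)ˣ //
        ab.1 ∈ Subgroup.zpowers (g ^ d) ∧ ab.2 ∈ Subgroup.zpowers (g ^ d) ∧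
        (ab.1 : ZMod p) + ((g ^ m : (ZMod p)ˣ) : ZMod p) * (ab.2 : ZMod p)
          = ((g ^ n : (ZMod p)ˣ) : ZMod p)}) :
    ∀ m n : ℕ, m < d → n < d → c m n = c n m := by
  haveI : Fact p.Prime := ⟨hp⟩
  have hcard : Fintype.card (ZMod p)ˣ = p - 1 := by
    rw [ZMod.card_units_eq_totient, Nat.totient_prime hp]
  have horder : orderOf g = p - 1 := by
    rw [orderOf_eq_card_of_forall_mem_zpowers hg, Nat.card_eq_fintype_card, hcard]
  have hp3 : 3 ≤ p := by
    rcases hodd with ⟨t, ht⟩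
    have := hp.two_le
    omega
  -- -1 ∈ Γ
  obtain ⟨k, hk⟩ := h2d
  have hkpos : 0 < k := by
    rcases Nat.eq_zero_or_pos k with h | h
    · subst h; omega
    · exact h
  have hdkpos : 0 < d * k := Nat.mul_pos hd hkpos
  have hdk : d * k * 2 = p - 1 := by rw [hk]; ring
  have hx2 : (g ^ (d * k)) ^ 2 = 1 := by
    rw [← pow_mul]
    rw [hdk, ← horder, pow_orderOf_eq_one]
  have hx1 : g ^ (d * k) ≠ 1 := by
    intro h
    have hdvd := orderOf_dvd_of_pow_eq_one h
    rw [horder] at hdvd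
    have := Nat.le_of_dvd hdkpos hdvd
    omega
  have hneg1 : g ^ (d * k) = (-1 : (ZMod p)ˣ) := by
    have h2 : ((g ^ (d * k) : (ZMod p)ˣ) : ZMod p) ^ 2 = 1 := by
      rw [← Units.val_pow_eq_pow_val, hx2, Units.val_one]
    have hfac : (((g ^ (d * k) : (ZMod p)ˣ) : ZMod p) - 1) *
        (((g ^ (d * k) : (ZMod p)ˣ) : ZMod p) + 1) = 0 := by linear_combination h2
    rcases mul_eq_zero.mp hfac with h | h
    · exact absurd (Units.ext (by rw [Units.val_one]; exact sub_eq_zero.mp h)) hx1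
    · ext
      rw [Units.val_neg, Units.val_one]
      exact eq_neg_of_add_eq_zero_left h
  have hneg : (-1 : (ZMod p)ˣ) ∈ Subgroup.zpowers (g ^ d) :=
    ⟨(k : ℤ), by show (g ^ d) ^ (k : ℤ) = -1; rw [zpow_natCast, ← pow_mul, hneg1]⟩
  -- the key map
  have hmap : ∀ m n : ℕ, ∀ a b : (ZMod p)ˣ,
      a ∈ Subgroup.zpowers (g ^ d) → b ∈ Subgroup.zpowers (g ^ d) →
      ((a : ZMod p) + ((g ^ m : (ZMod p)ˣ) : ZMod p) * (b : ZMod p)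
          = ((g ^ n : (ZMod p)ˣ) : ZMod p)) →
      (-a * b⁻¹ ∈ Subgroup.zpowers (g ^ d) ∧ b⁻¹ ∈ Subgroup.zpowers (g ^ d) ∧
        ((-a * b⁻¹ : (ZMod p)ˣ) : ZMod p)
          + ((g ^ n : (ZMod p)ˣ) : ZMod p) * ((b⁻¹ : (ZMod p)ˣ) : ZMod p)
          = ((g ^ m : (ZMod p)ˣ) : ZMod p)) := by
    intro m n a b ha hb heq
    refine ⟨?_, inv_mem hb, ?_⟩
    · have : -a * b⁻¹ = (-1) * a * b⁻¹ := by rw [neg_one_mul]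
      rw [this]
      exact mul_mem (mul_mem hneg ha) (inv_mem hb)
    · have hbb : (b : ZMod p) * ((b : ZMod p))⁻¹ = 1 :=
        mul_inv_cancel₀ (Units.ne_zero b)
      rw [Units.val_mul, Units.val_neg, Units.val_inv_eq_inv_val]
      linear_combination (-((b : ZMod p))⁻¹) * heq + ((g ^ m : (ZMod p)ˣ) : ZMod p) * hbb
  intro m n _ _
  rw [hc m n, hc n m]
  refine Nat.card_congr ⟨
    fun x => ⟨(-x.1.1 * x.1.2⁻¹, x.1.2⁻¹), hmap m n x.1.1 x.1.2 x.2.1 x.2.2.1 x.2.2.2⟩,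
    fun x => ⟨(-x.1.1 * x.1.2⁻¹, x.1.2⁻¹), hmap n m x.1.1 x.1.2 x.2.1 x.2.2.1 x.2.2.2⟩,
    fun x => ?_, fun x => ?_⟩ <;>
  · apply Subtype.ext
    apply Prod.ext <;> simp [mul_assoc]
end

section
/- The number M_{i,j,k} of projective F_p-rational points on the curve g^i x^d + g^j y^d = g^k z^d in P²(F_p) satisfies M_{i,j,k} = d² c_{i,j,k} + d(δ_{j,k} + δ_{i,k} + δ_*), where δ_* = 1 if (p-1)/2 ≡ i - j (mod d) and δ_* = 0 otherwise. -/
open Subgroup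

variable {p : ℕ} [Fact p.Prime]

section Grp
variable (d : ℕ) (g : (ZMod p)ˣ) (hg : ∀ x : (ZMod p)ˣ, x ∈ Subgroup.zpowers g)
  (hd : 0 < d) (hdvd : d ∣ p - 1)

lemma horder (hg : ∀ x : (ZMod p)ˣ, x ∈ Subgroup.zpowers g) : orderOf g = p - 1 := by
  rw [orderOf_eq_card_of_forall_mem_zpowers hg, Nat.card_eq_fintype_card, ZMod.card_units]

lemma mem_pow_iff (hg : ∀ x : (ZMod p)ˣ, x ∈ Subgroup.zpowers g) (hdvd : d ∣ p - 1)
    (m : ℤ) : g ^ m ∈ zpowers (g ^ d) ↔ (d : ℤ) ∣ m := by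
  constructor
  · rintro h
    obtain ⟨n, hn⟩ := mem_zpowers_iff.mp h
    have h1 : g ^ ((d : ℤ) * n - m) = 1 := by
      rw [zpow_sub, ← zpow_natCast g d, ← zpow_mul] at *
      rw [hn, mul_inv_cancel]
    rw [← orderOf_dvd_iff_zpow_eq_one, horder g hg] at h1
    have h2 : (d : ℤ) ∣ ((p - 1 : ℕ) : ℤ) := Int.natCast_dvd_natCast.mpr hdvd
    have h4 : (d:ℤ) ∣ (d : ℤ) * n - m := dvd_trans h2 h1
    have := dvd_sub (Dvd.intro n rfl) h4
    simpa using this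
  · rintro ⟨n, rfl⟩
    exact mem_zpowers_iff.mpr ⟨n, by rw [← zpow_natCast g d, ← zpow_mul]⟩
end Grp

section Grp2
variable {d : ℕ} {g : (ZMod p)ˣ}

lemma card_ker (hg : ∀ x : (ZMod p)ˣ, x ∈ Subgroup.zpowers g) (hd : 0 < d)
    (hdvd : d ∣ p - 1) : Nat.card {x : (ZMod p)ˣ // x ^ d = 1} = d := by
  obtain ⟨e, he⟩ := hdvd
  have hp1 : 0 < p - 1 := Nat.sub_pos_of_lt (Fact.out : p.Prime).one_lt
  have he0 : 0 < e := by
    rcases Nat.eq_zero_or_pos e with h | h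
    · rw [h, mul_zero] at he; omega
    · exact h
  have hset : ∀ x : (ZMod p)ˣ, x ^ d = 1 ↔ x ∈ zpowers (g ^ e) := by
    intro x
    constructor
    · intro hx
      obtain ⟨m, hm⟩ := mem_zpowers_iff.mp (hg x)
      have h1 : g ^ (m * (d:ℤ)) = 1 := by
        rw [zpow_mul, hm, zpow_natCast, hx]
      rw [← orderOf_dvd_iff_zpow_eq_one, horder g hg] at h1
      have h2 : ((p - 1 : ℕ) : ℤ) = (d : ℤ) * e := by exact_mod_cast he
      rw [h2] at h1
      obtain ⟨t, ht⟩ := h1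
      have hm' : m = (e:ℤ) * t := by
        have hd' : (0:ℤ) < d := by exact_mod_cast hd
        have h5 : (d:ℤ) * m = (d:ℤ) * ((e:ℤ) * t) := by linear_combination ht
        exact mul_left_cancel₀ (ne_of_gt hd') h5
      refine mem_zpowers_iff.mpr ⟨t, ?_⟩
      rw [← hm, hm', ← zpow_natCast g e, ← zpow_mul]
    · rintro hx
      obtain ⟨n, hn⟩ := mem_zpowers_iff.mp hx
      have hcomm : ((g ^ e) ^ n) ^ d = ((g ^ e) ^ d) ^ n := by
        rw [← zpow_natCast ((g ^ e) ^ n) d, ← zpow_mul, mul_comm, zpow_mul, zpow_natCast]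
      have hone : (g ^ e) ^ d = 1 := by
        rw [← pow_mul, ← orderOf_dvd_iff_pow_eq_one, horder g hg, he]
        exact ⟨1, by ring⟩
      rw [← hn, hcomm, hone, one_zpow]
  have : Nat.card {x : (ZMod p)ˣ // x ^ d = 1} = Nat.card (zpowers (g ^ e)) := by
    apply Nat.card_congr
    exact Equiv.subtypeEquiv (Equiv.refl _) (by intro x; simpa using hset x)
  rw [this, Nat.card_zpowers, orderOf_pow, horder g hg, he,
    Nat.gcd_eq_right ⟨d, by rw [mul_comm]⟩]
  rw [Nat.mul_div_assoc d (dvd_refl e), Nat.div_self he0, mul_one]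

end Grp2

lemma card_roots_units (hg : ∀ x : (ZMod p)ˣ, x ∈ Subgroup.zpowers g) (hd : 0 < d)
    (hdvd : d ∣ p - 1) (b : (ZMod p)ˣ) :
    Nat.card {x : (ZMod p)ˣ // x ^ d = b} = if b ∈ zpowers (g ^ d) then d else 0 := by
  by_cases hb : b ∈ zpowers (g ^ d)
  · rw [if_pos hb]
    obtain ⟨n, hn⟩ := mem_zpowers_iff.mp hb
    have hx0 : (g ^ n) ^ d = b := by
      rw [← zpow_natCast (g ^ n) d, ← zpow_mul, mul_comm, zpow_mul, zpow_natCast, hn]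
    have hequiv : Nat.card {x : (ZMod p)ˣ // x ^ d = b}
        = Nat.card {x : (ZMod p)ˣ // x ^ d = 1} := by
      apply Nat.card_congr
      refine ⟨fun x => ⟨(g ^ n)⁻¹ * x.1, ?_⟩, fun y => ⟨(g ^ n) * y.1, ?_⟩, ?_, ?_⟩
      · rw [mul_pow, inv_pow, hx0, x.2, inv_mul_cancel]
      · rw [mul_pow, hx0, y.2, mul_one]
      · intro x; simp
      · intro y; simp
    rw [hequiv, card_ker hg hd hdvd]
  · rw [if_neg hb]
    have : IsEmpty {x : (ZMod p)ˣ // x ^ d = b} := by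
      refine ⟨fun x => hb ?_⟩
      obtain ⟨m, hm⟩ := mem_zpowers_iff.mp (hg x.1)
      refine mem_zpowers_iff.mpr ⟨m, ?_⟩
      rw [← zpow_natCast g d, ← zpow_mul, mul_comm, zpow_mul, zpow_natCast, hm, x.2]
    simp [Nat.card_of_isEmpty]

lemma card_roots (hg : ∀ x : (ZMod p)ˣ, x ∈ Subgroup.zpowers g) (hd : 0 < d)
    (hdvd : d ∣ p - 1) (b : (ZMod p)ˣ) :
    Nat.card {x : ZMod p // x ^ d = (b : ZMod p)} = if b ∈ zpowers (g ^ d) then d else 0 := by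
  rw [← card_roots_units hg hd hdvd b]
  apply Nat.card_congr
  refine ⟨fun x => ⟨Units.mk0 x.1 ?_, ?_⟩, fun u => ⟨(u.1 : ZMod p), ?_⟩, ?_, ?_⟩
  · intro h0
    have := x.2
    rw [h0, zero_pow hd.ne'] at this
    exact (b.ne_zero this.symm).elim
  · ext
    push_cast
    exact x.2
  · exact_mod_cast congrArg Units.val u.2
  · intro x; simp
  · intro u; ext; simp

lemma gen_half (hg : ∀ x : (ZMod p)ˣ, x ∈ Subgroup.zpowers g) (hodd : Odd p) :
    g ^ ((p - 1) / 2) = (-1 : (ZMod p)ˣ) := by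
  have hp3 : 3 ≤ p := by
    have h2 := (Fact.out : p.Prime).two_le
    have hp2 : p ≠ 2 := by rintro rfl; rw [Nat.odd_iff] at hodd; omega
    omega
  have h2 : (p - 1) / 2 + (p - 1) / 2 = p - 1 := by
    obtain ⟨t, ht⟩ := hodd; omega
  have hh : g ^ ((p - 1) / 2) * g ^ ((p - 1) / 2) = 1 := by
    rw [← pow_add, h2, ← horder g hg, pow_orderOf_eq_one]
  have hne : g ^ ((p - 1) / 2) ≠ 1 := by
    intro h1
    have := orderOf_dvd_of_pow_eq_one h1
    rw [horder g hg] at this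
    have := Nat.le_of_dvd (by omega) this
    omega
  have hfield : (↑(g ^ ((p - 1) / 2)) : ZMod p) * ↑(g ^ ((p - 1) / 2)) = 1 := by
    have := congrArg Units.val hh
    push_cast at this
    exact this
  rcases mul_self_eq_one_iff.mp hfield with h | h
  · exact absurd (Units.ext h : g ^ ((p-1)/2) = 1) hne
  · ext; rw [h]; simp

lemma mem_sub_iff (hg : ∀ x : (ZMod p)ˣ, x ∈ Subgroup.zpowers g) (hdvd : d ∣ p - 1)
    {j k : ℕ} (hj : j < d) (hk : k < d) :
    g ^ k * (g ^ j)⁻¹ ∈ zpowers (g ^ d) ↔ j = k := by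
  have heq : g ^ k * (g ^ j)⁻¹ = g ^ ((k : ℤ) - j) := by
    rw [zpow_sub, zpow_natCast, zpow_natCast]
  rw [heq, mem_pow_iff d g hg hdvd]
  constructor
  · intro hdv
    have h0 := Int.eq_zero_of_dvd_of_natAbs_lt_natAbs hdv (by omega)
    omega
  · rintro rfl; simp

lemma mem_star_iff (hg : ∀ x : (ZMod p)ˣ, x ∈ Subgroup.zpowers g) (hdvd : d ∣ p - 1)
    (hodd : Odd p) {i j : ℕ} :
    -(g ^ j * (g ^ i)⁻¹) ∈ zpowers (g ^ d) ↔
      (((p - 1) / 2 : ℕ) : ℤ) ≡ (i : ℤ) - (j : ℤ) [ZMOD (d : ℤ)] := by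
  have heq : -(g ^ j * (g ^ i)⁻¹) = g ^ ((((p - 1) / 2 : ℕ) : ℤ) + j - i) := by
    have h1 : g ^ ((((p - 1) / 2 : ℕ) : ℤ) + (j:ℤ) - (i:ℤ))
        = g ^ ((((p - 1) / 2 : ℕ) : ℤ)) * g ^ (j:ℤ) * (g ^ (i:ℤ))⁻¹ := by
      rw [zpow_sub, zpow_add]
    rw [h1, zpow_natCast, zpow_natCast, zpow_natCast, gen_half hg hodd,
      neg_one_mul, neg_mul]
  rw [heq, mem_pow_iff d g hg hdvd, Int.modEq_iff_dvd,
    show ((i:ℤ) - (j:ℤ) - (((p - 1) / 2 : ℕ) : ℤ) : ℤ)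
      = -((((p - 1) / 2 : ℕ) : ℤ) + (j:ℤ) - (i:ℤ)) by ring, dvd_neg]

lemma card_split {α : Type*} [Finite α] (P Q : α → Prop) :
    Nat.card {x // P x} = Nat.card {x // P x ∧ Q x} + Nat.card {x // P x ∧ ¬ Q x} := by
  classical
  rw [← Nat.card_sum]
  apply Nat.card_congr
  exact ((Equiv.sumCompl fun y : {x // P x} => Q y.1).symm).trans
    (Equiv.sumCongr (Equiv.subtypeSubtypeEquivSubtypeInter P Q)
      (Equiv.subtypeSubtypeEquivSubtypeInter P fun x => ¬ Q x))

lemma pow_mem' (hg : ∀ x : (ZMod p)ˣ, x ∈ Subgroup.zpowers g) (x : (ZMod p)ˣ) :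
    x ^ d ∈ zpowers (g ^ d) := by
  obtain ⟨m, hm⟩ := mem_zpowers_iff.mp (hg x)
  refine mem_zpowers_iff.mpr ⟨m, ?_⟩
  rw [← zpow_natCast g d, ← zpow_mul, mul_comm, zpow_mul, zpow_natCast, hm]

lemma solve_iff (u w : (ZMod p)ˣ) (y : ZMod p) :
    (u : ZMod p) * y ^ d = (w : ZMod p) ↔ y ^ d = ((u⁻¹ * w : (ZMod p)ˣ) : ZMod p) := by
  have h1 : ((u⁻¹ * w : (ZMod p)ˣ) : ZMod p) = ((u : ZMod p))⁻¹ * (w : ZMod p) := by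
    rw [Units.val_mul, Units.val_inv_eq_inv_val]
  rw [h1, eq_inv_mul_iff_mul_eq₀ u.ne_zero]

lemma count_affine {d i j k : ℕ} (hd : 0 < d) (hdvd : d ∣ p - 1)
    (hi : i < d) (hj : j < d) (hk : k < d) (g : (ZMod p)ˣ)
    (hg : ∀ x : (ZMod p)ˣ, x ∈ Subgroup.zpowers g) :
    Nat.card {xy : ZMod p × ZMod p //
        ((g ^ i : (ZMod p)ˣ) : ZMod p) * xy.1 ^ d + ((g ^ j : (ZMod p)ˣ) : ZMod p) * xy.2 ^ d
          = ((g ^ k : (ZMod p)ˣ) : ZMod p)}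
      = d ^ 2 * Nat.card {ab : (ZMod p)ˣ × (ZMod p)ˣ //
          ab.1 ∈ Subgroup.zpowers (g ^ d) ∧ ab.2 ∈ Subgroup.zpowers (g ^ d) ∧
          ((g ^ i : (ZMod p)ˣ) : ZMod p) * (ab.1 : ZMod p)
            + ((g ^ j : (ZMod p)ˣ) : ZMod p) * (ab.2 : ZMod p) = ((g ^ k : (ZMod p)ˣ) : ZMod p)}
        + d * (if j = k then 1 else 0) + d * (if i = k then 1 else 0) := by
  classical
  have step1 := card_split (α := ZMod p × ZMod p)
    (fun xy => ((g ^ i : (ZMod p)ˣ) : ZMod p) * xy.1 ^ d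
      + ((g ^ j : (ZMod p)ˣ) : ZMod p) * xy.2 ^ d = ((g ^ k : (ZMod p)ˣ) : ZMod p))
    (fun xy => xy.1 = 0)
  have step2 := card_split (α := ZMod p × ZMod p)
    (fun xy => (((g ^ i : (ZMod p)ˣ) : ZMod p) * xy.1 ^ d
      + ((g ^ j : (ZMod p)ˣ) : ZMod p) * xy.2 ^ d = ((g ^ k : (ZMod p)ˣ) : ZMod p))
      ∧ ¬ xy.1 = 0)
    (fun xy => xy.2 = 0)
  rw [step1, step2]
  have hP1 : Nat.card {xy : ZMod p × ZMod p //
      (((g ^ i : (ZMod p)ˣ) : ZMod p) * xy.1 ^ d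
        + ((g ^ j : (ZMod p)ˣ) : ZMod p) * xy.2 ^ d = ((g ^ k : (ZMod p)ˣ) : ZMod p))
      ∧ xy.1 = 0} = d * (if j = k then 1 else 0) := by
    have e1 : {xy : ZMod p × ZMod p //
        (((g ^ i : (ZMod p)ˣ) : ZMod p) * xy.1 ^ d
          + ((g ^ j : (ZMod p)ˣ) : ZMod p) * xy.2 ^ d = ((g ^ k : (ZMod p)ˣ) : ZMod p))
        ∧ xy.1 = 0}
        ≃ {y : ZMod p // y ^ d = (((g ^ j)⁻¹ * g ^ k : (ZMod p)ˣ) : ZMod p)} := by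
      refine ⟨fun s => ⟨s.1.2, ?_⟩, fun y => ⟨(0, y.1), ?_, rfl⟩, ?_, ?_⟩
      · have h := s.2.1
        rw [s.2.2, zero_pow hd.ne', mul_zero, zero_add] at h
        exact (solve_iff _ _ _).mp h
      · rw [zero_pow hd.ne', mul_zero, zero_add]
        exact (solve_iff _ _ _).mpr y.2
      · intro s
        exact Subtype.ext (Prod.ext_iff.mpr ⟨s.2.2.symm, rfl⟩)
      · intro y
        rfl
    rw [Nat.card_congr e1, card_roots hg hd hdvd _,
      show ((g ^ j)⁻¹ * g ^ k : (ZMod p)ˣ) = g ^ k * (g ^ j)⁻¹ from mul_comm _ _]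
    simp only [mem_sub_iff hg hdvd hj hk]
    split_ifs <;> simp
  have hP2 : Nat.card {xy : ZMod p × ZMod p //
      ((((g ^ i : (ZMod p)ˣ) : ZMod p) * xy.1 ^ d
        + ((g ^ j : (ZMod p)ˣ) : ZMod p) * xy.2 ^ d = ((g ^ k : (ZMod p)ˣ) : ZMod p))
      ∧ ¬ xy.1 = 0) ∧ xy.2 = 0} = d * (if i = k then 1 else 0) := by
    have e2 : {xy : ZMod p × ZMod p //
        ((((g ^ i : (ZMod p)ˣ) : ZMod p) * xy.1 ^ d
          + ((g ^ j : (ZMod p)ˣ) : ZMod p) * xy.2 ^ d = ((g ^ k : (ZMod p)ˣ) : ZMod p))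
        ∧ ¬ xy.1 = 0) ∧ xy.2 = 0}
        ≃ {x : ZMod p // x ^ d = (((g ^ i)⁻¹ * g ^ k : (ZMod p)ˣ) : ZMod p)} := by
      refine ⟨fun s => ⟨s.1.1, ?_⟩, fun x => ⟨(x.1, 0), ⟨?_, ?_⟩, rfl⟩, ?_, ?_⟩
      · have h := s.2.1.1
        rw [s.2.2, zero_pow hd.ne', mul_zero, add_zero] at h
        exact (solve_iff _ _ _).mp h
      · rw [zero_pow hd.ne', mul_zero, add_zero]
        exact (solve_iff _ _ _).mpr x.2
      · intro h0
        have hx := x.2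
        have h0' : (x.1 : ZMod p) = 0 := h0
        rw [h0', zero_pow hd.ne'] at hx
        exact Units.ne_zero _ hx.symm
      · intro s
        exact Subtype.ext (Prod.ext_iff.mpr ⟨rfl, s.2.2.symm⟩)
      · intro x
        rfl
    rw [Nat.card_congr e2, card_roots hg hd hdvd _,
      show ((g ^ i)⁻¹ * g ^ k : (ZMod p)ˣ) = g ^ k * (g ^ i)⁻¹ from mul_comm _ _]
    simp only [mem_sub_iff hg hdvd hi hk]
    split_ifs <;> simp
  have hP3 : Nat.card {xy : ZMod p × ZMod p //
      ((((g ^ i : (ZMod p)ˣ) : ZMod p) * xy.1 ^ d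
        + ((g ^ j : (ZMod p)ˣ) : ZMod p) * xy.2 ^ d = ((g ^ k : (ZMod p)ˣ) : ZMod p))
      ∧ ¬ xy.1 = 0) ∧ ¬ xy.2 = 0} = d ^ 2 * Nat.card {ab : (ZMod p)ˣ × (ZMod p)ˣ //
          ab.1 ∈ Subgroup.zpowers (g ^ d) ∧ ab.2 ∈ Subgroup.zpowers (g ^ d) ∧
          ((g ^ i : (ZMod p)ˣ) : ZMod p) * (ab.1 : ZMod p)
            + ((g ^ j : (ZMod p)ˣ) : ZMod p) * (ab.2 : ZMod p)
            = ((g ^ k : (ZMod p)ˣ) : ZMod p)} := by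
    set T := {ab : (ZMod p)ˣ × (ZMod p)ˣ //
          ab.1 ∈ Subgroup.zpowers (g ^ d) ∧ ab.2 ∈ Subgroup.zpowers (g ^ d) ∧
          ((g ^ i : (ZMod p)ˣ) : ZMod p) * (ab.1 : ZMod p)
            + ((g ^ j : (ZMod p)ˣ) : ZMod p) * (ab.2 : ZMod p)
            = ((g ^ k : (ZMod p)ˣ) : ZMod p)} with hT
    let f : (Σ s : T, {x : ZMod p // x ^ d = ((s.1.1 : (ZMod p)ˣ) : ZMod p)}
          × {y : ZMod p // y ^ d = ((s.1.2 : (ZMod p)ˣ) : ZMod p)}) →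
        {xy : ZMod p × ZMod p //
          ((((g ^ i : (ZMod p)ˣ) : ZMod p) * xy.1 ^ d
            + ((g ^ j : (ZMod p)ˣ) : ZMod p) * xy.2 ^ d = ((g ^ k : (ZMod p)ˣ) : ZMod p))
          ∧ ¬ xy.1 = 0) ∧ ¬ xy.2 = 0} := fun w =>
      ⟨(w.2.1.1, w.2.2.1), ⟨⟨by
          show ((g ^ i : (ZMod p)ˣ) : ZMod p) * w.2.1.1 ^ d
            + ((g ^ j : (ZMod p)ˣ) : ZMod p) * w.2.2.1 ^ d = ((g ^ k : (ZMod p)ˣ) : ZMod p)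
          rw [w.2.1.2, w.2.2.2]
          exact w.1.2.2.2, by
          intro h0
          have hx := w.2.1.2
          rw [show ((w.2.1.1 : ZMod p), (w.2.2.1 : ZMod p)).1 = w.2.1.1 from rfl] at h0
          rw [h0, zero_pow hd.ne'] at hx
          exact Units.ne_zero _ hx.symm⟩, by
          intro h0
          have hy := w.2.2.2
          rw [show ((w.2.1.1 : ZMod p), (w.2.2.1 : ZMod p)).2 = w.2.2.1 from rfl] at h0
          rw [h0, zero_pow hd.ne'] at hy
          exact Units.ne_zero _ hy.symm⟩⟩
    have hinj : Function.Injective f := by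
      rintro ⟨⟨⟨a, b⟩, ha, hb, hab⟩, ⟨x, hx⟩, ⟨y, hy⟩⟩
        ⟨⟨⟨a', b'⟩, ha', hb', hab'⟩, ⟨x', hx'⟩, ⟨y', hy'⟩⟩ h
      simp only [f, Subtype.mk.injEq, Prod.mk.injEq] at h
      obtain ⟨rfl, rfl⟩ := h
      have haa : a = a' := Units.ext (by rw [← hx, ← hx'])
      have hbb : b = b' := Units.ext (by rw [← hy, ← hy'])
      subst haa; subst hbb
      rfl
    have hsurj : Function.Surjective f := by
      rintro ⟨⟨x, y⟩, ⟨heq, hx0⟩, hy0⟩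
      have hx0' : x ≠ 0 := hx0
      have hy0' : y ≠ 0 := hy0
      refine ⟨⟨⟨(Units.mk0 x hx0' ^ d, Units.mk0 y hy0' ^ d),
        pow_mem' hg _, pow_mem' hg _, ?_⟩, ⟨x, ?_⟩, ⟨y, ?_⟩⟩, rfl⟩
      · push_cast
        exact heq
      · push_cast
        rfl
      · push_cast
        rfl
    rw [← Nat.card_congr (Equiv.ofBijective f ⟨hinj, hsurj⟩)]
    letI : Fintype T := Fintype.ofFinite _
    rw [Nat.card_eq_fintype_card, Fintype.card_sigma]
    have hterm : ∀ s : T, Fintype.card ({x : ZMod p // x ^ d = ((s.1.1 : (ZMod p)ˣ) : ZMod p)}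
        × {y : ZMod p // y ^ d = ((s.1.2 : (ZMod p)ˣ) : ZMod p)}) = d * d := by
      intro s
      rw [← Nat.card_eq_fintype_card, Nat.card_prod, card_roots hg hd hdvd,
        card_roots hg hd hdvd, if_pos s.2.1, if_pos s.2.2.1]
    rw [Finset.sum_congr rfl (fun s _ => hterm s), Finset.sum_const, smul_eq_mul,
      Finset.card_univ, ← Nat.card_eq_fintype_card]
    ring
  rw [hP1, hP2, hP3]
  ring

section Vec
variable {d i j k : ℕ} {g : (ZMod p)ˣ}

/-- The homogeneous equation is invariant under scaling. -/
lemma escale (hd : 0 < d) {t : ZMod p} (ht : t ≠ 0) (v : Fin 3 → ZMod p) :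
    (((g ^ i : (ZMod p)ˣ) : ZMod p) * (t • v) 0 ^ d
        + ((g ^ j : (ZMod p)ˣ) : ZMod p) * (t • v) 1 ^ d
        = ((g ^ k : (ZMod p)ˣ) : ZMod p) * (t • v) 2 ^ d)
      ↔ (((g ^ i : (ZMod p)ˣ) : ZMod p) * v 0 ^ d
        + ((g ^ j : (ZMod p)ˣ) : ZMod p) * v 1 ^ d
        = ((g ^ k : (ZMod p)ˣ) : ZMod p) * v 2 ^ d) := by
  simp only [Pi.smul_apply, smul_eq_mul]
  constructor
  · intro h
    apply mul_left_cancel₀ (pow_ne_zero d ht)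
    linear_combination h
  · intro h
    linear_combination (t ^ d) * h

lemma count_z_ne_zero (hd : 0 < d) :
    Nat.card {v : Fin 3 → ZMod p //
        (v ≠ 0 ∧ (((g ^ i : (ZMod p)ˣ) : ZMod p) * v 0 ^ d
          + ((g ^ j : (ZMod p)ˣ) : ZMod p) * v 1 ^ d
          = ((g ^ k : (ZMod p)ˣ) : ZMod p) * v 2 ^ d)) ∧ ¬ v 2 = 0}
      = (p - 1) * Nat.card {xy : ZMod p × ZMod p //
          ((g ^ i : (ZMod p)ˣ) : ZMod p) * xy.1 ^ d + ((g ^ j : (ZMod p)ˣ) : ZMod p) * xy.2 ^ d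
            = ((g ^ k : (ZMod p)ˣ) : ZMod p)} := by
  classical
  let f : ({z : ZMod p // z ≠ 0} × {xy : ZMod p × ZMod p //
        ((g ^ i : (ZMod p)ˣ) : ZMod p) * xy.1 ^ d + ((g ^ j : (ZMod p)ˣ) : ZMod p) * xy.2 ^ d
          = ((g ^ k : (ZMod p)ˣ) : ZMod p)}) →
      {v : Fin 3 → ZMod p //
        (v ≠ 0 ∧ (((g ^ i : (ZMod p)ˣ) : ZMod p) * v 0 ^ d
          + ((g ^ j : (ZMod p)ˣ) : ZMod p) * v 1 ^ d
          = ((g ^ k : (ZMod p)ˣ) : ZMod p) * v 2 ^ d)) ∧ ¬ v 2 = 0} := fun w =>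
    ⟨![w.1.1 * w.2.1.1, w.1.1 * w.2.1.2, w.1.1], ⟨by
        intro h0
        exact w.1.2 (congrFun h0 2), by
        show ((g ^ i : (ZMod p)ˣ) : ZMod p) * (w.1.1 * w.2.1.1) ^ d
          + ((g ^ j : (ZMod p)ˣ) : ZMod p) * (w.1.1 * w.2.1.2) ^ d
          = ((g ^ k : (ZMod p)ˣ) : ZMod p) * w.1.1 ^ d
        linear_combination (w.1.1 ^ d) * w.2.2⟩, by
        exact w.1.2⟩
  have hinj : Function.Injective f := by
    rintro ⟨⟨z, hz⟩, ⟨⟨x, y⟩, hxy⟩⟩ ⟨⟨z', hz'⟩, ⟨⟨x', y'⟩, hxy'⟩⟩ h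
    simp only [f, Subtype.mk.injEq] at h
    have h2 := congrFun h 2
    simp only [Matrix.cons_val_two, Matrix.tail_cons, Matrix.head_cons] at h2
    subst h2
    have h0 := congrFun h 0
    have h1 := congrFun h 1
    simp only [Matrix.cons_val_zero, Matrix.cons_val_one, Matrix.head_cons] at h0 h1
    have hx : x = x' := mul_left_cancel₀ hz h0
    have hy : y = y' := mul_left_cancel₀ hz h1
    subst hx; subst hy
    rfl
  have hsurj : Function.Surjective f := by
    rintro ⟨v, ⟨hv0, hE⟩, hz⟩
    refine ⟨⟨⟨v 2, hz⟩, ⟨(v 0 / v 2, v 1 / v 2), ?_⟩⟩, ?_⟩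
    · show ((g ^ i : (ZMod p)ˣ) : ZMod p) * (v 0 / v 2) ^ d
        + ((g ^ j : (ZMod p)ˣ) : ZMod p) * (v 1 / v 2) ^ d = ((g ^ k : (ZMod p)ˣ) : ZMod p)
      have hzd : v 2 ^ d ≠ 0 := pow_ne_zero d hz
      field_simp
      push_cast at hE ⊢
      have hinv : v 2 ^ d * (v 2)⁻¹ ^ d = 1 := by rw [← mul_pow, mul_inv_cancel₀ hz, one_pow]
      linear_combination (v 2 ^ d)⁻¹ * hE + ((g : ZMod p) ^ k) * hinv
    · apply Subtype.ext
      show ![v 2 * (v 0 / v 2), v 2 * (v 1 / v 2), v 2] = v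
      funext m
      fin_cases m <;> simp [mul_div_cancel₀, hz, mul_comm, mul_div_cancel_left₀]
  rw [← Nat.card_congr (Equiv.ofBijective f ⟨hinj, hsurj⟩), Nat.card_prod,
    Nat.card_congr unitsEquivNeZero.symm, Nat.card_eq_fintype_card, ZMod.card_units]

end Vec

section Vec2
variable {d i j k : ℕ} {g : (ZMod p)ˣ}

lemma count_z_zero (hodd : Odd p) (hd : 0 < d) (hdvd : d ∣ p - 1)
    (hg : ∀ x : (ZMod p)ˣ, x ∈ Subgroup.zpowers g) :
    Nat.card {v : Fin 3 → ZMod p //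
        (v ≠ 0 ∧ (((g ^ i : (ZMod p)ˣ) : ZMod p) * v 0 ^ d
          + ((g ^ j : (ZMod p)ˣ) : ZMod p) * v 1 ^ d
          = ((g ^ k : (ZMod p)ˣ) : ZMod p) * v 2 ^ d)) ∧ v 2 = 0}
      = (p - 1) * (d * (if (((p - 1) / 2 : ℕ) : ℤ) ≡ (i : ℤ) - (j : ℤ) [ZMOD (d : ℤ)]
          then 1 else 0)) := by
  classical
  let f : ({y : ZMod p // y ≠ 0} × {t : ZMod p //
        t ^ d = (((g ^ i)⁻¹ * -(g ^ j) : (ZMod p)ˣ) : ZMod p)}) →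
      {v : Fin 3 → ZMod p //
        (v ≠ 0 ∧ (((g ^ i : (ZMod p)ˣ) : ZMod p) * v 0 ^ d
          + ((g ^ j : (ZMod p)ˣ) : ZMod p) * v 1 ^ d
          = ((g ^ k : (ZMod p)ˣ) : ZMod p) * v 2 ^ d)) ∧ v 2 = 0} := fun w =>
    ⟨![w.2.1 * w.1.1, w.1.1, 0], ⟨by
        intro h0
        have := congrFun h0 1
        simp only [Matrix.cons_val_one, Matrix.head_cons, Pi.zero_apply] at this
        exact w.1.2 this, by
        show ((g ^ i : (ZMod p)ˣ) : ZMod p) * (w.2.1 * w.1.1) ^ d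
          + ((g ^ j : (ZMod p)ˣ) : ZMod p) * w.1.1 ^ d
          = ((g ^ k : (ZMod p)ˣ) : ZMod p) * (0 : ZMod p) ^ d
        have hA : ((g ^ i : (ZMod p)ˣ) : ZMod p) * w.2.1 ^ d
            = -((g ^ j : (ZMod p)ˣ) : ZMod p) := by
          have := (solve_iff (g ^ i) (-(g ^ j)) w.2.1).mpr w.2.2
          rwa [Units.val_neg] at this
        rw [zero_pow hd.ne', mul_zero]
        linear_combination (w.1.1 ^ d) * hA⟩, by
        show (0 : ZMod p) = 0
        rfl⟩
  have hinj : Function.Injective f := by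
    rintro ⟨⟨y, hy⟩, ⟨t, ht⟩⟩ ⟨⟨y', hy'⟩, ⟨t', ht'⟩⟩ h
    simp only [f, Subtype.mk.injEq] at h
    have h1 := congrFun h 1
    simp only [Matrix.cons_val_one, Matrix.head_cons] at h1
    subst h1
    have h0 := congrFun h 0
    simp only [Matrix.cons_val_zero] at h0
    have htt : t = t' := mul_right_cancel₀ hy h0
    subst htt
    rfl
  have hsurj : Function.Surjective f := by
    rintro ⟨v, ⟨hv0, hE⟩, h2⟩
    have heq : ((g ^ i : (ZMod p)ˣ) : ZMod p) * v 0 ^ d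
        + ((g ^ j : (ZMod p)ˣ) : ZMod p) * v 1 ^ d = 0 := by
      rw [h2, zero_pow hd.ne', mul_zero] at hE
      exact hE
    have hv1 : v 1 ≠ 0 := by
      intro h1
      rw [h1, zero_pow hd.ne', mul_zero, add_zero] at heq
      have hv00 : v 0 = 0 := by
        have := (mul_eq_zero.mp heq).resolve_left (Units.ne_zero _)
        exact pow_eq_zero_iff hd.ne' |>.mp this
      apply hv0
      funext m
      fin_cases m
      · exact hv00
      · exact h1
      · exact h2
    refine ⟨⟨⟨v 1, hv1⟩, ⟨v 0 / v 1, ?_⟩⟩, ?_⟩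
    · apply (solve_iff (g ^ i) (-(g ^ j)) _).mp
      rw [Units.val_neg]
      have hzd : v 1 ^ d ≠ 0 := pow_ne_zero d hv1
      field_simp
      push_cast at heq ⊢
      have hinv : v 1 ^ d * (v 1)⁻¹ ^ d = 1 := by rw [← mul_pow, mul_inv_cancel₀ hv1, one_pow]
      linear_combination (v 1 ^ d)⁻¹ * heq - ((g : ZMod p) ^ j) * hinv
    · apply Subtype.ext
      show ![v 0 / v 1 * v 1, v 1, 0] = v
      funext m
      fin_cases m
      · exact div_mul_cancel₀ (v 0) hv1
      · rfl
      · exact h2.symm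
  rw [← Nat.card_congr (Equiv.ofBijective f ⟨hinj, hsurj⟩), Nat.card_prod,
    Nat.card_congr unitsEquivNeZero.symm, Nat.card_eq_fintype_card, ZMod.card_units,
    card_roots hg hd hdvd _,
    show ((g ^ i)⁻¹ * -(g ^ j) : (ZMod p)ˣ) = -(g ^ j * (g ^ i)⁻¹) by
      rw [mul_neg, mul_comm]]
  simp only [mem_star_iff hg hdvd hodd]
  split_ifs <;> simp

end Vec2

section Vec3
variable {d i j k : ℕ} {g : (ZMod p)ˣ}

lemma count_proj (hd : 0 < d) :
    Nat.card {v : Fin 3 → ZMod p //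
        v ≠ 0 ∧ (((g ^ i : (ZMod p)ˣ) : ZMod p) * v 0 ^ d
          + ((g ^ j : (ZMod p)ˣ) : ZMod p) * v 1 ^ d
          = ((g ^ k : (ZMod p)ˣ) : ZMod p) * v 2 ^ d)}
      = (p - 1) * Nat.card {P : Projectivization (ZMod p) (Fin 3 → ZMod p) //
          ((g ^ i : (ZMod p)ˣ) : ZMod p) * (P.rep 0) ^ d
            + ((g ^ j : (ZMod p)ˣ) : ZMod p) * (P.rep 1) ^ d
            = ((g ^ k : (ZMod p)ˣ) : ZMod p) * (P.rep 2) ^ d} := by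
  classical
  let f : ({P : Projectivization (ZMod p) (Fin 3 → ZMod p) //
          ((g ^ i : (ZMod p)ˣ) : ZMod p) * (P.rep 0) ^ d
            + ((g ^ j : (ZMod p)ˣ) : ZMod p) * (P.rep 1) ^ d
            = ((g ^ k : (ZMod p)ˣ) : ZMod p) * (P.rep 2) ^ d} × (ZMod p)ˣ) →
      {v : Fin 3 → ZMod p //
        v ≠ 0 ∧ (((g ^ i : (ZMod p)ˣ) : ZMod p) * v 0 ^ d
          + ((g ^ j : (ZMod p)ˣ) : ZMod p) * v 1 ^ d
          = ((g ^ k : (ZMod p)ˣ) : ZMod p) * v 2 ^ d)} := fun w =>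
    ⟨((w.2 : ZMod p)) • w.1.1.rep,
      smul_ne_zero w.2.ne_zero w.1.1.rep_nonzero,
      (escale hd w.2.ne_zero _).mpr w.1.2⟩
  have hinj : Function.Injective f := by
    rintro ⟨⟨P, hP⟩, a⟩ ⟨⟨Q, hQ⟩, b⟩ h
    simp only [f, Subtype.mk.injEq] at h
    have hPQ : P = Q := by
      rw [← P.mk_rep, ← Q.mk_rep]
      apply (Projectivization.mk_eq_mk_iff _ _ _ P.rep_nonzero Q.rep_nonzero).mpr
      refine ⟨a⁻¹ * b, ?_⟩
      rw [Units.smul_def, Units.val_mul, mul_smul, Units.val_inv_eq_inv_val, ← h,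
        inv_smul_smul₀ a.ne_zero]
    subst hPQ
    have hab : a = b := by
      have h0 : ((a : ZMod p) - (b : ZMod p)) • P.rep = 0 := by
        rw [sub_smul, h, sub_self]
      rcases smul_eq_zero.mp h0 with h' | h'
      · exact Units.ext (sub_eq_zero.mp h')
      · exact absurd h' P.rep_nonzero
    subst hab
    rfl
  have hsurj : Function.Surjective f := by
    rintro ⟨v, hv0, hE⟩
    obtain ⟨u, hu⟩ := Projectivization.exists_smul_eq_mk_rep (ZMod p) v hv0
    refine ⟨(⟨Projectivization.mk (ZMod p) v hv0, ?_⟩, u⁻¹), ?_⟩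
    · rw [← hu, Units.smul_def]
      exact (escale hd u.ne_zero v).mpr hE
    · apply Subtype.ext
      show ((u⁻¹ : (ZMod p)ˣ) : ZMod p) • (Projectivization.mk (ZMod p) v hv0).rep = v
      rw [← hu, Units.smul_def, Units.val_inv_eq_inv_val, inv_smul_smul₀ u.ne_zero]
  rw [← Nat.card_congr (Equiv.ofBijective f ⟨hinj, hsurj⟩), Nat.card_prod,
    Nat.card_eq_fintype_card (α := (ZMod p)ˣ), ZMod.card_units, mul_comm]

end Vec3

/-- The number `M_{i,j,k}` of projective `F_p`-rational points on the curve
`g^i x^d + g^j y^d = g^k z^d` in `ℙ²(F_p)` satisfies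
`M_{i,j,k} = d² c_{i,j,k} + d(δ_{j,k} + δ_{i,k} + δ_*)`, where `δ_* = 1` iff
`(p-1)/2 ≡ i - j (mod d)`. -/
theorem fermat_curve_point_count (p : ℕ) [Fact p.Prime] (hodd : Odd p)
    (d i j k : ℕ) (hd : 0 < d) (hdvd : d ∣ p - 1)
    (hi : i < d) (hj : j < d) (hk : k < d)
    (g : (ZMod p)ˣ) (hg : ∀ x : (ZMod p)ˣ, x ∈ Subgroup.zpowers g)
    (c M : ℕ)
    (hc : c = Nat.card {ab : (ZMod p)ˣ × (ZMod p)ˣ //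
      ab.1 ∈ Subgroup.zpowers (g ^ d) ∧ ab.2 ∈ Subgroup.zpowers (g ^ d) ∧
      ((g ^ i : (ZMod p)ˣ) : ZMod p) * (ab.1 : ZMod p)
        + ((g ^ j : (ZMod p)ˣ) : ZMod p) * (ab.2 : ZMod p)
        = ((g ^ k : (ZMod p)ˣ) : ZMod p)})
    (hM : M = Nat.card {P : Projectivization (ZMod p) (Fin 3 → ZMod p) //
      ((g ^ i : (ZMod p)ˣ) : ZMod p) * (P.rep 0) ^ d
        + ((g ^ j : (ZMod p)ˣ) : ZMod p) * (P.rep 1) ^ d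
        = ((g ^ k : (ZMod p)ˣ) : ZMod p) * (P.rep 2) ^ d}) :
    M = d ^ 2 * c + d * ((if j = k then 1 else 0) + (if i = k then 1 else 0) +
      (if (((p - 1) / 2 : ℕ) : ℤ) ≡ (i : ℤ) - (j : ℤ) [ZMOD (d : ℤ)] then 1 else 0)) := by
  subst hc; subst hM
  have hp1 : 0 < p - 1 := Nat.sub_pos_of_lt (Fact.out : p.Prime).one_lt
  have hsplit := card_split (α := Fin 3 → ZMod p)
    (fun v => v ≠ 0 ∧ (((g ^ i : (ZMod p)ˣ) : ZMod p) * v 0 ^ d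
      + ((g ^ j : (ZMod p)ˣ) : ZMod p) * v 1 ^ d
      = ((g ^ k : (ZMod p)ˣ) : ZMod p) * v 2 ^ d))
    (fun v => v 2 = 0)
  rw [count_proj hd, count_z_zero hodd hd hdvd hg, count_z_ne_zero hd,
    count_affine hd hdvd hi hj hk g hg] at hsplit
  apply Nat.eq_of_mul_eq_mul_left hp1
  rw [hsplit]
  ring
end

section
/- If d = 3 divides p-1, then V_4(p) = (10p² - 20p + 1)/27 - (4/3) p t_0, where t_0 = c_{0,0,0} is the number of pairs (a,b) ∈ Γ × Γ with a + b = 1 in F_p. -/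
open Finset

noncomputable def gpω : ℂ := Complex.exp (2 * (Real.pi : ℂ) * Complex.I / 3)

lemma gpω_prim : IsPrimitiveRoot gpω 3 := Complex.isPrimitiveRoot_exp 3 (by norm_num)

lemma gpω_pow3 : gpω ^ 3 = 1 := gpω_prim.pow_eq_one

lemma gpω_ne_one : gpω ≠ 1 := gpω_prim.ne_one (by norm_num)

lemma gpω_sum : 1 + gpω + gpω ^ 2 = 0 := by
  have h2 : (gpω - 1) * (1 + gpω + gpω ^ 2) = 0 := by linear_combination gpω_pow3
  rcases mul_eq_zero.mp h2 with h3 | h3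
  · exact absurd (by linear_combination h3) gpω_ne_one
  · exact h3

lemma gpω_conj : (starRingEnd ℂ) gpω = gpω ^ 2 := by
  have hne : gpω ≠ 0 := fun h => by simpa [h] using gpω_pow3
  have h1 : (starRingEnd ℂ) gpω * gpω = 1 := by
    rw [gpω, ← Complex.exp_conj, ← Complex.exp_add]
    have h : (starRingEnd ℂ) (2 * (Real.pi : ℂ) * Complex.I / 3) =
        -(2 * (Real.pi : ℂ) * Complex.I / 3) := by
      simp only [map_div₀, map_mul, Complex.conj_I, Complex.conj_ofReal, map_ofNat]
      ring
    rw [h, neg_add_cancel, Complex.exp_zero]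
  have h2 : gpω ^ 2 * gpω = 1 := by linear_combination gpω_pow3
  exact mul_right_cancel₀ hne (h1.trans h2.symm)

lemma sum_range_three_mul {M : Type*} [AddCommMonoid M] (k : ℕ) (f : ℕ → M) :
    ∑ m ∈ Finset.range (3*k), f m = ∑ r ∈ Finset.range 3, ∑ j ∈ Finset.range k, f (3*j + r) := by
  induction k with
  | zero => simp
  | succ n ih =>
    have h : 3*(n+1) = 3*n + 1 + 1 + 1 := by ring
    rw [h, Finset.sum_range_succ, Finset.sum_range_succ, Finset.sum_range_succ, ih,
      Finset.sum_range_succ, Finset.sum_range_succ, Finset.sum_range_one,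
      Finset.sum_range_succ, Finset.sum_range_succ, Finset.sum_range_one,
      Finset.sum_range_succ (fun j => f (3*j+1)), Finset.sum_range_succ (fun j => f (3*j+2)),
      Finset.sum_range_succ (fun j => f (3*j+0))]
    simp only [Nat.add_zero]
    abel

lemma gp_coef (s r : ℕ) (hs : s < 3) (hr : r < 3) :
    1 + gpω^(2*s) * gpω^r + gpω^s * (gpω^r * gpω^r) = if r = s then 3 else 0 := by
  interval_cases s <;> interval_cases r <;> norm_num
  · linear_combination gpω_sum
  · linear_combination gpω * gpω_pow3 + gpω_sum
  · linear_combination gpω_sum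
  · linear_combination 2 * gpω_pow3
  · linear_combination (gpω^2 + gpω) * gpω_pow3 + gpω_sum
  · linear_combination gpω * gpω_pow3 + gpω_sum
  · linear_combination (gpω^2 + gpω) * gpω_pow3 + gpω_sum
  · linear_combination 2*(gpω^3 + 1) * gpω_pow3

lemma gp_big_identity (G Gc : ℂ) :
    (-1 + G + Gc)^4 + (-1 + gpω^2*G + gpω*Gc)^4 + (-1 + gpω^4*G + gpω^2*Gc)^4
      = 3*(1 + 12*(G*Gc) + 6*(G*Gc)^2 - 4*(G^3 + Gc^3)) := by
  linear_combination (((-4)*Gc + (6)*Gc^2 + (8)*Gc^3 + (1)*Gc^4 + (-4)*G + (-24)*G*Gc + (-12)*G*Gc^2 + (4)*G*Gc^3 + (6)*G^2 + (-12)*G^2*Gc + (-12)*G^2*Gc^2 + (8)*G^3 + (4)*G^3*Gc + (1)*G^4 + (-6)*gpω*Gc^2 + (-8)*gpω*Gc^3 + (-1)*gpω*Gc^4 + (4)*gpω*G + (24)*gpω*G*Gc + (12)*gpω*G*Gc^2 + (-4)*gpω*G*Gc^3 + (-6)*gpω*G^2 + (12)*gpω*G^2*Gc + (12)*gpω*G^2*Gc^2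 + (-8)*gpω*G^3 + (-4)*gpω*G^3*Gc + (-1)*gpω*G^4 + (6)*gpω^2*Gc^2 + (-4)*gpω^2*G + (4)*gpω^3*Gc^3 + (1)*gpω^3*Gc^4 + (-12)*gpω^3*G*Gc + (-12)*gpω^3*G*Gc^2 + (4)*gpω^3*G*Gc^3 + (6)*gpω^3*G^2 + (-12)*gpω^3*G^2*Gc + (-12)*gpω^3*G^2*Gc^2 + (8)*gpω^3*G^3 + (4)*gpω^3*G^3*Gc + (1)*gpω^3*G^4 + (-4)*gpω^4*Gc^3 + (12)*gpω^4*G*Gc + (-4)*gpω^4*G*Gc^3 + (12)*gpω^4*G^2*Gc + (12)*gpω^4*G^2*Gc^2 + (-8)*gpω^4*G^3 + (-4)*gpω^4*G^3*Gc + (-1)*gpω^4*G^4 + (-1)*gpω^5*Gc^4 + (12)*gpω^5*G*Gc^2 + (4)*gpω^5*G*Gc^3 + (-6)*gpω^5*G^2 + (-12)*gpω^5*G^2*Gc + (1)*gpω^6*Gc^4 + (-12)*gpω^6*G*Gc^2 + (6)*gpω^6*G^2 + (-6)*gpω^6*G^2*Gc^2 + (4)*gpω^6*G^3 + (4)*gpω^6*G^3*Gc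 + (1)*gpω^6*G^4 + (-4)*gpω^7*G*Gc^3 + (12)*gpω^7*G^2*Gc + (6)*gpω^7*G^2*Gc^2 + (-4)*gpω^7*G^3 + (-1)*gpω^7*G^4 + (4)*gpω^8*G*Gc^3 + (-12)*gpω^8*G^2*Gc + (-4)*gpω^8*G^3*Gc + (1)*gpω^8*G^4 + (-6)*gpω^9*G^2*Gc^2 + (4)*gpω^9*G^3 + (4)*gpω^9*G^3*Gc + (6)*gpω^10*G^2*Gc^2 + (-4)*gpω^10*G^3 + (-1)*gpω^10*G^4 + (-4)*gpω^11*G^3*Gc + (1)*gpω^11*G^4 + (4)*gpω^12*G^3*Gc + (-1)*gpω^13*G^4 + (1)*gpω^14*G^4)) * gpω_sum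

/-- If `d = 3` divides `p-1`, then `V₄(p) = (10p² - 20p + 1)/27 - (4/3) p t₀`,
where `t₀` is the number of pairs `(a,b) ∈ Γ × Γ` with `a + b = 1`. -/
theorem gaussian_periods_V4_d3 (p k : ℕ) (hp : p.Prime) (hodd : Odd p)
    (hk : p - 1 = 3 * k)
    (g : (ZMod p)ˣ) (hg : ∀ x : (ZMod p)ˣ, x ∈ Subgroup.zpowers g)
    (η : ℕ → ℂ)
    (hη : ∀ a : ℕ, η a = ∑ j ∈ Finset.range k,
      Complex.exp (2 * (Real.pi : ℂ) * Complex.I *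
        (((g ^ (3 * j + a) : (ZMod p)ˣ) : ZMod p).val : ℂ) / (p : ℂ)))
    (t₀ : ℕ)
    (ht : t₀ = Nat.card {ab : (ZMod p)ˣ × (ZMod p)ˣ //
      ab.1 ∈ Subgroup.zpowers (g ^ 3) ∧ ab.2 ∈ Subgroup.zpowers (g ^ 3) ∧
      (ab.1 : ZMod p) + (ab.2 : ZMod p) = 1}) :
    ∑ s ∈ Finset.range 3, ‖η s‖ ^ 4
      = (10 * (p : ℝ) ^ 2 - 20 * p + 1) / 27 - (4 / 3) * p * t₀ := by
  classical
  haveI : Fact p.Prime := ⟨hp⟩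
  haveI : NeZero p := ⟨hp.ne_zero⟩
  haveI : Fact (Nat.Prime 3) := ⟨by norm_num⟩
  -- basic numerics
  have hk0 : 0 < 3 * k := by
    rw [← hk]; have := hp.two_le; omega
  have hcardu : Fintype.card (ZMod p)ˣ = 3 * k := by
    rw [ZMod.card_units p, hk]
  have horder : orderOf g = 3 * k := by
    rw [orderOf_eq_card_of_forall_mem_zpowers hg, Nat.card_eq_fintype_card, hcardu]
  have hlog : ∀ x : (ZMod p)ˣ, ∃ m : ℕ, g ^ m = x := by
    intro x
    have := hg x
    rw [← mem_powers_iff_mem_zpowers, Submonoid.mem_powers_iff] at this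
    exact this
  -- the additive character
  set ζ : ℂ := Complex.exp (2 * (Real.pi : ℂ) * Complex.I / p) with hζdef
  have hζprim : IsPrimitiveRoot ζ p := Complex.isPrimitiveRoot_exp p hp.ne_zero
  have hζp : ζ ^ p = 1 := hζprim.pow_eq_one
  set ψ : AddChar (ZMod p) ℂ := AddChar.zmodChar p hζp with hψdef
  have hψprim : ψ.IsPrimitive := AddChar.zmodChar_primitive_of_primitive_root p hζprim
  have hψ_ne : ψ ≠ 1 := by
    have := hψprim (one_ne_zero (α := ZMod p))
    rwa [AddChar.mulShift_one] at this
  have hη' : ∀ s : ℕ, η s = ∑ j ∈ Finset.range k, ψ ((g ^ (3*j + s) : (ZMod p)ˣ) : ZMod p) := by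
    intro s
    rw [hη s]
    refine Finset.sum_congr rfl fun j _ => ?_
    rw [hψdef, AddChar.zmodChar_apply, hζdef, ← Complex.exp_nat_mul]
    congr 1
    ring
  -- the cubic character
  have hωu : gpω * gpω ^ 2 = 1 := by linear_combination gpω_pow3
  set ωu : ℂˣ := Units.mkOfMulEqOne gpω (gpω ^ 2) hωu with hωudef
  have hωuval : (ωu : ℂ) = gpω := rfl
  have hωu3 : ωu ^ 3 = 1 := by
    ext
    rw [Units.val_pow_eq_pow_val, hωuval, gpω_pow3, Units.val_one]
  have key : ∀ a b : ℕ, g ^ a = g ^ b → ωu ^ a = ωu ^ b := by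
    intro a b hab
    have h1 : a ≡ b [MOD 3*k] := by rw [← horder]; exact pow_eq_pow_iff_modEq.mp hab
    have h2 : a ≡ b [MOD 3] := h1.of_dvd ⟨k, rfl⟩
    have hord : orderOf ωu ∣ 3 := orderOf_dvd_of_pow_eq_one hωu3
    exact pow_eq_pow_iff_modEq.mpr (h2.of_dvd hord)
  set χu : (ZMod p)ˣ →* ℂˣ :=
    { toFun := fun x => ωu ^ (hlog x).choose
      map_one' := by
        show ωu ^ (hlog 1).choose = 1
        rw [key _ 0 (by rw [(hlog 1).choose_spec, pow_zero]), pow_zero]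
      map_mul' := by
        intro x y
        show ωu ^ (hlog (x*y)).choose = ωu ^ (hlog x).choose * ωu ^ (hlog y).choose
        rw [key _ ((hlog x).choose + (hlog y).choose)
          (by rw [(hlog (x*y)).choose_spec, pow_add, (hlog x).choose_spec,
            (hlog y).choose_spec]), pow_add] } with hχudef
  set χ : MulChar (ZMod p) ℂ := MulChar.ofUnitHom χu with hχdef
  have hχ_eval : ∀ (u : (ZMod p)ˣ) (m : ℕ), g ^ m = u → χ (u : ZMod p) = gpω ^ m := by
    intro u m hm
    rw [hχdef, MulChar.ofUnitHom_coe]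
    have h1 : χu u = ωu ^ m := key _ m (by rw [(hlog u).choose_spec, hm])
    rw [h1, Units.val_pow_eq_pow_val, hωuval]
  -- χ basic properties
  have hχ3 : χ * χ * χ = 1 := by
    apply MulChar.ext
    intro u
    obtain ⟨m, hm⟩ := hlog u
    have he := hχ_eval u m hm
    rw [MulChar.one_apply_coe]
    have : (χ * χ * χ) (u : ZMod p) = χ (u : ZMod p) * χ (u : ZMod p) * χ (u : ZMod p) := by
      simp [MulChar.coeToFun_mul]
    rw [this, he]
    calc gpω ^ m * gpω ^ m * gpω ^ m = (gpω ^ 3) ^ m := by rw [← pow_mul]; ring_nf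
      _ = 1 := by rw [gpω_pow3, one_pow]
  have hχmul : χ⁻¹ = χ * χ := by
    refine inv_eq_of_mul_eq_one_right ?_
    rw [← mul_assoc, hχ3]
  have hχid : ∀ x : ZMod p, χ⁻¹ x = χ x * χ x := by
    intro x; rw [hχmul]; simp [MulChar.coeToFun_mul]
  have hgval : χ ((g : (ZMod p)ˣ) : ZMod p) = gpω := by
    have := hχ_eval g 1 (pow_one g); rwa [pow_one] at this
  have hω2ne : gpω ^ 2 ≠ 1 := fun h => gpω_ne_one (by linear_combination gpω_pow3 - gpω * h)
  have hχ_ne : χ ≠ 1 := by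
    intro h
    rw [h, MulChar.one_apply_coe] at hgval
    exact gpω_ne_one hgval.symm
  have hχχ_ne : χ * χ ≠ 1 := by
    intro h
    have h2 : (χ * χ) ((g : (ZMod p)ˣ) : ZMod p) = 1 := by rw [h, MulChar.one_apply_coe]
    have h3 : (χ * χ) ((g : (ZMod p)ˣ) : ZMod p) = gpω * gpω := by
      simp [MulChar.coeToFun_mul, hgval]
    rw [h3] at h2
    exact hω2ne (by linear_combination h2)
  have hχinv_ne : χ⁻¹ ≠ 1 := by rw [hχmul]; exact hχχ_ne
  have hinvmul : χ⁻¹ * χ⁻¹ = χ := by rw [← mul_inv, ← hχmul, inv_inv]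
  have hχinvinv_ne : χ⁻¹ * χ⁻¹ ≠ 1 := by rw [hinvmul]; exact hχ_ne
  -- χ(-1) = 1
  have hχ_neg1 : χ (-1 : ZMod p) = 1 := by
    obtain ⟨m, hm⟩ := hlog (-1 : (ZMod p)ˣ)
    have hcoe : ((-1 : (ZMod p)ˣ) : ZMod p) = (-1 : ZMod p) := by
      rw [Units.val_neg, Units.val_one]
    have he : χ (-1 : ZMod p) = gpω ^ m := by rw [← hcoe]; exact hχ_eval _ m hm
    have h2 : g ^ (2*m) = g ^ 0 := by
      rw [pow_zero, mul_comm 2 m, pow_mul, hm, neg_one_sq]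
    have h3 : gpω ^ (2*m) = 1 := by
      have h4 := congrArg (Units.val) (key (2*m) 0 h2)
      simpa [Units.val_pow_eq_pow_val, hωuval] using h4
    have h5 : gpω ^ (3*m) = 1 := by rw [pow_mul, gpω_pow3, one_pow]
    have h6 : gpω ^ (3*m) = gpω ^ (2*m) * gpω ^ m := by rw [← pow_add]; congr 1; ring
    rw [h5, h3, one_mul] at h6
    rw [he]
    exact h6.symm
  have hχinv_neg1 : χ⁻¹ (-1 : ZMod p) = 1 := by
    rw [hχid, hχ_neg1, one_mul]
  -- Gauss sums
  set G : ℂ := gaussSum χ ψ with hGdef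
  set Gc : ℂ := gaussSum χ⁻¹ ψ with hGcdef
  have hGc_alt : gaussSum χ⁻¹ ψ⁻¹ = Gc := by
    have h := mul_gaussSum_inv_eq_gaussSum χ⁻¹ ψ
    rwa [hχinv_neg1, one_mul] at h
  have hG_alt : gaussSum χ ψ⁻¹ = G := by
    have h := mul_gaussSum_inv_eq_gaussSum χ ψ
    rwa [hχ_neg1, one_mul] at h
  have hGG : G * Gc = (p : ℂ) := by
    have h := gaussSum_mul_gaussSum_eq_card hχ_ne hψprim
    rw [hGc_alt] at h
    rw [hGdef, h, ZMod.card]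
  set J : ℂ := jacobiSum χ χ with hJdef
  set Jc : ℂ := jacobiSum χ⁻¹ χ⁻¹ with hJcdef
  have hG3 : G ^ 3 = (p : ℂ) * J := by
    have h := jacobiSum_mul_nontrivial hχχ_ne ψ
    rw [← hχmul] at h
    -- h : Gc * J = G * G
    have h2 : Gc * J = G * G := h
    linear_combination G * h2.symm + J * hGG
  have hGc3 : Gc ^ 3 = (p : ℂ) * Jc := by
    have h := jacobiSum_mul_nontrivial hχinvinv_ne ψ
    rw [hinvmul] at h
    have h2 : G * Jc = Gc * Gc := h
    linear_combination Gc * h2.symm + Jc * hGG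
  -- sum decomposition helpers
  have hsplit : ∀ f : ZMod p → ℂ, ∑ x : ZMod p, f x = f 0 + ∑ u : (ZMod p)ˣ, f (u : ZMod p) := by
    intro f
    rw [← Finset.add_sum_erase _ f (Finset.mem_univ 0)]
    congr 1
    refine (Finset.sum_bij' (fun (u : (ZMod p)ˣ) _ => (u : ZMod p))
      (fun x hx => Units.mk0 x (Finset.ne_of_mem_erase hx)) ?_ ?_ ?_ ?_ ?_).symm
    · intro u _
      exact Finset.mem_erase.mpr ⟨Units.ne_zero u, Finset.mem_univ _⟩
    · intro x _; exact Finset.mem_univ _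
    · intro u _; exact Units.ext rfl
    · intro x _; rfl
    · intro u _; rfl
  have hinj : ∀ a ∈ Finset.range (3*k), ∀ b ∈ Finset.range (3*k), g^a = g^b → a = b := by
    intro a ha b hb hab
    have h1 := pow_eq_pow_iff_modEq.mp hab
    rw [horder] at h1
    have ha' := Finset.mem_range.mp ha
    have hb' := Finset.mem_range.mp hb
    unfold Nat.ModEq at h1
    rwa [Nat.mod_eq_of_lt ha', Nat.mod_eq_of_lt hb'] at h1
  have himg : (Finset.range (3*k)).image (fun m => g ^ m) = Finset.univ := by
    apply Finset.eq_univ_iff_forall.mpr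
    intro x
    obtain ⟨m, hm⟩ := hlog x
    refine Finset.mem_image.mpr ⟨m % (3*k), Finset.mem_range.mpr (Nat.mod_lt _ hk0), ?_⟩
    have h2 : g ^ (m % (3*k)) = g ^ m := by rw [← horder]; exact pow_mod_orderOf g m
    rw [h2, hm]
  have hum : ∀ f : (ZMod p)ˣ → ℂ, ∑ u : (ZMod p)ˣ, f u = ∑ m ∈ Finset.range (3*k), f (g ^ m) := by
    intro f
    rw [← himg, Finset.sum_image hinj]
  -- atomic sums over units
  have hψsum : ∑ u : (ZMod p)ˣ, ψ (u : ZMod p) = -1 := by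
    have h0 := AddChar.sum_eq_zero_of_ne_one hψ_ne
    have h1 := hsplit (fun x => ψ x)
    rw [h0, AddChar.map_zero_eq_one] at h1
    linear_combination -h1
  have hGunits : ∑ u : (ZMod p)ˣ, χ (u : ZMod p) * ψ (u : ZMod p) = G := by
    have h1 := hsplit (fun x => χ x * ψ x)
    rw [χ.map_zero, zero_mul, zero_add] at h1
    rw [hGdef, gaussSum, h1]
  have hGcunits : ∑ u : (ZMod p)ˣ, (χ (u : ZMod p) * χ (u : ZMod p)) * ψ (u : ZMod p) = Gc := by
    rw [hGcdef, gaussSum]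
    have h2 : ∑ a : ZMod p, χ⁻¹ a * ψ a = ∑ a : ZMod p, (χ a * χ a) * ψ a :=
      Finset.sum_congr rfl fun a _ => by rw [hχid]
    rw [h2]
    have h1 := hsplit (fun x => (χ x * χ x) * ψ x)
    rw [χ.map_zero, zero_mul, zero_mul, zero_add] at h1
    exact h1.symm
  -- the key character formula for the Gaussian periods
  have key1 : ∀ s : ℕ, s < 3 → (3 : ℂ) * η s = -1 + gpω^(2*s) * G + gpω^s * Gc := by
    intro s hs
    have e1 : ∑ u : (ZMod p)ˣ,
        (1 + gpω^(2*s) * χ (u : ZMod p) + gpω^s * (χ (u : ZMod p) * χ (u : ZMod p))) * ψ (u : ZMod p)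
        = -1 + gpω^(2*s) * G + gpω^s * Gc := by
      have e0 : ∀ u : (ZMod p)ˣ,
          (1 + gpω^(2*s) * χ (u : ZMod p) + gpω^s * (χ (u : ZMod p) * χ (u : ZMod p))) * ψ (u : ZMod p)
          = ψ (u : ZMod p) + gpω^(2*s) * (χ (u : ZMod p) * ψ (u : ZMod p))
            + gpω^s * ((χ (u : ZMod p) * χ (u : ZMod p)) * ψ (u : ZMod p)) := fun u => by ring
      rw [Finset.sum_congr rfl (fun u _ => e0 u), Finset.sum_add_distrib, Finset.sum_add_distrib,
        ← Finset.mul_sum, ← Finset.mul_sum, hψsum, hGunits, hGcunits]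
    rw [← e1, hum (fun u => (1 + gpω^(2*s) * χ (u : ZMod p) + gpω^s * (χ (u : ZMod p) * χ (u : ZMod p))) * ψ (u : ZMod p))]
    have e2 : ∀ m : ℕ,
        (1 + gpω^(2*s) * χ ((g^m : (ZMod p)ˣ) : ZMod p) + gpω^s * (χ ((g^m : (ZMod p)ˣ) : ZMod p) * χ ((g^m : (ZMod p)ˣ) : ZMod p))) * ψ ((g^m : (ZMod p)ˣ) : ZMod p)
        = (1 + gpω^(2*s) * gpω^m + gpω^s * (gpω^m * gpω^m)) * ψ ((g^m : (ZMod p)ˣ) : ZMod p) := by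
      intro m; rw [hχ_eval (g^m) m rfl]
    rw [Finset.sum_congr rfl (fun m _ => e2 m),
      sum_range_three_mul k (fun m => (1 + gpω^(2*s) * gpω^m + gpω^s * (gpω^m * gpω^m)) * ψ ((g^m : (ZMod p)ˣ) : ZMod p))]
    have e3 : ∀ r ∈ Finset.range 3, ∀ j ∈ Finset.range k,
        (1 + gpω^(2*s) * gpω^(3*j+r) + gpω^s * (gpω^(3*j+r) * gpω^(3*j+r))) * ψ ((g^(3*j+r) : (ZMod p)ˣ) : ZMod p)
        = (if r = s then (3:ℂ) else 0) * ψ ((g^(3*j+r) : (ZMod p)ˣ) : ZMod p) := by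
      intro r hr j _
      have hred : gpω^(3*j+r) = gpω^r := by
        rw [pow_add, pow_mul, gpω_pow3, one_pow, one_mul]
      rw [hred, gp_coef s r hs (Finset.mem_range.mp hr)]
    rw [Finset.sum_congr rfl (fun r hr => Finset.sum_congr rfl (fun j hj => e3 r hr j hj))]
    have e4 : ∀ r ∈ Finset.range 3,
        (∑ j ∈ Finset.range k, (if r = s then (3:ℂ) else 0) * ψ ((g^(3*j+r) : (ZMod p)ˣ) : ZMod p))
        = if r = s then ∑ j ∈ Finset.range k, 3 * ψ ((g^(3*j+r) : (ZMod p)ˣ) : ZMod p) else 0 := by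
      intro r _
      split_ifs with h
      · simp [h]
      · simp
    rw [Finset.sum_congr rfl e4, Finset.sum_ite_eq' (Finset.range 3) s
      (fun r => ∑ j ∈ Finset.range k, 3 * ψ ((g^(3*j+r) : (ZMod p)ˣ) : ZMod p)),
      if_pos (Finset.mem_range.mpr hs), hη' s, Finset.mul_sum]
  -- conjugation facts
  have hψconj : ∀ x : ZMod p, (starRingEnd ℂ) (ψ x) = ψ (-x) := by
    intro x
    have hζc : ζ * (starRingEnd ℂ) ζ = 1 := by
      rw [hζdef, ← Complex.exp_conj, ← Complex.exp_add]
      have h : (starRingEnd ℂ) (2 * (Real.pi : ℂ) * Complex.I / p) =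
          -(2 * (Real.pi : ℂ) * Complex.I / p) := by
        simp only [map_div₀, map_mul, Complex.conj_I, Complex.conj_ofReal, map_ofNat,
          Complex.conj_natCast]
        ring
      rw [h, add_neg_cancel, Complex.exp_zero]
    have h1 : ψ x * ψ (-x) = 1 := by
      rw [← AddChar.map_add_eq_mul, add_neg_cancel, AddChar.map_zero_eq_one]
    have h2 : ψ x * (starRingEnd ℂ) (ψ x) = 1 := by
      rw [hψdef, AddChar.zmodChar_apply, map_pow, ← mul_pow, hζc, one_pow]
    have hne : ψ x ≠ 0 := by
      intro h
      rw [h, zero_mul] at h1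
      exact zero_ne_one h1
    exact mul_left_cancel₀ hne (h2.trans h1.symm)
  have hχconj : ∀ x : ZMod p, (starRingEnd ℂ) (χ x) = χ⁻¹ x := by
    intro x
    rcases eq_or_ne x 0 with h0 | h0
    · rw [h0, χ.map_zero, (χ⁻¹).map_zero, map_zero]
    · obtain ⟨m, hm⟩ := hlog (Units.mk0 x h0)
      have hx : χ x = gpω ^ m := hχ_eval (Units.mk0 x h0) m hm
      have hx2 : χ⁻¹ x = χ x * χ x := hχid x
      rw [hx2, hx, map_pow, gpω_conj, ← pow_mul, two_mul, pow_add]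
  have hχinvconj : ∀ x : ZMod p, (starRingEnd ℂ) (χ⁻¹ x) = χ x := by
    intro x
    rw [← hχconj x, Complex.conj_conj]
  have hconjG : (starRingEnd ℂ) G = Gc := by
    rw [hGdef, gaussSum, map_sum]
    rw [← hGc_alt, gaussSum]
    refine Finset.sum_congr rfl fun x _ => ?_
    rw [map_mul, hχconj, hψconj, AddChar.inv_apply]
  have hconjGc : (starRingEnd ℂ) Gc = G := by
    rw [hGcdef, gaussSum, map_sum, ← hG_alt, gaussSum]
    refine Finset.sum_congr rfl fun x _ => ?_
    rw [map_mul, hχinvconj, hψconj, AddChar.inv_apply]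
  -- the periods are real
  have hηreal : ∀ s : ℕ, s < 3 → (starRingEnd ℂ) (η s) = η s := by
    intro s hs
    have h3 := key1 s hs
    have hc := congrArg (starRingEnd ℂ) h3
    simp only [map_mul, map_add, map_neg, map_one, map_pow, map_ofNat] at hc
    rw [gpω_conj, hconjG, hconjGc] at hc
    have e4 : ((gpω^2)^(2*s) : ℂ) = gpω^s := by
      rw [← pow_mul]
      have h : 2*(2*s) = s + 3*s := by ring
      rw [h, pow_add, pow_mul, gpω_pow3, one_pow, mul_one]
    have e5 : ((gpω^2)^s : ℂ) = gpω^(2*s) := by rw [← pow_mul, mul_comm]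
    rw [e4, e5] at hc
    have hfin : (3 : ℂ) * (starRingEnd ℂ) (η s) = (3 : ℂ) * η s := by
      rw [hc, h3]; ring
    exact mul_left_cancel₀ (by norm_num) hfin
  have habs4 : ∀ s : ℕ, s < 3 → ((‖η s‖ : ℝ) : ℂ)^4 = (η s)^4 := by
    intro s hs
    have hr := hηreal s hs
    have h1 : ((‖η s‖ : ℝ) : ℂ)^2 = η s * η s := by
      rw [← Complex.ofReal_pow, Complex.sq_norm]
      rw [← Complex.mul_conj (η s), hr]
    calc ((‖η s‖ : ℝ) : ℂ)^4 = (((‖η s‖ : ℝ) : ℂ)^2)^2 := by ring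
      _ = (η s * η s)^2 := by rw [h1]
      _ = (η s)^4 := by ring
  -- cube criterion
  have horderω : orderOf gpω = 3 := orderOf_eq_prime gpω_pow3 gpω_ne_one
  have hcube_iff : ∀ u : (ZMod p)ˣ, χ (u : ZMod p) = 1 ↔ u ∈ Subgroup.zpowers (g^3) := by
    intro u
    obtain ⟨m, hm⟩ := hlog u
    rw [hχ_eval u m hm]
    constructor
    · intro h1
      have h3 : 3 ∣ m := horderω ▸ orderOf_dvd_of_pow_eq_one h1
      obtain ⟨c, rfl⟩ := h3
      refine Subgroup.mem_zpowers_iff.mpr ⟨(c : ℤ), ?_⟩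
      rw [zpow_natCast, ← pow_mul, ← hm]
    · intro hmem
      obtain ⟨n, hn⟩ := Subgroup.mem_zpowers_iff.mp hmem
      have hg3 : g ^ ((3*n) : ℤ) = g ^ ((m : ℕ) : ℤ) := by
        rw [zpow_natCast, hm, ← hn, zpow_mul]
        norm_cast
      have hmod := zpow_eq_zpow_iff_modEq.mp hg3
      rw [horder] at hmod
      obtain ⟨t, ht'⟩ := Int.ModEq.dvd hmod
      have hdvd : (3:ℤ) ∣ (m : ℤ) := ⟨n + k * t, by push_cast at ht' ⊢; linarith⟩
      have hdvd' : 3 ∣ m := by exact_mod_cast hdvd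
      obtain ⟨c, rfl⟩ := hdvd'
      rw [pow_mul, gpω_pow3, one_pow]
  -- counting: the filter card equals t₀
  have hiff0 : ∀ x : ZMod p, χ x = 1 → x ≠ 0 := by
    intro x h hx
    rw [hx, χ.map_zero] at h
    exact zero_ne_one h
  have hcount : t₀ = (Finset.univ.filter (fun x : ZMod p => χ x = 1 ∧ χ (1-x) = 1)).card := by
    rw [ht]
    have e : {ab : (ZMod p)ˣ × (ZMod p)ˣ //
        ab.1 ∈ Subgroup.zpowers (g ^ 3) ∧ ab.2 ∈ Subgroup.zpowers (g ^ 3) ∧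
        (ab.1 : ZMod p) + (ab.2 : ZMod p) = 1} ≃
        {x : ZMod p // χ x = 1 ∧ χ (1-x) = 1} :=
      { toFun := fun ab => ⟨((ab.1.1 : (ZMod p)ˣ) : ZMod p), by
          obtain ⟨h1, h2, h3⟩ := ab.2
          refine ⟨(hcube_iff _).mpr h1, ?_⟩
          have hx : (1 : ZMod p) - (ab.1.1 : ZMod p) = ((ab.1.2 : (ZMod p)ˣ) : ZMod p) := by
            linear_combination -h3
          rw [hx]
          exact (hcube_iff _).mpr h2⟩
        invFun := fun x => ⟨(Units.mk0 x.1 (hiff0 _ x.2.1), Units.mk0 ((1:ZMod p) - x.1) (hiff0 _ x.2.2)), by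
          refine ⟨(hcube_iff _).mp ?_, (hcube_iff _).mp ?_, ?_⟩
          · exact x.2.1
          · exact x.2.2
          · show x.1 + ((1:ZMod p) - x.1) = 1
            ring⟩
        left_inv := fun ab => by
          apply Subtype.ext
          apply Prod.ext
          · apply Units.ext
            rfl
          · apply Units.ext
            show (1 : ZMod p) - (ab.1.1 : ZMod p) = ((ab.1.2 : (ZMod p)ˣ) : ZMod p)
            linear_combination -ab.2.2.2
        right_inv := fun x => Subtype.ext rfl }
    rw [Nat.card_congr e, Nat.card_eq_fintype_card, Fintype.card_subtype]
  -- pointwise indicator formula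
  have hc3 : ∀ x : ZMod p, x ≠ 0 → (χ x)^3 = 1 := by
    intro x hx
    obtain ⟨m, hm⟩ := hlog (Units.mk0 x hx)
    have h : χ x = gpω ^ m := hχ_eval (Units.mk0 x hx) m hm
    rw [h, ← pow_mul, mul_comm, pow_mul, gpω_pow3, one_pow]
  have hind : ∀ x : ZMod p, 1 + χ x + χ⁻¹ x =
      if x = 0 then 1 else (if χ x = 1 then 3 else 0) := by
    intro x
    split_ifs with h0 h1
    · rw [h0, χ.map_zero, (χ⁻¹).map_zero]; ring
    · rw [hχid, h1]; ring
    · have h3 := hc3 x h0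
      have hfac : (χ x - 1) * (1 + χ x + (χ x)^2) = 0 := by linear_combination h3
      rcases mul_eq_zero.mp hfac with hf | hf
      · exact absurd (by linear_combination hf) h1
      · rw [hχid]; linear_combination hf
  -- the big sum S, evaluated two ways
  have hS : ∑ x : ZMod p, (1 + χ x + χ⁻¹ x) * (1 + χ (1-x) + χ⁻¹ (1-x))
      = (p : ℂ) + (J + Jc) - 2 := by
    have e1 : ∀ x : ZMod p, (1 + χ x + χ⁻¹ x) * (1 + χ (1-x) + χ⁻¹ (1-x))
        = 1 + (χ (1-x) + (χ⁻¹ (1-x) + (χ x + χ⁻¹ x)))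
          + (χ x * χ (1-x) + (χ⁻¹ x * χ⁻¹ (1-x) + (χ x * χ⁻¹ (1-x) + χ⁻¹ x * χ (1-x)))) :=
      fun x => by ring
    rw [Finset.sum_congr rfl (fun x _ => e1 x)]
    rw [Finset.sum_add_distrib, Finset.sum_add_distrib, Finset.sum_add_distrib,
      Finset.sum_add_distrib, Finset.sum_add_distrib, Finset.sum_add_distrib,
      Finset.sum_add_distrib, Finset.sum_add_distrib]
    have c1 : ∑ _x : ZMod p, (1:ℂ) = (p:ℂ) := by
      rw [Finset.sum_const, Finset.card_univ, ZMod.card]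
      simp
    have c2 : ∑ x : ZMod p, χ x = 0 := MulChar.sum_eq_zero_of_ne_one hχ_ne
    have c3 : ∑ x : ZMod p, χ⁻¹ x = 0 := MulChar.sum_eq_zero_of_ne_one hχinv_ne
    have c4 : ∑ x : ZMod p, χ (1-x) = 0 := by
      rw [← c2]
      exact Equiv.sum_comp (Equiv.subLeft (1 : ZMod p)) (fun y => χ y)
    have c5 : ∑ x : ZMod p, χ⁻¹ (1-x) = 0 := by
      rw [← c3]
      exact Equiv.sum_comp (Equiv.subLeft (1 : ZMod p)) (fun y => χ⁻¹ y)
    have c6 : ∑ x : ZMod p, χ x * χ (1-x) = J := rfl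
    have c7 : ∑ x : ZMod p, χ⁻¹ x * χ⁻¹ (1-x) = Jc := rfl
    have c8 : ∑ x : ZMod p, χ x * χ⁻¹ (1-x) = -1 := by
      have h := jacobiSum_nontrivial_inv hχ_ne
      rw [hχ_neg1] at h
      exact h
    have c9 : ∑ x : ZMod p, χ⁻¹ x * χ (1-x) = -1 := by
      have h := jacobiSum_nontrivial_inv hχinv_ne
      rw [inv_inv, hχinv_neg1] at h
      exact h
    rw [c1, c2, c3, c4, c5, c6, c7, c8, c9]
    ring
  have hS2 : ∑ x : ZMod p, (1 + χ x + χ⁻¹ x) * (1 + χ (1-x) + χ⁻¹ (1-x))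
      = 9 * (t₀ : ℂ) + 6 := by
    have hpt : ∀ x : ZMod p, (1 + χ x + χ⁻¹ x) * (1 + χ (1-x) + χ⁻¹ (1-x))
        = (if (χ x = 1 ∧ χ (1-x) = 1) then (9:ℂ) else 0)
          + ((if x = 0 then (3:ℂ) else 0) + (if x = 1 then (3:ℂ) else 0)) := by
      intro x
      rw [hind x, hind (1-x)]
      rcases eq_or_ne x 0 with h0 | h0
      · subst h0
        have hx1 : (1:ZMod p) - 0 = 1 := by ring
        rw [hx1]
        have hne : ¬ (χ (0 : ZMod p) = 1) := by rw [χ.map_zero]; exact zero_ne_one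
        simp [χ.map_one, hne, (zero_ne_one (α := ZMod p))]
      · rcases eq_or_ne x 1 with h1 | h1
        · subst h1
          have hx1 : (1:ZMod p) - 1 = 0 := by ring
          rw [hx1]
          have hne : ¬ (χ (0 : ZMod p) = 1) := by rw [χ.map_zero]; exact zero_ne_one
          simp [χ.map_one, hne, (one_ne_zero (α := ZMod p))]
        · have h1x : (1:ZMod p) - x ≠ 0 := by
            intro h
            apply h1
            linear_combination -h
          rw [if_neg h0, if_neg h1x, if_neg h0, if_neg h1]
          by_cases hA : χ x = 1 <;> by_cases hB : χ (1-x) = 1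
          · rw [if_pos hA, if_pos hB, if_pos ⟨hA, hB⟩]; norm_num
          · rw [if_pos hA, if_neg hB, if_neg (fun h => hB h.2)]; norm_num
          · rw [if_neg hA, if_pos hB, if_neg (fun h => hA h.1)]; norm_num
          · rw [if_neg hA, if_neg hB, if_neg (fun h => hA h.1)]; norm_num
    rw [Finset.sum_congr rfl (fun x _ => hpt x), Finset.sum_add_distrib, Finset.sum_add_distrib]
    have d1 : ∑ x : ZMod p, (if x = 0 then (3:ℂ) else 0) = 3 := by
      rw [Finset.sum_ite_eq' Finset.univ (0 : ZMod p) (fun _ => (3:ℂ))]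
      simp
    have d2 : ∑ x : ZMod p, (if x = 1 then (3:ℂ) else 0) = 3 := by
      rw [Finset.sum_ite_eq' Finset.univ (1 : ZMod p) (fun _ => (3:ℂ))]
      simp
    have d3 : ∑ x : ZMod p, (if (χ x = 1 ∧ χ (1-x) = 1) then (9:ℂ) else 0)
        = 9 * (t₀ : ℂ) := by
      rw [Finset.sum_ite, Finset.sum_const_zero, add_zero, Finset.sum_const, hcount]
      rw [nsmul_eq_mul]
      ring
    rw [d1, d2, d3]
    norm_num
  have hJJ : J + Jc = 9 * (t₀ : ℂ) + 8 - p := by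
    have := hS.symm.trans hS2
    linear_combination this
  -- final assembly
  have hbigid := gp_big_identity G Gc
  have h0 := key1 0 (by norm_num)
  have h1 := key1 1 (by norm_num)
  have h2 := key1 2 (by norm_num)
  have h81 : (81:ℂ) * ∑ s ∈ Finset.range 3, (η s)^4
      = (-1 + G + Gc)^4 + (-1 + gpω^2*G + gpω*Gc)^4 + (-1 + gpω^4*G + gpω^2*Gc)^4 := by
    rw [Finset.sum_range_succ, Finset.sum_range_succ, Finset.sum_range_one]
    linear_combination
      ((3*η 0)^3 + (3*η 0)^2*(-1 + G + Gc) + (3*η 0)*(-1 + G + Gc)^2 + (-1 + G + Gc)^3) * h0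
      + ((3*η 1)^3 + (3*η 1)^2*(-1 + gpω^2*G + gpω*Gc) + (3*η 1)*(-1 + gpω^2*G + gpω*Gc)^2
          + (-1 + gpω^2*G + gpω*Gc)^3) * h1
      + ((3*η 2)^3 + (3*η 2)^2*(-1 + gpω^4*G + gpω^2*Gc) + (3*η 2)*(-1 + gpω^4*G + gpω^2*Gc)^2
          + (-1 + gpω^4*G + gpω^2*Gc)^3) * h2
  have hfinC : ∑ s ∈ Finset.range 3, (η s)^4
      = (10*(p:ℂ)^2 - 20*(p:ℂ) + 1)/27 - (4/3)*(p:ℂ)*(t₀:ℂ) := by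
    have hrhs : (-1 + G + Gc)^4 + (-1 + gpω^2*G + gpω*Gc)^4 + (-1 + gpω^4*G + gpω^2*Gc)^4
        = 81 * ((10*(p:ℂ)^2 - 20*(p:ℂ) + 1)/27 - (4/3)*(p:ℂ)*(t₀:ℂ)) := by
      rw [hbigid]
      linear_combination (36 + 18*(G*Gc + (p:ℂ)))*hGG - 12*hG3 - 12*hGc3 - 12*(p:ℂ)*hJJ
    have hcomb := h81.trans hrhs
    exact mul_left_cancel₀ (by norm_num : (81:ℂ) ≠ 0) hcomb
  have hfinal : ∀ s ∈ Finset.range 3, ((‖η s‖ : ℝ) : ℂ)^4 = (η s)^4 :=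
    fun s hs => habs4 s (Finset.mem_range.mp hs)
  apply Complex.ofReal_injective
  push_cast
  rw [Finset.sum_congr rfl hfinal, hfinC]
end

section
/- If d = 3 divides p-1, then (6p² - 8p^{3/2} + 12p + 1)/27 ≤ V_4(p) ≤ (6p² + 8p^{3/2} + 12p + 1)/27. -/
open Finset Complex

private lemma sum_range_triple {M : Type*} [AddCommMonoid M] (f : ℕ → M) (k : ℕ) :
    ∑ m ∈ Finset.range (3 * k), f m
      = ∑ j ∈ Finset.range k, (f (3 * j) + f (3 * j + 1) + f (3 * j + 2)) := by
  induction k with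
  | zero => simp
  | succ n ih =>
    have h : 3 * (n + 1) = 3 * n + 1 + 1 + 1 := by ring
    rw [h, Finset.sum_range_succ, Finset.sum_range_succ, Finset.sum_range_succ, ih,
      Finset.sum_range_succ]
    have h1 : 3 * n + 1 + 1 = 3 * n + 2 := by omega
    rw [h1]
    abel

private lemma key_identity (w t s : ℂ) (hw : w ^ 2 + w + 1 = 0) :
    ((-1 + t + s) / 3) ^ 4 + ((-1 + w ^ 2 * t + w * s) / 3) ^ 4
      + ((-1 + w * t + w ^ 2 * s) / 3) ^ 4
      = (6 * (t * s) ^ 2 + 12 * (t * s) + 1 - 4 * t ^ 3 - 4 * s ^ 3) / 27 := by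
  linear_combination (((-4 : ℂ)/81) * s + ((2 : ℂ)/27) * s^2 + ((8 : ℂ)/81) * s^3 + ((1 : ℂ)/81) * s^4 + ((-4 : ℂ)/81) * t + ((-8 : ℂ)/27) * t * s + ((-4 : ℂ)/27) * t * s^2 + ((4 : ℂ)/81) * t * s^3 + ((2 : ℂ)/27) * t^2 + ((-4 : ℂ)/27) * t^2 * s + ((-4 : ℂ)/27) * t^2 * s^2 + ((8 : ℂ)/81) * t^3 + ((4 : ℂ)/81) * t^3 * s + ((1 : ℂ)/81) * t^4 + ((-2 : ℂ)/27) * w * s^2 + ((-8 : ℂ)/81) * w * s^3 + ((-1 : ℂ)/81) * w * s^4 + ((8 : ℂ)/27) * w * t * s + ((4 : ℂ)/27) * w * t * s^2 + ((-4 : ℂ)/81) * w * t * s^3 + ((-2 : ℂ)/27) * w * t^2 + ((4 : ℂ)/27) * w * t^2 * s + ((4 : ℂ)/27) * w * t^2 * s^2 + ((-8 : ℂ)/81) * w * t^3 + ((-4 : ℂ)/81) * w * t^3 * s + ((-1 : ℂ)/81) * w * t^4 + ((2 : ℂ)/27) * w^2 * s^2 + ((2 : ℂ)/27) * w^2 *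 t^2 + ((4 : ℂ)/81) * w^3 * s^3 + ((1 : ℂ)/81) * w^3 * s^4 + ((-4 : ℂ)/27) * w^3 * t * s^2 + ((4 : ℂ)/81) * w^3 * t * s^3 + ((-4 : ℂ)/27) * w^3 * t^2 * s + ((-4 : ℂ)/27) * w^3 * t^2 * s^2 + ((4 : ℂ)/81) * w^3 * t^3 + ((4 : ℂ)/81) * w^3 * t^3 * s + ((1 : ℂ)/81) * w^3 * t^4 + ((-4 : ℂ)/81) * w^4 * s^3 + ((-4 : ℂ)/81) * w^4 * t * s^3 + ((4 : ℂ)/27) * w^4 * t^2 * s^2 + ((-4 : ℂ)/81) * w^4 * t^3 + ((-4 : ℂ)/81) * w^4 * t^3 * s + ((-1 : ℂ)/81) * w^5 * s^4 + ((4 : ℂ)/81) * w^5 * t * s^3 + ((4 : ℂ)/81) * w^5 * t^3 * s + ((-1 : ℂ)/81) * w^5 * t^4 + ((1 : ℂ)/81) * w^6 * s^4 + ((1 : ℂ)/81) * w^6 * t^4) * hw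

-- root of unity helpers
private lemma exp_pow_eq_one (n : ℕ) (hn : n ≠ 0) :
    Complex.exp (2 * (Real.pi : ℂ) * Complex.I / n) ^ n = 1 := by
  rw [← Complex.exp_nat_mul]
  rw [show (n : ℂ) * (2 * (Real.pi : ℂ) * Complex.I / n) = 2 * Real.pi * Complex.I by
    have hn0 : (n : ℂ) ≠ 0 := Nat.cast_ne_zero.mpr hn
    field_simp]
  exact Complex.exp_two_pi_mul_I

private lemma exp_ne_one (n : ℕ) (hn : 2 ≤ n) :
    Complex.exp (2 * (Real.pi : ℂ) * Complex.I / n) ≠ 1 := by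
  intro h
  rw [Complex.exp_eq_one_iff] at h
  obtain ⟨m, hm⟩ := h
  have hn0 : (n : ℂ) ≠ 0 := Nat.cast_ne_zero.mpr (by omega)
  have hπ : (Real.pi : ℂ) ≠ 0 := Complex.ofReal_ne_zero.mpr Real.pi_ne_zero
  have h1 : (m : ℂ) * n = 1 := by
    have h2 : 2 * (Real.pi : ℂ) * Complex.I = (m : ℂ) * (2 * Real.pi * Complex.I) * n := by
      field_simp at hm
      linear_combination (2 * (Real.pi : ℂ) * Complex.I) * hm
    have h3 : (2 * (Real.pi : ℂ) * Complex.I) * ((m : ℂ) * n - 1) = 0 := by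
      linear_combination -h2
    rcases mul_eq_zero.mp h3 with h | h
    · exact absurd h (by simp [hπ, Complex.I_ne_zero])
    · linear_combination h
  have h2 : (m * (n : ℤ) : ℤ) = 1 := by exact_mod_cast h1
  have : (n : ℤ) ≤ 1 := Int.le_of_dvd one_pos ⟨m, by linarith [h2]⟩
  omega

/-- If `d = 3` divides `p-1`, then
`(6p² - 8p^{3/2} + 12p + 1)/27 ≤ V₄(p) ≤ (6p² + 8p^{3/2} + 12p + 1)/27`. -/
theorem gaussian_periods_V4_d3_bounds (p k : ℕ) (hp : p.Prime) (hodd : Odd p)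
    (hk : p - 1 = 3 * k)
    (g : (ZMod p)ˣ) (hg : ∀ x : (ZMod p)ˣ, x ∈ Subgroup.zpowers g)
    (η : ℕ → ℂ)
    (hη : ∀ a : ℕ, η a = ∑ j ∈ Finset.range k,
      Complex.exp (2 * (Real.pi : ℂ) * Complex.I *
        (((g ^ (3 * j + a) : (ZMod p)ˣ) : ZMod p).val : ℂ) / (p : ℂ))) :
    (6 * (p : ℝ) ^ 2 - 8 * (p : ℝ) ^ ((3 : ℝ) / 2) + 12 * p + 1) / 27
      ≤ ∑ s ∈ Finset.range 3, ‖η s‖ ^ 4 ∧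
    ∑ s ∈ Finset.range 3, ‖η s‖ ^ 4
      ≤ (6 * (p : ℝ) ^ 2 + 8 * (p : ℝ) ^ ((3 : ℝ) / 2) + 12 * p + 1) / 27 := by
  haveI : Fact p.Prime := ⟨hp⟩
  have hp2 : 2 ≤ p := hp.two_le
  have hk1 : 1 ≤ k := by omega
  -- zeta
  set ζ : ℂ := Complex.exp (2 * (Real.pi : ℂ) * Complex.I / p) with hζdef
  have hζp : ζ ^ p = 1 := exp_pow_eq_one p (by omega)
  have hζ1 : ζ ≠ 1 := exp_ne_one p hp2
  set ψ : ZMod p → ℂ := fun x => ζ ^ x.val with hψdef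
  have hmodζ : ∀ a : ℕ, ζ ^ (a % p) = ζ ^ a := by
    intro a
    conv_rhs => rw [← Nat.div_add_mod a p]
    rw [pow_add, pow_mul, hζp, one_pow, one_mul]
  have hψadd : ∀ x y : ZMod p, ψ (x + y) = ψ x * ψ y := by
    intro x y
    simp only [hψdef]
    rw [ZMod.val_add, hmodζ, pow_add]
  have hψ0 : ψ 0 = 1 := by simp [hψdef]
  have hψsum : ∑ x : ZMod p, ψ x = 0 := by
    have : ∑ x : ZMod p, ψ x = ∑ i ∈ Finset.range p, ζ ^ i := by
      refine Finset.sum_nbij' (fun x => x.val) (fun i => (i : ZMod p)) ?_ ?_ ?_ ?_ ?_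
      · intro a _; exact Finset.mem_range.mpr (ZMod.val_lt a)
      · intro a _; exact Finset.mem_univ _
      · intro a _; exact ZMod.natCast_rightInverse a
      · intro a ha; exact ZMod.val_cast_of_lt (Finset.mem_range.mp ha)
      · intro a _; rfl
    rw [this, geom_sum_eq hζ1, hζp, sub_self, zero_div]
  -- psi inverse and conjugate
  have hψinv : ∀ x : ZMod p, ψ x * ψ (-x) = 1 := by
    intro x
    rw [← hψadd, add_neg_cancel, hψ0]
  have hζconj : (starRingEnd ℂ) ζ = ζ⁻¹ := by
    rw [hζdef, ← Complex.exp_conj, ← Complex.exp_neg]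
    congr 1
    simp [map_div₀, Complex.conj_I, map_ofNat]
    ring
  have hψconj : ∀ x : ZMod p, (starRingEnd ℂ) (ψ x) = ψ (-x) := by
    intro x
    have h1 : (starRingEnd ℂ) (ψ x) = (ψ x)⁻¹ := by
      simp only [hψdef, map_pow, hζconj, inv_pow]
    rw [h1]
    exact (eq_inv_of_mul_eq_one_right (hψinv x)).symm
  -- omega
  set ω : ℂ := Complex.exp (2 * (Real.pi : ℂ) * Complex.I / 3) with hωdef
  have hω3 : ω ^ 3 = 1 := by
    have := exp_pow_eq_one 3 (by omega)
    simpa using this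
  have hω1 : ω ≠ 1 := by
    have := exp_ne_one 3 (by omega)
    simpa using this
  have hωq : ω ^ 2 + ω + 1 = 0 := by
    have h : (ω - 1) * (ω ^ 2 + ω + 1) = 0 := by linear_combination hω3
    rcases mul_eq_zero.mp h with h | h
    · exact absurd (by linear_combination h) hω1
    · exact h
  have hωne : ω ≠ 0 := Complex.exp_ne_zero _
  have hωconj : (starRingEnd ℂ) ω = ω ^ 2 := by
    have h1 : (starRingEnd ℂ) ω = ω⁻¹ := by
      rw [hωdef, ← Complex.exp_conj, ← Complex.exp_neg]
      congr 1
      simp [map_div₀, Complex.conj_I, map_ofNat]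
      ring
    rw [h1, inv_eq_of_mul_eq_one_right (by linear_combination hω3 : ω * ω ^ 2 = 1)]
  -- discrete log
  have hord : orderOf g = p - 1 := by
    have h := orderOf_eq_card_of_forall_mem_zpowers hg
    rwa [Nat.card_eq_fintype_card, ZMod.card_units] at h
  choose lg hlg using fun x => Subgroup.mem_zpowers_iff.mp (hg x)
  have hωwd : ∀ a b : ℤ, g ^ a = g ^ b → ω ^ a = ω ^ b := by
    intro a b hab
    have h2 : ((p - 1 : ℕ) : ℤ) ∣ (a - b) := by
      rw [← hord]
      rw [orderOf_dvd_iff_zpow_eq_one, zpow_sub, hab, mul_inv_cancel]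
    have h3 : (3 : ℤ) ∣ (a - b) := by
      refine dvd_trans ?_ h2
      exact ⟨k, by rw [hk]; push_cast; ring⟩
    obtain ⟨c, hc⟩ := h3
    have hab' : a = b + 3 * c := by omega
    rw [hab', zpow_add₀ hωne, zpow_mul, zpow_ofNat, hω3, one_zpow, mul_one]
  set χ : (ZMod p)ˣ → ℂ := fun x => ω ^ lg x with hχdef
  have hχmul : ∀ x y : (ZMod p)ˣ, χ (x * y) = χ x * χ y := by
    intro x y
    have h : g ^ lg (x * y) = g ^ (lg x + lg y) := by
      rw [hlg, zpow_add, hlg, hlg]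
    simp only [hχdef]
    rw [hωwd _ _ h, zpow_add₀ hωne]
  have hχpow : ∀ m : ℕ, χ (g ^ m) = ω ^ m := by
    intro m
    have h : g ^ lg (g ^ m) = g ^ (m : ℤ) := by rw [hlg, zpow_natCast]
    simp only [hχdef]
    rw [hωwd _ _ h, zpow_natCast]
  have hχcube : ∀ x : (ZMod p)ˣ, χ x ^ 3 = 1 := by
    intro x
    simp only [hχdef]
    rw [← zpow_natCast (ω ^ lg x) 3, ← zpow_mul, mul_comm, zpow_mul, zpow_natCast, hω3, one_zpow]
  have hχ1 : χ 1 = 1 := by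
    have h : g ^ lg 1 = g ^ (0 : ℤ) := by rw [hlg, zpow_zero]
    simp only [hχdef]
    rw [hωwd _ _ h, zpow_zero]
  have hχneg1 : χ (-1) = 1 := by
    have hsq : χ (-1) * χ (-1) = 1 := by
      rw [← hχmul, neg_one_mul, neg_neg, hχ1]
    have hcb := hχcube (-1)
    calc χ (-1) = χ (-1) ^ 3 := by rw [pow_succ, pow_two, hsq, one_mul]
    _ = 1 := hcb
  -- sum over units vs sum over ZMod
  have hunit : ∀ f : ZMod p → ℂ,
      ∑ x : (ZMod p)ˣ, f (x : ZMod p) = (∑ x : ZMod p, f x) - f 0 := by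
    intro f
    classical
    have h1 : ∑ x ∈ (Finset.univ : Finset (ZMod p)).erase 0, f x + f 0
        = ∑ x : ZMod p, f x := Finset.sum_erase_add _ _ (Finset.mem_univ 0)
    have h2 : ∑ x : (ZMod p)ˣ, f (x : ZMod p)
        = ∑ x ∈ (Finset.univ : Finset (ZMod p)).erase 0, f x := by
      refine Finset.sum_bij (fun a _ => (a : ZMod p)) ?_ ?_ ?_ ?_
      · intro a _
        exact Finset.mem_erase.mpr ⟨Units.ne_zero a, Finset.mem_univ _⟩
      · intro a _ b _ hab
        exact Units.ext hab
      · intro b hb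
        obtain ⟨u, hu⟩ := isUnit_iff_ne_zero.mpr (Finset.mem_erase.mp hb).1
        exact ⟨u, Finset.mem_univ u, hu⟩
      · intro a _; rfl
    rw [h2, ← h1]; ring
  -- sum over units vs sum over powers of g
  have hgsum : ∀ f : (ZMod p)ˣ → ℂ,
      ∑ x : (ZMod p)ˣ, f x = ∑ m ∈ Finset.range (p - 1), f (g ^ m) := by
    intro f
    refine (Finset.sum_bij (fun m hm => g ^ m) ?_ ?_ ?_ ?_).symm
    · intro a _; exact Finset.mem_univ _
    · intro a ha b hb hab
      have := pow_injOn_Iio_orderOf (x := g)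
        (by rw [hord]; exact Set.mem_Iio.mpr (Finset.mem_range.mp ha))
        (by rw [hord]; exact Set.mem_Iio.mpr (Finset.mem_range.mp hb)) hab
      exact this
    · intro x _
      obtain ⟨z, hz⟩ := Subgroup.mem_zpowers_iff.mp (hg x)
      have hp1 : (0 : ℤ) < ((p - 1 : ℕ) : ℤ) := by
        have : 1 ≤ p - 1 := by omega
        exact_mod_cast this
      set r : ℤ := z % ((p - 1 : ℕ) : ℤ) with hr
      have hr0 : 0 ≤ r := Int.emod_nonneg z (by omega)
      have hrlt : r < ((p - 1 : ℕ) : ℤ) := Int.emod_lt_of_pos z hp1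
      refine ⟨r.toNat, Finset.mem_range.mpr ?_, ?_⟩
      · omega
      · have h1 : g ^ ((r.toNat : ℤ)) = g ^ z := by
          rw [Int.toNat_of_nonneg hr0]
          rw [zpow_eq_zpow_iff_modEq, hord]
          exact Int.emod_emod_of_dvd z dvd_rfl
        show g ^ r.toNat = x
        rw [← zpow_natCast g r.toNat, h1, hz]
    · intro m _; rfl
  -- Gaussian periods
  set η' : ℕ → ℂ := fun s => ∑ j ∈ Finset.range k, ψ ((g ^ (3 * j + s) : (ZMod p)ˣ) : ZMod p)
    with hη'def
  set τ : ℂ := ∑ x : (ZMod p)ˣ, χ x * ψ (x : ZMod p) with hτdef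
  set σ : ℂ := ∑ x : (ZMod p)ˣ, χ x ^ 2 * ψ (x : ZMod p) with hσdef
  have hrange : p - 1 = 3 * k := hk
  have hsumU : ∑ x : (ZMod p)ˣ, ψ (x : ZMod p) = -1 := by
    rw [hunit (fun z => ψ z), hψsum, hψ0]; ring
  have hE0 : η' 0 + η' 1 + η' 2 = -1 := by
    rw [← hsumU, hgsum (fun x => ψ (x : ZMod p)), hrange,
      sum_range_triple (fun m => ψ ((g ^ m : (ZMod p)ˣ) : ZMod p)) k]
    simp only [hη'def]
    rw [← Finset.sum_add_distrib, ← Finset.sum_add_distrib]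
    refine (Finset.sum_congr rfl fun j _ => ?_).symm
    simp only [Nat.add_zero]
  have hE1 : η' 0 + ω * η' 1 + ω ^ 2 * η' 2 = τ := by
    rw [hτdef, hgsum (fun x => χ x * ψ (x : ZMod p)), hrange,
      sum_range_triple (fun m => χ (g ^ m) * ψ ((g ^ m : (ZMod p)ˣ) : ZMod p)) k]
    simp only [hχpow, hη'def]
    rw [Finset.mul_sum, Finset.mul_sum, ← Finset.sum_add_distrib, ← Finset.sum_add_distrib]
    refine (Finset.sum_congr rfl fun j _ => ?_).symm
    have h0 : ω ^ (3 * j) = 1 := by rw [pow_mul, hω3, one_pow]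
    simp only [Nat.add_zero]
    rw [pow_add, pow_add, h0]
    have h03 : ω ^ (j * 3) = 1 := by rw [mul_comm, pow_mul, hω3, one_pow]
    linear_combination (ζ ^ (((g ^ (3 * j + 2) : (ZMod p)ˣ) : ZMod p)).val * ω ^ 2) * h03
  have hE2 : η' 0 + ω ^ 2 * η' 1 + ω * η' 2 = σ := by
    rw [hσdef, hgsum (fun x => χ x ^ 2 * ψ (x : ZMod p)), hrange,
      sum_range_triple (fun m => χ (g ^ m) ^ 2 * ψ ((g ^ m : (ZMod p)ˣ) : ZMod p)) k]
    simp only [hχpow, hη'def]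
    rw [Finset.mul_sum, Finset.mul_sum, ← Finset.sum_add_distrib, ← Finset.sum_add_distrib]
    refine (Finset.sum_congr rfl fun j _ => ?_).symm
    have h0 : ω ^ (3 * j) = 1 := by rw [pow_mul, hω3, one_pow]
    simp only [Nat.add_zero]
    rw [pow_add, pow_add, h0]
    have h06 : ω ^ (j * 6) = 1 := by
      have h : j * 6 = 3 * (2 * j) := by ring
      rw [h, pow_mul, hω3, one_pow]
    linear_combination (ζ ^ (((g ^ (3 * j + 2) : (ZMod p)ˣ) : ZMod p)).val * ω ^ 4) * h06
      + (ζ ^ (((g ^ (3 * j + 2) : (ZMod p)ˣ) : ZMod p)).val * ω) * hω3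
  -- sum of chi over units is zero
  have hχ0sum : ∑ x : (ZMod p)ˣ, χ x = 0 := by
    rw [hgsum χ, hrange, sum_range_triple (fun m => χ (g ^ m)) k]
    refine Finset.sum_eq_zero fun j _ => ?_
    simp only [hχpow]
    have h0 : ω ^ (3 * j) = 1 := by rw [pow_mul, hω3, one_pow]
    rw [pow_add, pow_add, h0]
    linear_combination hωq
  -- inner character sums
  have hinner : ∀ c : ZMod p, c ≠ 0 → ∑ y : (ZMod p)ˣ, ψ (c * (y : ZMod p)) = -1 := by
    intro c hc
    set cu : (ZMod p)ˣ := Units.mk0 c hc with hcu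
    have h1 : ∀ y : (ZMod p)ˣ, ψ (c * (y : ZMod p)) = ψ (((cu * y : (ZMod p)ˣ) : ZMod p)) := by
      intro y; rfl
    rw [Finset.sum_congr rfl fun y _ => h1 y]
    rw [← Equiv.sum_comp (Equiv.mulLeft cu) (fun z : (ZMod p)ˣ => ψ ((z : ZMod p)))] at hsumU
    exact hsumU
  -- tau * sigma = p
  have hτσ : τ * σ = p := by
    have hiff : ∀ u : (ZMod p)ˣ, ((u : ZMod p) + 1 = 0) ↔ (u = -1) := by
      intro u
      constructor
      · intro h
        apply Units.ext
        show (u : ZMod p) = ((-1 : (ZMod p)ˣ) : ZMod p)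
        rw [Units.val_neg, Units.val_one]
        linear_combination h
      · intro h
        rw [h, Units.val_neg, Units.val_one]
        ring
    calc τ * σ = ∑ x : (ZMod p)ˣ, ∑ y : (ZMod p)ˣ,
          χ x * ψ (x : ZMod p) * (χ y ^ 2 * ψ (y : ZMod p)) := by
            rw [hτdef, hσdef]; exact Finset.sum_mul_sum _ _ _ _
      _ = ∑ y : (ZMod p)ˣ, ∑ x : (ZMod p)ˣ,
          χ x * ψ (x : ZMod p) * (χ y ^ 2 * ψ (y : ZMod p)) := Finset.sum_comm
      _ = ∑ y : (ZMod p)ˣ, ∑ u : (ZMod p)ˣ,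
          χ u * ψ (((u : ZMod p) + 1) * (y : ZMod p)) := by
          refine Finset.sum_congr rfl fun y _ => ?_
          rw [← Equiv.sum_comp (Equiv.mulRight y)
            (fun x : (ZMod p)ˣ => χ x * ψ (x : ZMod p) * (χ y ^ 2 * ψ (y : ZMod p)))]
          refine Finset.sum_congr rfl fun u _ => ?_
          show χ (u * y) * ψ ((u * y : (ZMod p)ˣ) : ZMod p) * (χ y ^ 2 * ψ (y : ZMod p))
            = χ u * ψ (((u : ZMod p) + 1) * (y : ZMod p))
          rw [hχmul, Units.val_mul]
          have hadd := hψadd ((u : ZMod p) * (y : ZMod p)) (y : ZMod p)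
          have harg : (u : ZMod p) * (y : ZMod p) + (y : ZMod p)
              = ((u : ZMod p) + 1) * (y : ZMod p) := by ring
          rw [harg] at hadd
          linear_combination (ψ (((u : ZMod p) + 1) * (y : ZMod p)) * χ u) * (hχcube y)
            - (χ u * χ y ^ 3) * hadd
      _ = ∑ u : (ZMod p)ˣ, χ u * ∑ y : (ZMod p)ˣ, ψ (((u : ZMod p) + 1) * (y : ZMod p)) := by
          rw [Finset.sum_comm]
          exact Finset.sum_congr rfl fun u _ => (Finset.mul_sum _ _ _).symm
      _ = ∑ u : (ZMod p)ˣ, χ u * (if ((u : ZMod p) + 1 = 0) then ((p : ℂ) - 1) else -1) := by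
          refine Finset.sum_congr rfl fun u _ => ?_
          congr 1
          by_cases h : (u : ZMod p) + 1 = 0
          · rw [if_pos h, Finset.sum_congr rfl (fun y (_ : y ∈ Finset.univ) => by
              rw [h, zero_mul, hψ0])]
            rw [Finset.sum_const, Finset.card_univ, ZMod.card_units]
            have : ((p - 1 : ℕ) : ℂ) = (p : ℂ) - 1 := by
              push_cast [Nat.cast_sub (by omega : 1 ≤ p)]; ring
            simp [this]
          · rw [if_neg h]
            exact hinner _ h
      _ = ∑ u : (ZMod p)ˣ, (χ u * (-1) + if (u = -1) then χ u * (p : ℂ) else 0) := by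
          refine Finset.sum_congr rfl fun u _ => ?_
          by_cases h : u = -1
          · rw [if_pos ((hiff u).mpr h), if_pos h]; ring
          · rw [if_neg (fun hc => h ((hiff u).mp hc)), if_neg h]; ring
      _ = (∑ u : (ZMod p)ˣ, χ u) * (-1) + χ (-1) * (p : ℂ) := by
          rw [Finset.sum_add_distrib, Finset.sum_ite_eq' Finset.univ (-1 : (ZMod p)ˣ)
            (fun u => χ u * (p : ℂ)), if_pos (Finset.mem_univ _), ← Finset.sum_mul]
      _ = p := by rw [hχ0sum, hχneg1]; ring
  -- conjugation
  have hχconj : ∀ x : (ZMod p)ˣ, (starRingEnd ℂ) (χ x) = χ x ^ 2 := by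
    intro x
    simp only [hχdef]
    rw [map_zpow₀, hωconj, ← zpow_natCast ω 2, ← zpow_mul, ← zpow_natCast (ω ^ lg x) 2,
      ← zpow_mul, mul_comm]
  have hχneg : ∀ x : (ZMod p)ˣ, χ (-x) = χ x := by
    intro x
    rw [← neg_one_mul, hχmul, hχneg1, one_mul]
  have hconjτ : (starRingEnd ℂ) τ = σ := by
    have step1 : (starRingEnd ℂ) τ
        = ∑ x : (ZMod p)ˣ, χ x ^ 2 * ψ (((-x : (ZMod p)ˣ)) : ZMod p) := by
      rw [hτdef, map_sum]
      refine Finset.sum_congr rfl fun x _ => ?_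
      rw [map_mul, hχconj, hψconj, ← Units.val_neg]
    rw [step1, hσdef]
    rw [← Equiv.sum_comp (Equiv.neg (ZMod p)ˣ)
      (fun x : (ZMod p)ˣ => χ x ^ 2 * ψ (((-x : (ZMod p)ˣ)) : ZMod p))]
    refine Finset.sum_congr rfl fun x _ => ?_
    show χ (-x) ^ 2 * ψ ((-(-x) : (ZMod p)ˣ) : ZMod p) = χ x ^ 2 * ψ ((x : (ZMod p)ˣ) : ZMod p)
    rw [neg_neg, hχneg]
  have hconjσ : (starRingEnd ℂ) σ = τ := by
    rw [← hconjτ, Complex.conj_conj]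
  -- solve for the periods
  have hv0 : η' 0 = (-1 + τ + σ) / 3 := by
    linear_combination (hE0 + hE1 + hE2) / 3
      + ((-1/3 : ℂ) * η' 2 + (-1/3 : ℂ) * η' 1) * hωq
  have hv1 : η' 1 = (-1 + ω ^ 2 * τ + ω * σ) / 3 := by
    linear_combination hE0 / 3 + (ω ^ 2 / 3) * hE1 + (ω / 3) * hE2
      + ((-1/3 : ℂ) * η' 2 + (2/3 : ℂ) * η' 1 + (-1/3 : ℂ) * η' 0 + (1/3 : ℂ) * ω * η' 2
        + (-2/3 : ℂ) * ω * η' 1 + (-1/3 : ℂ) * ω ^ 2 * η' 2) * hωq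
  have hv2 : η' 2 = (-1 + ω * τ + ω ^ 2 * σ) / 3 := by
    linear_combination hE0 / 3 + (ω / 3) * hE1 + (ω ^ 2 / 3) * hE2
      + ((2/3 : ℂ) * η' 2 + (-1/3 : ℂ) * η' 1 + (-1/3 : ℂ) * η' 0 + (-2/3 : ℂ) * ω * η' 2
        + (1/3 : ℂ) * ω * η' 1 + (-1/3 : ℂ) * ω ^ 2 * η' 1) * hωq
  -- reality of the periods
  have hr0 : (starRingEnd ℂ) (η' 0) = η' 0 := by
    rw [hv0]
    simp only [map_div₀, map_add, map_neg, map_one, hconjτ, hconjσ, map_ofNat]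
    ring
  have hr1 : (starRingEnd ℂ) (η' 1) = η' 1 := by
    rw [hv1]
    simp only [map_div₀, map_add, map_neg, map_one, map_mul, map_pow, hωconj, hconjτ, hconjσ,
      map_ofNat]
    linear_combination (σ * ω / 3) * hω3
  have hr2 : (starRingEnd ℂ) (η' 2) = η' 2 := by
    rw [hv2]
    simp only [map_div₀, map_add, map_neg, map_one, map_mul, map_pow, hωconj, hconjτ, hconjσ,
      map_ofNat]
    linear_combination (τ * ω / 3) * hω3
  -- fourth power sum
  have hsum4 : η' 0 ^ 4 + η' 1 ^ 4 + η' 2 ^ 4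
      = (6 * (p : ℂ) ^ 2 + 12 * (p : ℂ) + 1 - 4 * τ ^ 3 - 4 * σ ^ 3) / 27 := by
    rw [hv0, hv1, hv2, key_identity ω τ σ hωq]
    linear_combination ((6 * (τ * σ) + 6 * (p : ℂ) + 12) / 27) * hτσ
  have hre : (6 * (p : ℂ) ^ 2 + 12 * (p : ℂ) + 1 - 4 * τ ^ 3 - 4 * σ ^ 3) / 27
      = (((6 * (p : ℝ) ^ 2 + 12 * (p : ℝ) + 1 - 8 * (τ ^ 3).re) / 27 : ℝ) : ℂ) := by
    have hσ3 : σ ^ 3 = (starRingEnd ℂ) (τ ^ 3) := by rw [← hconjτ, ← map_pow]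
    have hac := Complex.add_conj (τ ^ 3)
    rw [hσ3]
    push_cast at hac ⊢
    linear_combination ((-4 : ℂ) / 27) * hac
  -- absolute value of tau
  have hnormsq : Complex.normSq τ = (p : ℝ) := by
    have h := Complex.mul_conj τ
    rw [hconjτ, hτσ] at h
    have : ((p : ℝ) : ℂ) = ((Complex.normSq τ : ℝ) : ℂ) := by
      rw [← h]; push_cast; ring
    exact_mod_cast this.symm
  have habsτ : ‖τ‖ = Real.sqrt p := by
    rw [Complex.norm_def, hnormsq]
  have hb : |(τ ^ 3).re| ≤ (p : ℝ) ^ ((3 : ℝ) / 2) := by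
    calc |(τ ^ 3).re| ≤ ‖τ ^ 3‖ := Complex.abs_re_le_norm _
      _ = ‖τ‖ ^ 3 := by rw [norm_pow]
      _ = Real.sqrt p ^ 3 := by rw [habsτ]
      _ = (p : ℝ) ^ ((3 : ℝ) / 2) := by
          rw [Real.sqrt_eq_rpow, ← Real.rpow_natCast ((p : ℝ) ^ ((1 : ℝ) / 2)) 3,
            ← Real.rpow_mul (by positivity)]
          norm_num
  -- absolute values of periods
  have habs : ∀ s : ℕ, (starRingEnd ℂ) (η' s) = η' s →
      ‖η' s‖ ^ 4 = ((η' s) ^ 4).re := by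
    intro s hs
    obtain ⟨r, hr⟩ : ∃ r : ℝ, η' s = (r : ℂ) := ⟨(η' s).re, (Complex.conj_eq_iff_re.mp hs).symm⟩
    rw [hr, Complex.norm_real, Real.norm_eq_abs, ← Complex.ofReal_pow, Complex.ofReal_re, ← _root_.abs_pow]
    exact abs_of_nonneg (by positivity)
  -- link the given periods to our periods
  have hηη' : ∀ s : ℕ, η s = η' s := by
    intro s
    rw [hη s]
    refine Finset.sum_congr rfl fun j _ => ?_
    show _ = ζ ^ (((g ^ (3 * j + s) : (ZMod p)ˣ) : ZMod p)).val
    rw [hζdef, ← Complex.exp_nat_mul]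
    congr 1
    ring
  have hLHS : ∑ s ∈ Finset.range 3, ‖η s‖ ^ 4
      = (6 * (p : ℝ) ^ 2 + 12 * (p : ℝ) + 1 - 8 * (τ ^ 3).re) / 27 := by
    rw [Finset.sum_range_succ, Finset.sum_range_succ, Finset.sum_range_succ,
      Finset.sum_range_zero, zero_add, hηη' 0, hηη' 1, hηη' 2,
      habs 0 hr0, habs 1 hr1, habs 2 hr2, ← Complex.add_re, ← Complex.add_re, hsum4, hre,
      Complex.ofReal_re]
  rw [hLHS] at *
  obtain ⟨hb1, hb2⟩ := abs_le.mp hb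
  constructor
  · rw [hLHS]
    linarith
  · rw [hLHS]
    linarith
end

section
/- If p ≡ 1 (mod 8) and d = 4, then V_4(p) = (256 p t_0² - (32p² + 224p) t_0 + p³ + 167p² - 113p + 9)/576, where t_0 is the number of pairs (a,b) ∈ Γ × Γ with a + b = 1 in F_p and Γ is the subgroup of fourth powers. -/
open Finset



private lemma I_zpow_four_dvd {n : ℤ} (h : (4:ℤ) ∣ n) : Complex.I ^ n = 1 := by
  obtain ⟨m, rfl⟩ := h
  rw [zpow_mul, show (4:ℤ) = ((4:ℕ):ℤ) from rfl, zpow_natCast, Complex.I_pow_four, one_zpow]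

private lemma exists_quartChar (p : ℕ) [Fact p.Prime] (h4 : (4:ℕ) ∣ p - 1)
    (g : (ZMod p)ˣ) (hg : ∀ x : (ZMod p)ˣ, x ∈ Subgroup.zpowers g) :
    ∃ χ : MulChar (ZMod p) ℂ, ∀ n : ℤ, χ ((g ^ n : (ZMod p)ˣ) : ZMod p) = Complex.I ^ n := by
  have horder : orderOf g = p - 1 := by
    rw [orderOf_eq_card_of_forall_mem_zpowers hg, Nat.card_eq_fintype_card, ZMod.card_units]
  set ζ : ℂˣ := Units.mk0 Complex.I Complex.I_ne_zero with hζ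
  have hζval : ∀ n : ℤ, ((ζ ^ n : ℂˣ) : ℂ) = Complex.I ^ n := fun n => by
    rw [Units.val_zpow_eq_zpow_val]; rfl
  have hkey : ∀ a b : ℤ, g ^ a = g ^ b → ζ ^ a = ζ ^ b := by
    intro a b hab
    rw [zpow_eq_zpow_iff_modEq, horder] at hab
    have h4' : (4:ℤ) ∣ b - a := by
      refine dvd_trans ?_ (Int.ModEq.dvd hab)
      exact_mod_cast Int.natCast_dvd_natCast.mpr h4
    have h1 : ζ ^ (b - a) = 1 := by
      ext
      rw [hζval, I_zpow_four_dvd h4', Units.val_one]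
    have : ζ ^ b = ζ ^ a * ζ ^ (b - a) := by rw [← zpow_add]; ring_nf
    rw [this, h1, mul_one]
  have hlog : ∀ x : (ZMod p)ˣ, ∃ n : ℤ, g ^ n = x := fun x => by
    simpa [Subgroup.mem_zpowers_iff] using hg x
  choose log hlogspec using hlog
  let f : (ZMod p)ˣ →* ℂˣ :=
  { toFun := fun x => ζ ^ log x
    map_one' := by
      have := hkey (log 1) 0 (by rw [hlogspec]; simp)
      simpa using this
    map_mul' := by
      intro x y
      show ζ ^ log (x * y) = ζ ^ log x * ζ ^ log y
      have := hkey (log (x * y)) (log x + log y)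
        (by rw [hlogspec, zpow_add, hlogspec, hlogspec])
      rw [this, zpow_add] }
  refine ⟨MulChar.ofUnitHom f, fun n => ?_⟩
  rw [MulChar.ofUnitHom_coe]
  show ((ζ ^ log (g ^ n) : ℂˣ) : ℂ) = _
  rw [hkey _ n (by rw [hlogspec]), hζval]


private lemma I_zpow_four_dvd' {n : ℤ} (h : (4:ℤ) ∣ n) : Complex.I ^ n = 1 := by
  obtain ⟨m, rfl⟩ := h
  rw [zpow_mul, show (4:ℤ) = ((4:ℕ):ℤ) from rfl, zpow_natCast, Complex.I_pow_four, one_zpow]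

private lemma sum_units_reindex (p : ℕ) [Fact p.Prime] (g : (ZMod p)ˣ)
    (hg : ∀ x : (ZMod p)ˣ, x ∈ Subgroup.zpowers g) (F : (ZMod p)ˣ → ℂ) :
    ∑ n ∈ range (p - 1), F (g ^ n) = ∑ u : (ZMod p)ˣ, F u := by
  have horder : orderOf g = p - 1 := by
    rw [orderOf_eq_card_of_forall_mem_zpowers hg, Nat.card_eq_fintype_card, ZMod.card_units]
  refine Finset.sum_bij (fun n _ => g ^ n) (fun n _ => mem_univ _) ?_ ?_ (fun n _ => rfl)
  · intro a ha b hb hab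
    exact pow_injOn_Iio_orderOf (by rw [horder]; exact Set.mem_Iio.2 (mem_range.1 ha))
      (by rw [horder]; exact Set.mem_Iio.2 (mem_range.1 hb)) hab
  · intro u _
    obtain ⟨z, hz⟩ := Subgroup.mem_zpowers_iff.mp (hg u)
    have hp1 : 0 < p - 1 := Nat.sub_pos_of_lt (Fact.out : p.Prime).one_lt
    set m : ℤ := ((p - 1 : ℕ) : ℤ) with hm
    have hmpos : 0 < m := by rw [hm]; exact_mod_cast hp1
    have h2 : (0:ℤ) ≤ z % m := Int.emod_nonneg z hmpos.ne'
    have h1 : z % m < m := Int.emod_lt_of_pos z hmpos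
    refine ⟨(z % m).toNat, mem_range.2 (by omega), ?_⟩
    show g ^ ((z % m).toNat) = u
    rw [← zpow_natCast, Int.toNat_of_nonneg h2, ← hz, zpow_eq_zpow_iff_modEq, horder, ← hm]
    show z % m % m = z % m
    rw [Int.emod_emod_of_dvd _ dvd_rfl]

private lemma sum_zmod_eq_zero_add_units (p : ℕ) [Fact p.Prime] (F : ZMod p → ℂ) :
    ∑ x : ZMod p, F x = F 0 + ∑ u : (ZMod p)ˣ, F (u : ZMod p) := by
  rw [← Finset.add_sum_erase univ F (mem_univ 0)]
  congr 1
  refine (Finset.sum_bij (fun (u : (ZMod p)ˣ) _ => (u : ZMod p)) ?_ ?_ ?_ (fun u _ => rfl)).symm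
  · intro u _
    exact mem_erase.2 ⟨u.ne_zero, mem_univ _⟩
  · intro a _ b _ hab
    exact Units.ext hab
  · intro x hx
    exact ⟨Units.mk0 x (mem_erase.1 hx).1, mem_univ _, rfl⟩

private lemma geom_four {z : ℂ} (h4 : z ^ 4 = 1) (h1 : z ≠ 1) :
    ∑ m ∈ range 4, z ^ m = 0 := by
  have key : (z - 1) * ∑ m ∈ range 4, z ^ m = z ^ 4 - 1 := by
    simp [Finset.sum_range_succ]; ring
  rw [h4, sub_self] at key
  rcases mul_eq_zero.mp key with h | h
  · exact absurd (sub_eq_zero.mp h) h1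
  · exact h

private lemma I_zpow_eq_one_iff {n : ℤ} : Complex.I ^ n = 1 ↔ (4:ℤ) ∣ n := by
  constructor
  · intro h
    have hsplit : Complex.I ^ n = Complex.I ^ (n % 4) := by
      conv_lhs => rw [← Int.mul_ediv_add_emod n 4]
      rw [zpow_add₀ Complex.I_ne_zero, I_zpow_four_dvd' ⟨n / 4, rfl⟩, one_mul]
    rw [h] at hsplit
    have h1 : Complex.I ^ (1:ℤ) = Complex.I := zpow_one _
    have h2 : Complex.I ^ (2:ℤ) = -1 := by
      rw [show (2:ℤ) = ((2:ℕ):ℤ) from rfl, zpow_natCast, pow_two, Complex.I_mul_I]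
    have h3 : Complex.I ^ (3:ℤ) = -Complex.I := by
      rw [show (3:ℤ) = ((3:ℕ):ℤ) from rfl, zpow_natCast, pow_succ, pow_two, Complex.I_mul_I]
      ring
    have hmod : n % 4 = 0 ∨ n % 4 = 1 ∨ n % 4 = 2 ∨ n % 4 = 3 := by omega
    rcases hmod with h0 | h0 | h0 | h0
    · omega
    · rw [h0, h1] at hsplit; simp [Complex.ext_iff] at hsplit
    · rw [h0, h2] at hsplit; norm_num at hsplit
    · rw [h0, h3] at hsplit; simp [Complex.ext_iff] at hsplit
  · exact I_zpow_four_dvd'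


private lemma I_pow_nat_eq_one_iff {n : ℕ} : Complex.I ^ n = 1 ↔ 4 ∣ n := by
  have := I_zpow_eq_one_iff (n := (n : ℤ))
  rw [zpow_natCast] at this
  rw [this]
  exact_mod_cast Int.natCast_dvd_natCast

/-- If `p ≡ 1 (mod 8)` and `d = 4`, then
`V₄(p) = (256 p t₀² - (32p² + 224p) t₀ + p³ + 167p² - 113p + 9)/576`,
where `t₀ = #{(a,b) ∈ Γ² : a + b = 1}` and `Γ` is the group of fourth powers. -/
theorem gaussian_periods_V4_d4_p1mod8 (p k : ℕ) (hp : p.Prime) (hmod : p % 8 = 1)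
    (hk : p - 1 = 4 * k)
    (g : (ZMod p)ˣ) (hg : ∀ x : (ZMod p)ˣ, x ∈ Subgroup.zpowers g)
    (η : ℕ → ℂ)
    (hη : ∀ a : ℕ, η a = ∑ j ∈ Finset.range k,
      Complex.exp (2 * (Real.pi : ℂ) * Complex.I *
        (((g ^ (4 * j + a) : (ZMod p)ˣ) : ZMod p).val : ℂ) / (p : ℂ)))
    (t₀ : ℕ)
    (ht : t₀ = Nat.card {ab : (ZMod p)ˣ × (ZMod p)ˣ //
      ab.1 ∈ Subgroup.zpowers (g ^ 4) ∧ ab.2 ∈ Subgroup.zpowers (g ^ 4) ∧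
      (ab.1 : ZMod p) + (ab.2 : ZMod p) = 1}) :
    ∑ s ∈ Finset.range 4, ‖η s‖ ^ 4
      = (256 * (p : ℝ) * (t₀ : ℝ) ^ 2 - (32 * (p : ℝ) ^ 2 + 224 * p) * t₀
          + (p : ℝ) ^ 3 + 167 * (p : ℝ) ^ 2 - 113 * p + 9) / 576 := by
  haveI : Fact p.Prime := ⟨hp⟩
  have hp2 : 2 ≤ p := hp.two_le
  have h8 : 8 ∣ p - 1 := by omega
  have h4 : (4:ℕ) ∣ p - 1 := by omega
  obtain ⟨e, he⟩ := h8
  have hke : k = 2 * e := by omega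
  have hepos : 0 < e := by omega
  have horder : orderOf g = p - 1 := by
    rw [orderOf_eq_card_of_forall_mem_zpowers hg, Nat.card_eq_fintype_card, ZMod.card_units]
  obtain ⟨χ, hχ⟩ := exists_quartChar p h4 g hg
  have hχn : ∀ n : ℕ, χ ((g ^ n : (ZMod p)ˣ) : ZMod p) = Complex.I ^ n := by
    intro n
    have := hχ (n : ℤ)
    rwa [zpow_natCast, zpow_natCast] at this
  set ψ : AddChar (ZMod p) ℂ := ZMod.stdAddChar with hψdef
  have hψprim : ψ.IsPrimitive := ZMod.isPrimitive_stdAddChar p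
  have hψne : ψ ≠ 0 := by
    intro h0
    have h1 : ψ 1 = ψ 0 := by rw [h0]; simp
    exact one_ne_zero (ZMod.injective_stdAddChar h1)
  -- η in terms of ψ
  have hη' : ∀ s : ℕ, η s = ∑ j ∈ range k, ψ ((g ^ (4 * j + s) : (ZMod p)ˣ) : ZMod p) := by
    intro s
    rw [hη s]
    refine Finset.sum_congr rfl fun j _ => ?_
    rw [hψdef, ZMod.stdAddChar_apply, ZMod.toCircle_apply]
  -- the units pow lemma for χ powers
  have hχmn : ∀ m n : ℕ, (χ ^ m) ((g ^ n : (ZMod p)ˣ) : ZMod p) = Complex.I ^ (m * n) := by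
    intro m n
    rw [MulChar.pow_apply_coe, hχn, ← pow_mul, mul_comm n m]
  set S : ℕ → ℂ := fun m => gaussSum (χ ^ m) ψ with hSdef
  set J : ℂ := jacobiSum χ χ with hJdef
  set K : ℂ := jacobiSum (χ ^ 3) (χ ^ 3) with hKdef
  -- Gauss sums as sums over powers of g
  have hSsum : ∀ m : ℕ, S m = ∑ n ∈ range (p - 1), Complex.I ^ (m * n) *
      ψ ((g ^ n : (ZMod p)ˣ) : ZMod p) := by
    intro m
    rw [hSdef]
    show gaussSum (χ ^ m) ψ = _
    rw [gaussSum, sum_zmod_eq_zero_add_units p (fun x => (χ ^ m) x * ψ x),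
      MulChar.map_nonunit _ not_isUnit_zero, zero_mul, zero_add,
      ← sum_units_reindex p g hg (fun u => (χ ^ m) (u : ZMod p) * ψ (u : ZMod p))]
    exact Finset.sum_congr rfl fun n _ => by rw [hχmn]
  -- Step A : 4 * η s = ∑ m < 4, I^(3*s*m) * S m
  have hstepA : ∀ s, s < 4 → (4 : ℂ) * η s =
      ∑ m ∈ range 4, Complex.I ^ (3 * s * m) * S m := by
    intro s hs
    have h1 : ∀ m ∈ range 4, Complex.I ^ (3 * s * m) * S m
        = ∑ n ∈ range (p - 1), (Complex.I ^ (3 * s + n)) ^ m *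
            ψ ((g ^ n : (ZMod p)ˣ) : ZMod p) := by
      intro m _
      rw [hSsum m, Finset.mul_sum]
      refine Finset.sum_congr rfl fun n _ => ?_
      rw [← mul_assoc, ← pow_add, ← pow_mul]
      congr 2
      ring
    rw [Finset.sum_congr rfl h1, Finset.sum_comm]
    have h2 : ∀ n ∈ range (p - 1), (∑ m ∈ range 4, (Complex.I ^ (3 * s + n)) ^ m *
        ψ ((g ^ n : (ZMod p)ˣ) : ZMod p))
        = if n % 4 = s then (4:ℂ) * ψ ((g ^ n : (ZMod p)ˣ) : ZMod p) else 0 := by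
      intro n _
      rw [← Finset.sum_mul]
      by_cases hc : n % 4 = s
      · rw [if_pos hc]
        congr 1
        have hdvd : (4:ℕ) ∣ 3 * s + n := by omega
        rw [I_pow_nat_eq_one_iff.mpr hdvd]
        simp
      · rw [if_neg hc]
        have hnd : ¬ (4:ℕ) ∣ 3 * s + n := by omega
        have hz : Complex.I ^ (3 * s + n) ≠ 1 := fun h => hnd (I_pow_nat_eq_one_iff.mp h)
        rw [geom_four (by rw [← pow_mul, mul_comm, pow_mul, Complex.I_pow_four, one_pow]) hz,
          zero_mul]
    rw [Finset.sum_congr rfl h2, ← Finset.sum_filter, hη' s, Finset.mul_sum]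
    refine Finset.sum_bij' (i := fun j _ => 4 * j + s) (j := fun n _ => n / 4)
      ?_ ?_ ?_ ?_ ?_
    · intro j hj
      rw [mem_range] at hj
      show 4 * j + s ∈ Finset.filter (fun n => n % 4 = s) (range (p - 1))
      rw [mem_filter, mem_range]
      omega
    · intro n hn
      rw [mem_filter, mem_range] at hn
      show n / 4 ∈ range k
      rw [mem_range]
      omega
    · intro j hj
      rw [mem_range] at hj
      show (4 * j + s) / 4 = j
      omega
    · intro n hn
      rw [mem_filter, mem_range] at hn
      show 4 * (n / 4) + s = n
      omega
    · intro j hj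
      rfl
  -- relations
  have hSingle : ∀ m, m = 1 ∨ m = 2 ∨ m = 3 → χ ^ m ≠ 1 := by
    intro m hm heq
    have h1 : (χ ^ m) ((g ^ 1 : (ZMod p)ˣ) : ZMod p) = Complex.I ^ (m * 1) := hχmn m 1
    rw [heq] at h1
    rw [pow_one, MulChar.one_apply_coe, mul_one] at h1
    rcases hm with rfl | rfl | rfl
    · rw [pow_one] at h1; simp [Complex.ext_iff] at h1
    · rw [pow_two, Complex.I_mul_I] at h1; norm_num at h1
    · rw [pow_succ, pow_two, Complex.I_mul_I] at h1; simp [Complex.ext_iff] at h1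
  have hχ4 : χ ^ 4 = 1 := by
    refine MulChar.ext fun a => ?_
    obtain ⟨z, hz⟩ := Subgroup.mem_zpowers_iff.mp (hg a)
    rw [MulChar.one_apply_coe, MulChar.pow_apply_coe, ← hz, hχ z, ← zpow_natCast,
      ← zpow_mul, mul_comm]
    exact I_zpow_four_dvd ⟨z, rfl⟩
  have hneg1 : (g : (ZMod p)ˣ) ^ (4 * e) = -1 := by
    have hsq : (g ^ (4 * e)) ^ 2 = 1 := by
      rw [← pow_mul, ← pow_orderOf_eq_one g, horder, he]; ring_nf
    have hne1 : g ^ (4 * e) ≠ 1 := by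
      intro h1
      have := orderOf_dvd_of_pow_eq_one h1
      rw [horder, he] at this
      have := Nat.le_of_dvd (by omega) this
      omega
    have hcoe : ((g ^ (4 * e) : (ZMod p)ˣ) : ZMod p) ^ 2 = 1 := by
      rw [← Units.val_pow_eq_pow_val, hsq, Units.val_one]
    have hfact : (((g ^ (4 * e) : (ZMod p)ˣ) : ZMod p) - 1) *
        (((g ^ (4 * e) : (ZMod p)ˣ) : ZMod p) + 1) = 0 := by linear_combination hcoe
    rcases mul_eq_zero.mp hfact with h | h
    · exfalso
      apply hne1
      ext
      rw [Units.val_one]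
      linear_combination h
    · ext
      rw [Units.val_neg, Units.val_one]
      linear_combination h
  have hχm1 : ∀ m : ℕ, (χ ^ m) (-1 : ZMod p) = 1 := by
    intro m
    have hval : ((g ^ (4 * e) : (ZMod p)ˣ) : ZMod p) = (-1 : ZMod p) := by
      rw [hneg1, Units.val_neg, Units.val_one]
    rw [← hval, hχmn m (4 * e), show m * (4 * e) = 4 * (m * e) by ring,
      pow_mul, Complex.I_pow_four, one_pow]
  have hS0 : S 0 = -1 := by
    have hzero : ∑ x : ZMod p, ψ x = 0 := AddChar.sum_eq_zero_iff_ne_zero.mpr hψne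
    rw [sum_zmod_eq_zero_add_units p (fun x => ψ x), AddChar.map_zero_eq_one] at hzero
    have : S 0 = gaussSum (χ ^ 0) ψ := rfl
    rw [this, pow_zero, gaussSum, sum_zmod_eq_zero_add_units p (fun x => (1 : MulChar (ZMod p) ℂ) x * ψ x),
      MulChar.map_nonunit _ not_isUnit_zero, zero_mul, zero_add]
    have heq : ∀ u : (ZMod p)ˣ, (1 : MulChar (ZMod p) ℂ) (u : ZMod p) * ψ (u : ZMod p) = ψ (u : ZMod p) :=
      fun u => by rw [MulChar.one_apply_coe, one_mul]
    rw [Finset.sum_congr rfl fun u _ => heq u]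
    linear_combination hzero

  -- Gauss sum with inverted additive character
  have hginv : ∀ m : ℕ, gaussSum (χ ^ m) ψ⁻¹ = gaussSum (χ ^ m) ψ := by
    intro m
    have hms := gaussSum_mulShift (χ ^ m) ψ (-1 : (ZMod p)ˣ)
    rw [Units.val_neg, Units.val_one, hχm1 m, one_mul] at hms
    rw [AddChar.inv_mulShift]
    exact hms
  have hS2 : S 2 * S 2 = (p : ℂ) := by
    have hinv2 : (χ ^ 2)⁻¹ = χ ^ 2 := by
      apply inv_eq_of_mul_eq_one_right
      rw [← pow_add]
      exact hχ4
    have := gaussSum_mul_gaussSum_eq_card (hSingle 2 (by tauto)) hψprim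
    rw [hinv2, hginv 2, ZMod.card] at this
    exact this
  have hS13 : S 1 * S 3 = (p : ℂ) := by
    have hinv1 : (χ ^ 1)⁻¹ = χ ^ 3 := by
      apply inv_eq_of_mul_eq_one_right
      rw [← pow_add]
      exact hχ4
    have := gaussSum_mul_gaussSum_eq_card (hSingle 1 (by tauto)) hψprim
    rw [hinv1, hginv 3, ZMod.card] at this
    rw [show S 1 = gaussSum (χ ^ 1) ψ by rw [hSdef]]
    exact this
  have hJrel : S 1 * S 1 = S 2 * J := by
    have h := jacobiSum_mul_nontrivial (χ := χ) (φ := χ)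
      (by rw [← pow_two]; exact hSingle 2 (by tauto)) ψ
    rw [← pow_two] at h
    rw [show S 1 = gaussSum (χ ^ 1) ψ by rw [hSdef], pow_one]
    rw [h.symm]
  have hKrel : S 3 * S 3 = S 2 * K := by
    have hmul : χ ^ 3 * χ ^ 3 = χ ^ 2 := by
      rw [← pow_add, show 3 + 3 = 4 + 2 by rfl, pow_add, hχ4, one_mul]
    have h := jacobiSum_mul_nontrivial (χ := χ ^ 3) (φ := χ ^ 3)
      (by rw [hmul]; exact hSingle 2 (by tauto)) ψ
    rw [hmul] at h
    rw [h.symm]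
  have hpne : (p : ℂ) ≠ 0 := Nat.cast_ne_zero.mpr (by omega)
  have hJK : J * K = (p : ℂ) := by
    have hpp : (p:ℂ) * (J * K) = (p:ℂ) * (p:ℂ) := by
      linear_combination (S 1 * S 3 + (p:ℂ)) * hS13 - (S 3 * S 3) * hJrel
        - (S 2 * J) * hKrel - (J * K) * hS2
    exact mul_left_cancel₀ hpne hpp
  classical
  have hχne1 : χ ≠ 1 := by
    have := hSingle 1 (by tauto)
    rwa [pow_one] at this
  have hinv1' : χ⁻¹ = χ ^ 3 := by
    apply inv_eq_of_mul_eq_one_right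
    rw [(pow_succ' χ 3).symm]
    exact hχ4
  have hinv2' : (χ ^ 2)⁻¹ = χ ^ 2 := by
    apply inv_eq_of_mul_eq_one_right
    rw [← pow_add]
    exact hχ4
  -- Jacobi sum values
  have v00 : jacobiSum (1 : MulChar (ZMod p) ℂ) 1 = (p:ℂ) - 2 := by
    rw [jacobiSum_one_one, ZMod.card]
  have v01 : jacobiSum (1 : MulChar (ZMod p) ℂ) χ = -1 := jacobiSum_one_nontrivial hχne1
  have v02 : jacobiSum (1 : MulChar (ZMod p) ℂ) (χ ^ 2) = -1 :=
    jacobiSum_one_nontrivial (hSingle 2 (by tauto))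
  have v03 : jacobiSum (1 : MulChar (ZMod p) ℂ) (χ ^ 3) = -1 :=
    jacobiSum_one_nontrivial (hSingle 3 (by tauto))
  have v13 : jacobiSum χ (χ ^ 3) = -1 := by
    have := jacobiSum_nontrivial_inv hχne1
    rw [hinv1'] at this
    rw [this]
    have h1 := hχm1 1
    rw [pow_one] at h1
    rw [h1]
  have v22 : jacobiSum (χ ^ 2) (χ ^ 2) = -1 := by
    have := jacobiSum_nontrivial_inv (hSingle 2 (by tauto))
    rw [hinv2'] at this
    rw [this, hχm1 2]
  have v12 : jacobiSum χ (χ ^ 2) = J := by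
    have h := jacobiSum_mul_nontrivial (χ := χ) (φ := χ ^ 2)
      (by rw [(pow_succ' χ 2).symm]; exact hSingle 3 (by tauto)) ψ
    rw [(pow_succ' χ 2).symm] at h
    have h' : S 3 * jacobiSum χ (χ ^ 2) = S 1 * S 2 := by
      have e1 : gaussSum (χ ^ 3) ψ = S 3 := rfl
      have e2 : gaussSum (χ ^ 2) ψ = S 2 := rfl
      have e3 : gaussSum χ ψ = S 1 := by rw [hSdef]; show _ = gaussSum (χ ^ 1) ψ; rw [pow_one]
      rw [e1, e2, e3] at h
      exact h
    apply mul_left_cancel₀ hpne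
    calc (p:ℂ) * jacobiSum χ (χ ^ 2) = (S 1 * S 3) * jacobiSum χ (χ ^ 2) := by rw [hS13]
      _ = S 1 * (S 3 * jacobiSum χ (χ ^ 2)) := by ring
      _ = S 1 * (S 1 * S 2) := by rw [h']
      _ = (S 1 * S 1) * S 2 := by ring
      _ = (S 2 * J) * S 2 := by rw [hJrel]
      _ = (S 2 * S 2) * J := by ring
      _ = (p:ℂ) * J := by rw [hS2]
  have v23 : jacobiSum (χ ^ 2) (χ ^ 3) = K := by
    have h := jacobiSum_mul_nontrivial (χ := χ ^ 2) (φ := χ ^ 3)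
      (by rw [show χ ^ 2 * χ ^ 3 = χ ^ 4 * χ by rw [← pow_add, ← pow_succ], hχ4, one_mul]
          exact hχne1) ψ
    rw [show χ ^ 2 * χ ^ 3 = χ ^ 4 * χ by rw [← pow_add, ← pow_succ], hχ4, one_mul] at h
    have h' : S 1 * jacobiSum (χ ^ 2) (χ ^ 3) = S 2 * S 3 := by
      have e1 : gaussSum (χ ^ 3) ψ = S 3 := rfl
      have e2 : gaussSum (χ ^ 2) ψ = S 2 := rfl
      have e3 : gaussSum χ ψ = S 1 := by rw [hSdef]; show _ = gaussSum (χ ^ 1) ψ; rw [pow_one]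
      rw [e1, e2, e3] at h
      exact h
    apply mul_left_cancel₀ hpne
    calc (p:ℂ) * jacobiSum (χ ^ 2) (χ ^ 3) = (S 1 * S 3) * jacobiSum (χ ^ 2) (χ ^ 3) := by
          rw [hS13]
      _ = S 3 * (S 1 * jacobiSum (χ ^ 2) (χ ^ 3)) := by ring
      _ = S 3 * (S 2 * S 3) := by rw [h']
      _ = (S 3 * S 3) * S 2 := by ring
      _ = (S 2 * K) * S 2 := by rw [hKrel]
      _ = (S 2 * S 2) * K := by ring
      _ = (p:ℂ) * K := by rw [hS2]
  -- the indicator function of fourth powers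
  set Q : ZMod p → Prop :=
    fun x => ∃ u : (ZMod p)ˣ, u ∈ Subgroup.zpowers (g ^ 4) ∧ (u : ZMod p) = x with hQdef
  have hind : ∀ x : ZMod p,
      (∑ m ∈ range 4, (χ ^ m) x) = if Q x then (4:ℂ) else 0 := by
    intro x
    by_cases hx : IsUnit x
    · have hux : (hx.unit : ZMod p) = x := hx.unit_spec
      obtain ⟨z, hz⟩ := Subgroup.mem_zpowers_iff.mp (hg hx.unit)
      have hval : ∀ m ∈ range 4, (χ ^ m) x = (Complex.I ^ z) ^ m := by
        intro m _
        rw [← hux, ← hz, MulChar.pow_apply_coe, hχ z]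
      rw [Finset.sum_congr rfl hval]
      by_cases h4z : (4:ℤ) ∣ z
      · have hQx : Q x := by
          obtain ⟨w, hw⟩ := h4z
          refine ⟨hx.unit, Subgroup.mem_zpowers_iff.mpr ⟨w, ?_⟩, hux⟩
          rw [← zpow_natCast g 4, ← zpow_mul, show ((4:ℕ):ℤ) * w = z by omega, hz]
        rw [if_pos hQx, I_zpow_eq_one_iff.mpr h4z]
        simp
      · have hQx : ¬ Q x := by
          rintro ⟨u, hu, hux'⟩
          have huu : u = hx.unit := Units.ext (by rw [hux', hux])
          obtain ⟨w, hw⟩ := Subgroup.mem_zpowers_iff.mp hu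
          rw [huu, ← hz] at hw
          rw [← zpow_natCast g 4, ← zpow_mul] at hw
          have hmodeq := zpow_eq_zpow_iff_modEq.mp hw
          rw [horder] at hmodeq
          have hdvd : ((p - 1 : ℕ):ℤ) ∣ z - ((4:ℕ):ℤ) * w := hmodeq.dvd
          have h4p : (4:ℤ) ∣ ((p - 1 : ℕ):ℤ) := by exact_mod_cast Int.natCast_dvd_natCast.mpr h4
          have h44 : (4:ℤ) ∣ z - ((4:ℕ):ℤ) * w := dvd_trans h4p hdvd
          apply h4z
          have hc4 : ((4:ℕ):ℤ) = (4:ℤ) := rfl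
          rw [hc4] at h44
          omega
        rw [if_neg hQx]
        refine geom_four ?_ (fun h => h4z (I_zpow_eq_one_iff.mp h))
        rw [← zpow_natCast (Complex.I ^ z) 4, ← zpow_mul]
        exact I_zpow_four_dvd ⟨z, by ring⟩
    · have hQx : ¬ Q x := by
        rintro ⟨u, _, rfl⟩
        exact hx u.isUnit
      rw [if_neg hQx]
      exact Finset.sum_eq_zero fun m _ => MulChar.map_nonunit _ hx
  -- counting t₀
  have hcard : (t₀ : ℕ) = (Finset.univ.filter (fun x : ZMod p => Q x ∧ Q (1 - x))).card := by
    rw [ht]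
    have hequiv : {ab : (ZMod p)ˣ × (ZMod p)ˣ //
        ab.1 ∈ Subgroup.zpowers (g ^ 4) ∧ ab.2 ∈ Subgroup.zpowers (g ^ 4) ∧
        (ab.1 : ZMod p) + (ab.2 : ZMod p) = 1} ≃ {x : ZMod p // Q x ∧ Q (1 - x)} :=
    { toFun := fun a => ⟨(a.1.1 : ZMod p), ⟨a.1.1, a.2.1, rfl⟩,
        ⟨a.1.2, a.2.2.1, by linear_combination a.2.2.2⟩⟩
      invFun := fun x => ⟨(x.2.1.choose, x.2.2.choose),
        x.2.1.choose_spec.1, x.2.2.choose_spec.1, by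
          linear_combination x.2.1.choose_spec.2 + x.2.2.choose_spec.2⟩
      left_inv := fun a => by
        apply Subtype.ext
        apply Prod.ext
        · apply Units.ext
          have h1 := (⟨a.1.1, a.2.1, rfl⟩ : ∃ u : (ZMod p)ˣ,
            u ∈ Subgroup.zpowers (g ^ 4) ∧ (u : ZMod p) = (a.1.1 : ZMod p))
          exact h1.choose_spec.2
        · apply Units.ext
          have h2 := (⟨a.1.2, a.2.2.1, by linear_combination a.2.2.2⟩ : ∃ u : (ZMod p)ˣ,
            u ∈ Subgroup.zpowers (g ^ 4) ∧ (u : ZMod p) = 1 - (a.1.1 : ZMod p))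
          calc ((h2.choose : (ZMod p)ˣ) : ZMod p) = 1 - (a.1.1 : ZMod p) := h2.choose_spec.2
            _ = (a.1.2 : ZMod p) := by linear_combination -a.2.2.2
      right_inv := fun x => Subtype.ext x.2.1.choose_spec.2 }
    rw [Nat.card_congr hequiv, Nat.card_eq_fintype_card, Fintype.card_subtype]
  -- double sum identity
  have hdouble : ∑ x : ZMod p, (∑ m ∈ range 4, (χ ^ m) x) *
      (∑ m' ∈ range 4, (χ ^ m') (1 - x))
      = ∑ m ∈ range 4, ∑ m' ∈ range 4, jacobiSum (χ ^ m) (χ ^ m') := by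
    have h1 : ∀ x : ZMod p, (∑ m ∈ range 4, (χ ^ m) x) * (∑ m' ∈ range 4, (χ ^ m') (1 - x))
        = ∑ m ∈ range 4, ∑ m' ∈ range 4, (χ ^ m) x * (χ ^ m') (1 - x) := fun x =>
      Finset.sum_mul_sum _ _ _ _
    rw [Finset.sum_congr rfl fun x _ => h1 x, Finset.sum_comm]
    refine Finset.sum_congr rfl fun m _ => ?_
    rw [Finset.sum_comm]
    rfl
  have ht16 : (16 : ℂ) * (t₀ : ℂ) = (p : ℂ) - 11 + 3 * J + 3 * K := by
    have hLHS : ∑ x : ZMod p, (∑ m ∈ range 4, (χ ^ m) x) *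
        (∑ m' ∈ range 4, (χ ^ m') (1 - x)) = (16 : ℂ) * (t₀ : ℂ) := by
      have h1 : ∀ x : ZMod p, (∑ m ∈ range 4, (χ ^ m) x) * (∑ m' ∈ range 4, (χ ^ m') (1 - x))
          = if Q x ∧ Q (1 - x) then (16:ℂ) else 0 := by
        intro x
        rw [hind x, hind (1 - x)]
        by_cases h1 : Q x <;> by_cases h2 : Q (1 - x) <;>
          simp [h1, h2] <;> norm_num
      rw [Finset.sum_congr rfl fun x _ => h1 x, ← Finset.sum_filter, Finset.sum_const,
        nsmul_eq_mul, ← hcard]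
      ring
    rw [← hLHS, hdouble]
    have v10 : jacobiSum χ (1 : MulChar (ZMod p) ℂ) = -1 := by rw [jacobiSum_comm]; exact v01
    have v20 : jacobiSum (χ ^ 2) (1 : MulChar (ZMod p) ℂ) = -1 := by
      rw [jacobiSum_comm]; exact v02
    have v30 : jacobiSum (χ ^ 3) (1 : MulChar (ZMod p) ℂ) = -1 := by
      rw [jacobiSum_comm]; exact v03
    have v21 : jacobiSum (χ ^ 2) χ = J := by rw [jacobiSum_comm]; exact v12
    have v31 : jacobiSum (χ ^ 3) χ = -1 := by rw [jacobiSum_comm]; exact v13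
    have v32 : jacobiSum (χ ^ 3) (χ ^ 2) = K := by rw [jacobiSum_comm]; exact v23
    simp only [Finset.sum_range_succ, Finset.sum_range_zero, zero_add, pow_zero, pow_one]
    rw [v00, v01, v02, v03, v10, ← hJdef, v12, v13, v20, v21, v22, v23, v30, v31, v32, ← hKdef]
    ring
  -- conjugation: η s is real
  have hmodk : ∀ j, j < k → ((j + e) % k + e) % k = j := by
    intro j hj
    rcases lt_or_ge j e with h | h
    · have h1 : (j + e) % k = j + e := Nat.mod_eq_of_lt (by omega)
      rw [h1, hke, show j + e + e = j + 1 * (2 * e) by ring,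
        Nat.add_mul_mod_self_right, Nat.mod_eq_of_lt (by omega)]
    · have h1 : (j + e) % k = j - e := by
        rw [Nat.mod_eq_sub_mod (by omega), Nat.mod_eq_of_lt (by omega)]
        omega
      rw [h1, show j - e + e = j by omega, Nat.mod_eq_of_lt hj]
  have hunitneg : ∀ j s : ℕ, j < k →
      (g ^ (4 * ((j + e) % k) + s) : (ZMod p)ˣ) = - g ^ (4 * j + s) := by
    intro j s hj
    have h1 : (g ^ (4 * ((j + e) % k) + s) : (ZMod p)ˣ) = g ^ (4 * (j + e) + s) := by
      rw [pow_eq_pow_iff_modEq, horder, hk]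
      exact ((Nat.mod_modEq (j + e) k).mul_left' (c := 4)).add_right s
    rw [h1, show 4 * (j + e) + s = (4 * j + s) + 4 * e by ring, pow_add, hneg1, mul_neg, mul_one]
  have hψconj : ∀ x : ZMod p, (starRingEnd ℂ) (ψ x) = ψ (-x) := by
    intro x
    rw [hψdef, ZMod.stdAddChar_apply, ZMod.stdAddChar_apply, AddChar.map_neg_eq_inv,
      ← Circle.coe_inv_eq_conj, Circle.coe_inv]
  have hconj : ∀ s, s < 4 → (starRingEnd ℂ) (η s) = η s := by
    intro s hs
    rw [hη' s, map_sum]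
    have hterm : ∀ j ∈ range k, (starRingEnd ℂ) (ψ ((g ^ (4 * j + s) : (ZMod p)ˣ) : ZMod p))
        = ψ ((g ^ (4 * ((j + e) % k) + s) : (ZMod p)ˣ) : ZMod p) := by
      intro j hj
      rw [hψconj, hunitneg j s (mem_range.1 hj), Units.val_neg]
    rw [Finset.sum_congr rfl hterm]
    refine Finset.sum_nbij' (i := fun j => (j + e) % k) (j := fun j => (j + e) % k)
      ?_ ?_ ?_ ?_ ?_
    · intro j hj
      rw [mem_range]
      exact Nat.mod_lt _ (by omega)
    · intro j hj
      rw [mem_range]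
      exact Nat.mod_lt _ (by omega)
    · intro j hj
      exact hmodk j (mem_range.1 hj)
    · intro j hj
      exact hmodk j (mem_range.1 hj)
    · intro j hj
      rfl
  -- powers of I
  have hI2 : Complex.I ^ 2 = -1 := Complex.I_sq
  have hI3 : Complex.I ^ 3 = -Complex.I := by rw [pow_succ, hI2]; ring
  have hI6 : Complex.I ^ 6 = -1 := by rw [show 6 = 2 * 3 by rfl, pow_mul, hI2]; ring
  have hI9 : Complex.I ^ 9 = Complex.I := by
    rw [show 9 = 2 * 4 + 1 by rfl, pow_succ, pow_mul, hI2]; ring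
  have hI12 : Complex.I ^ 12 = 1 := by rw [show 12 = 2 * 6 by rfl, pow_mul, hI2]; ring
  have hI18 : Complex.I ^ 18 = -1 := by rw [show 18 = 2 * 9 by rfl, pow_mul, hI2]; ring
  have hI27 : Complex.I ^ 27 = -Complex.I := by
    rw [show 27 = 2 * 13 + 1 by rfl, pow_succ, pow_mul, hI2]; ring
  -- explicit η values
  have hE0 : η 0 = (-1 + S 1 + S 2 + S 3) / 4 := by
    have h := hstepA 0 (by norm_num)
    simp only [Finset.sum_range_succ, Finset.sum_range_zero, zero_add] at h
    norm_num at h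
    linear_combination h / 4 + hS0 / 4
  have hE1 : η 1 = (-1 - Complex.I * S 1 - S 2 + Complex.I * S 3) / 4 := by
    have h := hstepA 1 (by norm_num)
    simp only [Finset.sum_range_succ, Finset.sum_range_zero, zero_add] at h
    norm_num [hI3, hI6, hI9] at h
    linear_combination h / 4 + hS0 / 4
  have hE2 : η 2 = (-1 - S 1 + S 2 - S 3) / 4 := by
    have h := hstepA 2 (by norm_num)
    simp only [Finset.sum_range_succ, Finset.sum_range_zero, zero_add] at h
    norm_num [hI6, hI12, hI18] at h
    linear_combination h / 4 + hS0 / 4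
  have hE3 : η 3 = (-1 + Complex.I * S 1 - S 2 - Complex.I * S 3) / 4 := by
    have h := hstepA 3 (by norm_num)
    simp only [Finset.sum_range_succ, Finset.sum_range_zero, zero_add] at h
    norm_num [hI9, hI18, hI27] at h
    linear_combination h / 4 + hS0 / 4
  have hT : J + K = (16 * (t₀:ℂ) - (p:ℂ) + 11) / 3 := by linear_combination -ht16 / 3
  have hQrel : J * J + K * K = ((16 * (t₀:ℂ) - (p:ℂ) + 11) / 3) ^ 2 - 2 * (p:ℂ) := by
    linear_combination (J + K + (16 * (t₀:ℂ) - (p:ℂ) + 11) / 3) * hT - 2 * hJK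
  have hmain : ∑ s ∈ range 4, (η s) ^ 4 =
      (256 * (p:ℂ) * (t₀:ℂ) ^ 2 - (32 * (p:ℂ) ^ 2 + 224 * (p:ℂ)) * (t₀:ℂ)
        + (p:ℂ) ^ 3 + 167 * (p:ℂ) ^ 2 - 113 * (p:ℂ) + 9) / 576 := by
    rw [Finset.sum_range_succ, Finset.sum_range_succ, Finset.sum_range_succ,
      Finset.sum_range_succ, Finset.sum_range_zero, zero_add, hE0, hE1, hE2, hE3]
    linear_combination
      ((12*(S 3)^2 - 2*(S 3)^4 + 24*(S 2)*(S 3)^2 + 12*(S 2)^2*(S 3)^2 - 24*(S 1)*(S 3)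
        + 8*(S 1)*(S 3)^3 - 48*(S 1)*(S 2)*(S 3) - 24*(S 1)*(S 2)^2*(S 3) + 12*(S 1)^2
        - 12*(S 1)^2*(S 3)^2 + 24*(S 1)^2*(S 2) + 12*(S 1)^2*(S 2)^2 + 8*(S 1)^3*(S 3)
        - 2*(S 1)^4 + 2*Complex.I^2*(S 3)^4 - 8*Complex.I^2*(S 1)*(S 3)^3
        + 12*Complex.I^2*(S 1)^2*(S 3)^2 - 8*Complex.I^2*(S 1)^3*(S 3)
        + 2*Complex.I^2*(S 1)^4) / 256) * hI2
      + ((24 + 4*(p:ℂ) - 48*K + 4*K^2 - 48*J + 4*J^2 + 4*(S 2)^2 + 48*(S 1)*(S 3)) / 256) * hS2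
      + ((48 + 72*(p:ℂ) + 24*(S 1)*(S 3)) / 256) * hS13
      + ((-48*(S 2) + 4*(S 2)*J + 4*(S 1)^2) / 256) * hJrel
      + ((4*(S 3)^2 - 48*(S 2) + 4*(S 2)*K) / 256) * hKrel
      + ((p:ℂ) / 64) * hQrel
      - (3 * (p:ℂ) / 16) * hT

  -- conclude
  have habs : ∀ s, s < 4 → ((‖η s‖ ^ 4 : ℝ) : ℂ) = (η s) ^ 4 := by
    intro s hs
    have hc := hconj s hs
    have h1 : ((‖η s‖ ^ 2 : ℝ) : ℂ) = η s * η s := by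
      rw [Complex.sq_norm, Complex.normSq_eq_conj_mul_self, hc]
    calc ((‖η s‖ ^ 4 : ℝ) : ℂ)
        = ((‖η s‖ ^ 2 : ℝ) : ℂ) ^ 2 := by push_cast; ring
      _ = (η s * η s) ^ 2 := by rw [h1]
      _ = η s ^ 4 := by ring
  rw [← Complex.ofReal_inj]
  push_cast
  calc (∑ s ∈ range 4, (‖η s‖ : ℂ) ^ 4)
      = ∑ s ∈ range 4, (η s) ^ 4 := by
        refine Finset.sum_congr rfl fun s hs => ?_
        have := habs s (mem_range.1 hs)
        push_cast at this
        exact this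
    _ = _ := by
        rw [hmain]
        try push_cast
        try ring
end

section
/- If p ≡ 1 (mod 8) and d = 4, then (17p² - 18p + 1)/64 ≤ V_4(p) ≤ (21p² + 24p^{3/2} + 18p + 1)/64. -/
open Finset Complex

private lemma auxOrderOfI : orderOf (Complex.I) = 4 := by
  have h4 : Complex.I ^ 4 = 1 := by
    rw [show (4 : ℕ) = 2 * 2 from rfl, pow_mul, Complex.I_sq]; norm_num
  rw [orderOf_eq_iff (by norm_num)]
  refine ⟨h4, ?_⟩
  intro m hm hm0
  interval_cases m
  · simp [Complex.ext_iff]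
  · rw [Complex.I_sq]; norm_num
  · rw [show (3 : ℕ) = 2 + 1 from rfl, pow_succ, Complex.I_sq]
    simp [Complex.ext_iff]

private lemma auxI4 : Complex.I ^ 4 = 1 := by
  rw [show (4 : ℕ) = 2 * 2 from rfl, pow_mul, Complex.I_sq]; norm_num

private lemma auxImod (m : ℕ) : Complex.I ^ m = Complex.I ^ (m % 4) := by
  conv_lhs => rw [← Nat.div_add_mod m 4]
  rw [pow_add, pow_mul, auxI4, one_pow, one_mul]

private lemma auxIpow {m n : ℕ} (h : m % 4 = n % 4) : Complex.I ^ m = Complex.I ^ n := by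
  rw [auxImod m, auxImod n, h]

private lemma auxGeom (m : ℕ) :
    ∑ t ∈ Finset.range 4, (Complex.I ^ m) ^ t = if m % 4 = 0 then 4 else 0 := by
  have h1 : Complex.I ^ m = Complex.I ^ (m % 4) := auxIpow (by omega)
  rw [h1]
  have h4 : m % 4 < 4 := Nat.mod_lt _ (by norm_num)
  interval_cases h : m % 4 <;>
    norm_num [Finset.sum_range_succ, pow_succ, Complex.I_sq]

private lemma auxPowSurj (p : ℕ) [Fact p.Prime] (g : (ZMod p)ˣ)
    (hg : ∀ x : (ZMod p)ˣ, x ∈ Subgroup.zpowers g) (x : (ZMod p)ˣ) :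
    ∃ n : ℕ, n < p - 1 ∧ g ^ n = x := by
  have hog : orderOf g = p - 1 := by
    rw [orderOf_eq_card_of_forall_mem_zpowers hg, Nat.card_eq_fintype_card,
      ZMod.card_units_eq_totient, Nat.totient_prime Fact.out]
  obtain ⟨n, hn⟩ := Submonoid.mem_powers_iff x g |>.mp (mem_powers_iff_mem_zpowers.mpr (hg x))
  have hp1 : 0 < p - 1 := by
    have : 2 ≤ p := (Fact.out : p.Prime).two_le
    have : p ≠ 2 → 2 < p := fun h => lt_of_le_of_ne this (Ne.symm h)
    omega
  refine ⟨n % (p - 1), Nat.mod_lt _ hp1, ?_⟩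
  rw [← hog, pow_mod_orderOf, hn]

private lemma auxChar (p : ℕ) [Fact p.Prime] (g : (ZMod p)ˣ)
    (hg : ∀ x : (ZMod p)ˣ, x ∈ Subgroup.zpowers g) (h4 : 4 ∣ p - 1) :
    ∃ χ : MulChar (ZMod p) ℂ, ∀ n : ℕ, χ ((g ^ n : (ZMod p)ˣ) : ZMod p) = Complex.I ^ n := by
  have hog : orderOf g = p - 1 := by
    rw [orderOf_eq_card_of_forall_mem_zpowers hg, Nat.card_eq_fintype_card,
      ZMod.card_units_eq_totient, Nat.totient_prime Fact.out]
  set Iu : ℂˣ := ⟨Complex.I, -Complex.I, by simp [Complex.I_mul_I], by simp [Complex.I_mul_I]⟩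
    with hIu
  have hIuval : ∀ n : ℕ, ((Iu ^ n : ℂˣ) : ℂ) = Complex.I ^ n := by
    intro n; rw [Units.val_pow_eq_pow_val]
  have hIuord : orderOf Iu = 4 := by
    rw [← orderOf_units]; exact auxOrderOfI
  have key : ∀ m n : ℕ, g ^ m = g ^ n → Iu ^ m = Iu ^ n := by
    intro m n h
    have h1 : m ≡ n [MOD orderOf g] := pow_eq_pow_iff_modEq.mp h
    have h2 : m ≡ n [MOD 4] := h1.of_dvd (by rw [hog]; exact h4)
    exact (pow_eq_pow_iff_modEq (x := Iu)).mpr (by rw [hIuord]; exact h2)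
  have hsurj : ∀ x : (ZMod p)ˣ, ∃ n : ℕ, g ^ n = x := fun x => by
    obtain ⟨n, _, hn⟩ := auxPowSurj p g hg x; exact ⟨n, hn⟩
  set dlog : (ZMod p)ˣ → ℕ := fun x => Classical.choose (hsurj x) with hdlog
  have hspec : ∀ x, g ^ dlog x = x := fun x => Classical.choose_spec (hsurj x)
  set f : (ZMod p)ˣ →* ℂˣ :=
    { toFun := fun x => Iu ^ dlog x
      map_one' := by
        show Iu ^ dlog 1 = 1
        have : g ^ dlog 1 = g ^ 0 := by rw [pow_zero]; exact hspec 1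
        rw [key _ _ this, pow_zero]
      map_mul' := by
        intro x y
        show Iu ^ dlog (x * y) = Iu ^ dlog x * Iu ^ dlog y
        have : g ^ dlog (x * y) = g ^ (dlog x + dlog y) := by
          rw [pow_add, hspec, hspec, hspec]
        rw [key _ _ this, pow_add] } with hf
  refine ⟨MulChar.ofUnitHom f, fun n => ?_⟩
  rw [MulChar.ofUnitHom_coe]
  have : g ^ dlog (g ^ n) = g ^ n := hspec _
  show ((f (g ^ n) : ℂˣ) : ℂ) = _
  have hfval : f (g ^ n) = Iu ^ n := key _ _ this
  rw [hfval, hIuval]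

private lemma auxSumUnits (p : ℕ) [Fact p.Prime] (g : (ZMod p)ˣ)
    (hg : ∀ x : (ZMod p)ˣ, x ∈ Subgroup.zpowers g) (F : ZMod p → ℂ) (hF : F 0 = 0) :
    ∑ x : ZMod p, F x = ∑ n ∈ Finset.range (p - 1), F ((g ^ n : (ZMod p)ˣ) : ZMod p) := by
  have hog : orderOf g = p - 1 := by
    rw [orderOf_eq_card_of_forall_mem_zpowers hg, Nat.card_eq_fintype_card,
      ZMod.card_units_eq_totient, Nat.totient_prime Fact.out]
  rw [← Finset.sum_erase Finset.univ hF]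
  refine (Finset.sum_bij (fun n _ => ((g ^ n : (ZMod p)ˣ) : ZMod p)) ?_ ?_ ?_ ?_).symm
  · intro n _
    exact Finset.mem_erase.mpr ⟨Units.ne_zero _, Finset.mem_univ _⟩
  · intro m hm n hn h
    have h2 : m ≡ n [MOD p - 1] := by
      have := pow_eq_pow_iff_modEq.mp (Units.ext h)
      rwa [hog] at this
    have hm' := Finset.mem_range.mp hm
    have hn' := Finset.mem_range.mp hn
    unfold Nat.ModEq at h2
    rwa [Nat.mod_eq_of_lt hm', Nat.mod_eq_of_lt hn'] at h2
  · intro x hx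
    have hx0 : x ≠ 0 := (Finset.mem_erase.mp hx).1
    obtain ⟨u, hu⟩ := isUnit_iff_ne_zero.mpr hx0
    obtain ⟨n, hn, hgn⟩ := auxPowSurj p g hg u
    exact ⟨n, Finset.mem_range.mpr hn, by simp only [hgn, hu]⟩
  · intro n _; rfl

set_option maxHeartbeats 1000000 in
/-- If `p ≡ 1 (mod 8)` and `d = 4`, then
`(17p² - 18p + 1)/64 ≤ V₄(p) ≤ (21p² + 24p^{3/2} + 18p + 1)/64`. -/
theorem gaussian_periods_V4_d4_p1mod8_bounds (p k : ℕ) (hp : p.Prime)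
    (hmod : p % 8 = 1) (hk : p - 1 = 4 * k)
    (g : (ZMod p)ˣ) (hg : ∀ x : (ZMod p)ˣ, x ∈ Subgroup.zpowers g)
    (η : ℕ → ℂ)
    (hη : ∀ a : ℕ, η a = ∑ j ∈ Finset.range k,
      Complex.exp (2 * (Real.pi : ℂ) * Complex.I *
        (((g ^ (4 * j + a) : (ZMod p)ˣ) : ZMod p).val : ℂ) / (p : ℂ))) :
    (17 * (p : ℝ) ^ 2 - 18 * p + 1) / 64
      ≤ ∑ s ∈ Finset.range 4, ‖η s‖ ^ 4 ∧
    ∑ s ∈ Finset.range 4, ‖η s‖ ^ 4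
      ≤ (21 * (p : ℝ) ^ 2 + 24 * (p : ℝ) ^ ((3 : ℝ) / 2) + 18 * p + 1) / 64 := by
  haveI : Fact p.Prime := ⟨hp⟩
  have hp9 : 9 ≤ p := by have := hp.two_le; omega
  have h4 : 4 ∣ p - 1 := ⟨k, hk⟩
  have hkeven : k % 2 = 0 := by omega
  have hk0 : 0 < k := by omega
  set ψ := ZMod.stdAddChar (N := p) with hψdef
  have hψprim : ψ.IsPrimitive := ZMod.isPrimitive_stdAddChar p
  obtain ⟨χ, hχ⟩ := auxChar p g hg h4
  -- ψ in exponential form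
  have hψ_exp : ∀ x : ZMod p,
      ψ x = Complex.exp (2 * (Real.pi : ℂ) * Complex.I * (x.val : ℂ) / p) := by
    intro x
    have h1 := ZMod.stdAddChar_coe (N := p) (x.val : ℤ)
    rw [show (((x.val : ℤ) : ZMod p)) = x by push_cast; simp [ZMod.natCast_val]] at h1
    rw [hψdef, h1]; push_cast; ring_nf
  have hηψ : ∀ a : ℕ, η a = ∑ j ∈ Finset.range k, ψ ((g ^ (4 * j + a) : (ZMod p)ˣ) : ZMod p) := by
    intro a; rw [hη a]
    exact Finset.sum_congr rfl fun j _ => (hψ_exp _).symm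
  -- character power values
  have hχt : ∀ t n : ℕ, (χ ^ t) ((g ^ n : (ZMod p)ˣ) : ZMod p) = Complex.I ^ (t * n) := by
    intro t n
    rcases Nat.eq_zero_or_pos t with ht | ht
    · subst ht
      rw [pow_zero, MulChar.one_apply (g ^ n).isUnit, zero_mul, pow_zero]
    · rw [MulChar.pow_apply' _ ht.ne', hχ n, ← pow_mul, mul_comm n t]
  -- Gauss sums as sums over powers of g
  set G : ℕ → ℂ := fun t => gaussSum (χ ^ t) ψ with hGdef
  have hGsum : ∀ t : ℕ, G t = ∑ n ∈ Finset.range (p - 1),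
      Complex.I ^ (t * n) * ψ ((g ^ n : (ZMod p)ˣ) : ZMod p) := by
    intro t
    rw [hGdef]
    show gaussSum (χ ^ t) ψ = _
    rw [gaussSum, auxSumUnits p g hg (fun x => (χ ^ t) x * ψ x)
      (by simp only [MulChar.map_nonunit _ (not_isUnit_zero (M₀ := ZMod p)), zero_mul])]
    exact Finset.sum_congr rfl fun n _ => by rw [hχt]
  -- value of trivial-character Gauss sum
  have hψne : ψ ≠ 1 := by
    intro h1
    have h2 : ψ (0 : ZMod p) = ψ 1 := by rw [h1]; simp
    exact zero_ne_one (ZMod.injective_stdAddChar (N := p) h2)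
  have hG0 : (∑ n ∈ Finset.range (p - 1), ψ ((g ^ n : (ZMod p)ˣ) : ZMod p)) = -1 := by
    have h3 : ∀ n ∈ Finset.range (p-1),
        (fun x => ψ x - (if x = 0 then (1:ℂ) else 0)) ((g ^ n : (ZMod p)ˣ) : ZMod p)
          = ψ ((g ^ n : (ZMod p)ˣ) : ZMod p) := by
      intro n _; simp only []
      rw [if_neg (Units.ne_zero _), sub_zero]
    have h1 := auxSumUnits p g hg (fun x => ψ x - (if x = 0 then 1 else 0))
      (by simp [AddChar.map_zero_eq_one])
    rw [Finset.sum_congr rfl h3] at h1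
    rw [← h1, Finset.sum_sub_distrib, AddChar.sum_eq_zero_of_ne_one hψne,
      Finset.sum_ite_eq' Finset.univ (0 : ZMod p) (fun _ => (1:ℂ))]
    simp
  -- main formula : 4 η a = -1 + I^{3a} G1 + I^{2a} G2 + I^a G3
  have formulaA : ∀ a : ℕ, a < 4 →
      4 * η a = -1 + Complex.I ^ (3 * a) * G 1 + Complex.I ^ (2 * a) * G 2
        + Complex.I ^ a * G 3 := by
    intro a ha
    have hbig : ∑ t ∈ Finset.range 4, Complex.I ^ (3 * t * a) * G t = 4 * η a := by
      have step1 : ∀ t ∈ Finset.range 4, Complex.I ^ (3 * t * a) * G t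
          = ∑ n ∈ Finset.range (p-1),
              (Complex.I ^ (3 * a + n)) ^ t * ψ ((g ^ n : (ZMod p)ˣ) : ZMod p) := by
        intro t _
        rw [hGsum t, Finset.mul_sum]
        refine Finset.sum_congr rfl fun n _ => ?_
        rw [← mul_assoc, ← pow_add, ← pow_mul]
        congr 2
        ring
      rw [Finset.sum_congr rfl step1, Finset.sum_comm]
      have step2 : ∀ n ∈ Finset.range (p-1),
          ∑ t ∈ Finset.range 4, (Complex.I ^ (3 * a + n)) ^ t * ψ ((g ^ n : (ZMod p)ˣ) : ZMod p)
          = (if n % 4 = a then (4:ℂ) else 0) * ψ ((g ^ n : (ZMod p)ˣ) : ZMod p) := by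
        intro n _
        rw [← Finset.sum_mul, auxGeom]
        congr 1
        have : (3 * a + n) % 4 = 0 ↔ n % 4 = a := by omega
        simp only [this]
      rw [Finset.sum_congr rfl step2, hk]
      have step3 : ∀ n ∈ Finset.range (4 * k),
          (if n % 4 = a then (4:ℂ) else 0) * ψ ((g ^ n : (ZMod p)ˣ) : ZMod p)
          = (if n % 4 = a then 4 * ψ ((g ^ n : (ZMod p)ˣ) : ZMod p) else 0) := by
        intro n _; split_ifs <;> simp
      rw [Finset.sum_congr rfl step3, ← Finset.sum_filter]
      have step4 : ∑ n ∈ (Finset.range (4*k)).filter (fun n => n % 4 = a),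
            4 * ψ ((g ^ n : (ZMod p)ˣ) : ZMod p)
          = ∑ j ∈ Finset.range k, 4 * ψ ((g ^ (4*j+a) : (ZMod p)ˣ) : ZMod p) := by
        refine (Finset.sum_bij (fun j _ => 4*j+a) ?_ ?_ ?_ ?_).symm
        · intro j hj
          have := Finset.mem_range.mp hj
          show 4 * j + a ∈ _
          exact Finset.mem_filter.mpr ⟨Finset.mem_range.mpr (by omega), by omega⟩
        · intro j1 h1 j2 h2 h
          omega
        · intro n hn
          obtain ⟨hn1, hn2⟩ := Finset.mem_filter.mp hn
          have := Finset.mem_range.mp hn1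
          exact ⟨n / 4, Finset.mem_range.mpr (by omega), by omega⟩
        · intro j _; rfl
      rw [step4, ← Finset.mul_sum, ← hηψ a]
    rw [← hbig]
    have e0 : Complex.I ^ (3 * 0 * a) = 1 := by norm_num
    have e2 : Complex.I ^ (3 * 2 * a) = Complex.I ^ (2 * a) := auxIpow (by omega)
    have e3 : Complex.I ^ (3 * 3 * a) = Complex.I ^ a := auxIpow (by omega)
    have hG0' : G 0 = -1 := by
      rw [hGsum 0]
      simpa using hG0
    rw [Finset.sum_range_succ, Finset.sum_range_succ, Finset.sum_range_succ,
      Finset.sum_range_one, e0, e2, e3, hG0']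
    ring_nf
  -- basic character facts
  have horder : orderOf g = p - 1 := by
    rw [orderOf_eq_card_of_forall_mem_zpowers hg, Nat.card_eq_fintype_card,
      ZMod.card_units_eq_totient, Nat.totient_prime Fact.out]
  have hχ1 : χ ≠ 1 := by
    intro h
    have h1 : χ ((g ^ 1 : (ZMod p)ˣ) : ZMod p) = Complex.I ^ 1 := hχ 1
    rw [h, MulChar.one_apply (g ^ 1).isUnit, pow_one] at h1
    have : Complex.I ≠ 1 := by simp [Complex.ext_iff]
    exact this h1.symm
  have hχ2ne : χ ^ 2 ≠ 1 := by
    intro h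
    have h1 : (χ ^ 2) ((g ^ 1 : (ZMod p)ˣ) : ZMod p) = Complex.I ^ (2 * 1) := hχt 2 1
    rw [h, MulChar.one_apply (g ^ 1).isUnit] at h1
    rw [mul_one, Complex.I_sq] at h1
    norm_num at h1
  have hχ4 : χ ^ 4 = 1 := by
    apply MulChar.ext
    intro u
    obtain ⟨n, _, hn⟩ := auxPowSurj p g hg u
    rw [← hn, hχt 4 n, MulChar.one_apply (g ^ n).isUnit, auxImod (4 * n),
      Nat.mul_mod_right, pow_zero]
  have hinv : χ⁻¹ = χ ^ 3 := by
    apply inv_eq_of_mul_eq_one_right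
    rw [← pow_succ' χ 3, hχ4]
  have hgneg : ((g ^ (2 * k) : (ZMod p)ˣ) : ZMod p) = -1 := by
    have h1 : (g ^ (2 * k)) ^ 2 = 1 := by
      rw [← pow_mul, show 2 * k * 2 = 4 * k by ring, ← hk, ← horder, pow_orderOf_eq_one]
    have h2 : g ^ (2 * k) ≠ 1 :=
      pow_ne_one_of_lt_orderOf (by omega) (by rw [horder]; omega)
    have hx2 : ((g ^ (2 * k) : (ZMod p)ˣ) : ZMod p) ^ 2 = 1 := by
      rw [← Units.val_pow_eq_pow_val, h1, Units.val_one]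
    have hx1 : ((g ^ (2 * k) : (ZMod p)ˣ) : ZMod p) ≠ 1 := by
      intro h
      exact h2 (Units.ext (by rw [h, Units.val_one]))
    have h3 : (((g ^ (2 * k) : (ZMod p)ˣ) : ZMod p) - 1)
        * (((g ^ (2 * k) : (ZMod p)ˣ) : ZMod p) + 1) = 0 := by linear_combination hx2
    rcases mul_eq_zero.mp h3 with h | h
    · exact absurd (by linear_combination h) hx1
    · linear_combination h
  have hχneg : χ (-1 : ZMod p) = 1 := by
    rw [← hgneg, hχ (2 * k), pow_mul, Complex.I_sq]
    exact Even.neg_one_pow ⟨k / 2, by omega⟩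
  -- Gauss sum relations
  have hTU : G 1 * G 3 = (p : ℂ) := by
    have h := gaussSum_mul_gaussSum_eq_card hχ1 hψprim
    have hψinv : ψ⁻¹ = ψ.mulShift (-1 : ZMod p) := by
      ext x; rw [AddChar.inv_apply, AddChar.mulShift_apply, neg_one_mul]
    have hms := gaussSum_mulShift (χ ^ 3) ψ (-1 : (ZMod p)ˣ)
    have hval : ((-1 : (ZMod p)ˣ) : ZMod p) = (-1 : ZMod p) := by simp
    rw [hval] at hms
    have hχ3neg : (χ ^ 3) (-1 : ZMod p) = 1 := by
      rw [MulChar.pow_apply' _ (by norm_num), hχneg, one_pow]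
    rw [hχ3neg, one_mul, ← hψinv] at hms
    rw [hinv, hms, ZMod.card] at h
    show gaussSum (χ ^ 1) ψ * gaussSum (χ ^ 3) ψ = (p : ℂ)
    rw [pow_one]
    exact h
  have hquad : (χ ^ 2).IsQuadratic := by
    intro x
    by_cases hx : IsUnit x
    · obtain ⟨u, hu⟩ := hx
      obtain ⟨n, _, hn⟩ := auxPowSurj p g hg u
      rw [← hu, ← hn, hχt 2 n, pow_mul, Complex.I_sq]
      rcases Nat.even_or_odd n with he | ho
      · right; left; exact he.neg_one_pow
      · right; right; exact ho.neg_one_pow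
    · left; exact MulChar.map_nonunit _ hx
  have hS2 : G 2 ^ 2 = (p : ℂ) := by
    show gaussSum (χ ^ 2) ψ ^ 2 = (p : ℂ)
    rw [gaussSum_sq hχ2ne hquad hψprim]
    rw [MulChar.pow_apply' _ (by norm_num), hχneg, one_pow, one_mul, ZMod.card]
  have hT2 : G 1 ^ 2 = G 2 * jacobiSum χ χ := by
    have h := jacobiSum_mul_nontrivial (χ := χ) (φ := χ) (by rw [← pow_two]; exact hχ2ne) ψ
    show gaussSum (χ ^ 1) ψ ^ 2 = gaussSum (χ ^ 2) ψ * jacobiSum χ χ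
    rw [pow_one, sq, ← h, pow_two]
  have hmul33 : χ ^ 3 * χ ^ 3 = χ ^ 2 := by
    rw [← pow_add, show (3 + 3 : ℕ) = 4 + 2 from rfl, pow_add, hχ4, one_mul]
  have hU2 : G 3 ^ 2 = G 2 * jacobiSum (χ ^ 3) (χ ^ 3) := by
    have h := jacobiSum_mul_nontrivial (χ := χ ^ 3) (φ := χ ^ 3)
      (by rw [hmul33]; exact hχ2ne) ψ
    rw [hmul33] at h
    show gaussSum (χ ^ 3) ψ ^ 2 = gaussSum (χ ^ 2) ψ * jacobiSum (χ ^ 3) (χ ^ 3)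
    rw [sq, ← h]
  have hJJ : jacobiSum χ χ * jacobiSum (χ ^ 3) (χ ^ 3) = (p : ℂ) := by
    have h := jacobiSum_mul_jacobiSum_inv (F := ZMod p) (F' := ℂ)
      (by rw [ringChar.eq_zero, ZMod.ringChar_zmod_n]; exact (Ne.symm hp.ne_zero))
      hχ1 hχ1 (by rw [← pow_two]; exact hχ2ne)
    rw [hinv, ZMod.card] at h
    exact h
  have hJ2conj : jacobiSum (χ ^ 3) (χ ^ 3) = (starRingEnd ℂ) (jacobiSum χ χ) := by
    have hcomp : χ.ringHomComp (starRingEnd ℂ) = χ ^ 3 := by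
      apply MulChar.ext
      intro u
      obtain ⟨n, _, hn⟩ := auxPowSurj p g hg u
      rw [← hn, MulChar.ringHomComp_apply, hχ n, hχt 3 n, map_pow, Complex.conj_I,
        show (-Complex.I) = Complex.I ^ 3 by rw [show (3:ℕ) = 2 + 1 from rfl, pow_succ,
          Complex.I_sq, neg_one_mul], ← pow_mul]
    have h := jacobiSum_ringHomComp χ χ (starRingEnd ℂ)
    rw [hcomp] at h
    exact h
  -- conjugation of the additive character
  have hconjψ : ∀ x : ZMod p, (starRingEnd ℂ) (ψ x) = ψ (-x) := by
    intro x
    have h1 := ZMod.stdAddChar_coe (N := p) (x.val : ℤ)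
    have h2 := ZMod.stdAddChar_coe (N := p) (-(x.val : ℤ))
    have hx1 : (((x.val : ℤ) : ZMod p)) = x := by push_cast; simp [ZMod.natCast_val]
    rw [hx1] at h1
    rw [hψdef, h1, ← Complex.exp_conj,
      show (-x : ZMod p) = (((-(x.val : ℤ) : ℤ)) : ZMod p) by push_cast; simp [ZMod.natCast_val],
      h2]
    congr 1
    simp only [map_div₀, map_mul, Complex.conj_I, map_ofNat, map_intCast, map_natCast,
      Complex.conj_ofReal]
    push_cast
    ring
  -- conjugation of Gauss sums
  have hconjG : ∀ s t : ℕ, s ≠ 0 → t ≠ 0 → (3 * s) % 4 = t % 4 →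
      (starRingEnd ℂ) (G s) = G t := by
    intro s t hs ht hst
    have hpt : ∀ x : ZMod p, (starRingEnd ℂ) ((χ ^ s) x) = (χ ^ t) x := by
      intro x
      by_cases hx : IsUnit x
      · obtain ⟨u, hu⟩ := hx
        obtain ⟨n, _, hn⟩ := auxPowSurj p g hg u
        rw [← hu, ← hn, hχt s n, hχt t n, map_pow, Complex.conj_I,
          show (-Complex.I) = Complex.I ^ 3 by rw [show (3:ℕ) = 2 + 1 from rfl, pow_succ,
            Complex.I_sq, neg_one_mul], ← pow_mul]
        exact auxIpow (by
          have h' : 3 * s ≡ t [MOD 4] := hst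
          have := h'.mul_right n
          calc (3 * (s * n)) % 4 = (3 * s * n) % 4 := by ring_nf
          _ = (t * n) % 4 := this)
      · rw [MulChar.map_nonunit _ hx, MulChar.map_nonunit _ hx, map_zero]
    have hχtneg : (χ ^ t) (-1 : ZMod p) = 1 := by
      rw [MulChar.pow_apply' _ ht, hχneg, one_pow]
    show (starRingEnd ℂ) (gaussSum (χ ^ s) ψ) = gaussSum (χ ^ t) ψ
    rw [gaussSum, gaussSum, map_sum]
    calc ∑ x : ZMod p, (starRingEnd ℂ) ((χ ^ s) x * ψ x)
        = ∑ x : ZMod p, (χ ^ t) x * ψ (-x) := by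
          refine Finset.sum_congr rfl fun x _ => ?_
          rw [map_mul, hpt, hconjψ]
      _ = ∑ x : ZMod p, (χ ^ t) (-x) * ψ x := by
          exact Fintype.sum_equiv (Equiv.neg (ZMod p)) _ _ (fun x => by rw [Equiv.neg_apply, neg_neg])
      _ = ∑ x : ZMod p, (χ ^ t) x * ψ x := by
          refine Finset.sum_congr rfl fun x _ => ?_
          rw [show (-x : ZMod p) = (-1) * x by ring, map_mul, hχtneg, one_mul]
  have hc1 : (starRingEnd ℂ) (G 1) = G 3 := hconjG 1 3 one_ne_zero three_ne_zero (by norm_num)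
  have hc2 : (starRingEnd ℂ) (G 2) = G 2 := hconjG 2 2 two_ne_zero two_ne_zero (by norm_num)
  have hc3 : (starRingEnd ℂ) (G 3) = G 1 := hconjG 3 1 three_ne_zero one_ne_zero (by norm_num)
  -- explicit formulas for the four periods
  have i3 : Complex.I ^ 3 = -Complex.I := by
    rw [show (3:ℕ) = 2 + 1 from rfl, pow_succ, Complex.I_sq, neg_one_mul]
  have i6 : Complex.I ^ 6 = -1 := by
    rw [show (6:ℕ) = 2 + 4 from rfl, pow_add, Complex.I_sq, auxI4, neg_one_mul]
  have i9 : Complex.I ^ 9 = Complex.I := by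
    rw [auxImod 9, show (9 % 4 : ℕ) = 1 from rfl, pow_one]
  have hη0 : η 0 = (-1 + G 1 + G 2 + G 3) / 4 := by
    have h := formulaA 0 (by norm_num)
    norm_num at h
    linear_combination h / 4
  have hη1 : η 1 = (-1 - Complex.I * G 1 - G 2 + Complex.I * G 3) / 4 := by
    have h := formulaA 1 (by norm_num)
    rw [show (3 * 1 : ℕ) = 3 from rfl, show (2 * 1 : ℕ) = 2 from rfl, pow_one, i3,
      Complex.I_sq] at h
    linear_combination h / 4
  have hη2 : η 2 = (-1 - G 1 + G 2 - G 3) / 4 := by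
    have h := formulaA 2 (by norm_num)
    rw [show (3 * 2 : ℕ) = 6 from rfl, show (2 * 2 : ℕ) = 4 from rfl, i6, auxI4,
      Complex.I_sq] at h
    linear_combination h / 4
  have hη3 : η 3 = (-1 + Complex.I * G 1 - G 2 - Complex.I * G 3) / 4 := by
    have h := formulaA 3 (by norm_num)
    rw [show (3 * 3 : ℕ) = 9 from rfl, show (2 * 3 : ℕ) = 6 from rfl, i9, i6, i3] at h
    linear_combination h / 4
  -- reality of the periods
  have hreal : ∀ s, s < 4 → (starRingEnd ℂ) (η s) = η s := by
    intro s hs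
    interval_cases s
    · rw [hη0]
      simp only [map_div₀, map_add, map_sub, map_neg, map_mul, map_one, map_ofNat,
        Complex.conj_I, hc1, hc2, hc3]
      ring
    · rw [hη1]
      simp only [map_div₀, map_add, map_sub, map_neg, map_mul, map_one, map_ofNat,
        Complex.conj_I, hc1, hc2, hc3]
      ring
    · rw [hη2]
      simp only [map_div₀, map_add, map_sub, map_neg, map_mul, map_one, map_ofNat,
        Complex.conj_I, hc1, hc2, hc3]
      ring
    · rw [hη3]
      simp only [map_div₀, map_add, map_sub, map_neg, map_mul, map_one, map_ofNat,
        Complex.conj_I, hc1, hc2, hc3]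
      ring
  -- the key algebraic identity
  set J := jacobiSum χ χ with hJdef
  set J2 := jacobiSum (χ ^ 3) (χ ^ 3) with hJ2def
  have hkey : (256 : ℂ) * (η 0 ^ 4 + η 1 ^ 4 + η 2 ^ 4 + η 3 ^ 4)
      = 68 * (p:ℂ)^2 + 4 * p * (J + J2)^2 - 48 * p * (J + J2) + 72 * p + 4 := by
    rw [hη0, hη1, hη2, hη3]
    linear_combination (24*G 1*G 3 + 48*G 2^2 + 24*(p:ℂ) + 48) * hTU
      + (4*J^2 + 4*J2^2 + 4*G 2^2 + 52*(p:ℂ) - 48*J - 48*J2 + 24) * hS2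
      + (4*G 1^2 + 4*G 2*J - 48*G 2) * hT2
      + (4*G 3^2 + 4*G 2*J2 - 48*G 2) * hU2
      + (-8*(p:ℂ)) * hJJ
      + (12*(1+G 2)^2*(G 1-G 3)^2 + 2*(G 1-G 3)^4*(Complex.I^2-1)) * Complex.I_sq
  have hre : ∀ s, s < 4 → (((η s).re : ℝ) : ℂ) = η s :=
    fun s hs => Complex.conj_eq_iff_re.mp (hreal s hs)
  have hw : J + J2 = ((2 * J.re : ℝ) : ℂ) := by
    rw [hJ2conj]; exact Complex.add_conj J
  rw [hw] at hkey
  push_cast at hkey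
  have hR : (256 : ℝ) * ((η 0).re^4 + (η 1).re^4 + (η 2).re^4 + (η 3).re^4)
      = 68*(p:ℝ)^2 + 16*p*(J.re)^2 - 96*p*(J.re) + 72*p + 4 := by
    apply Complex.ofReal_injective
    push_cast
    rw [hre 0 (by norm_num), hre 1 (by norm_num), hre 2 (by norm_num), hre 3 (by norm_num)]
    linear_combination hkey
  -- |J|² = p
  have hnormJ : (J.re)^2 + (J.im)^2 = (p:ℝ) := by
    have h := Complex.mul_conj J
    rw [← hJ2conj, hJJ] at h
    have h2 : Complex.normSq J = (p:ℝ) := by exact_mod_cast h.symm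
    rw [← h2, Complex.normSq_apply]
    ring
  have ha2 : (J.re)^2 ≤ (p:ℝ) := by nlinarith [sq_nonneg J.im]
  -- rewrite the goal sum
  have habs : ∀ s, s < 4 → ‖η s‖ ^ 4 = (η s).re ^ 4 := by
    intro s hs
    rw [← hre s hs, Complex.norm_real, Real.norm_eq_abs, Complex.ofReal_re,
      show (4:ℕ) = 2*2 from rfl, pow_mul, _root_.sq_abs, ← pow_mul]
  have hgoal : ∑ s ∈ Finset.range 4, ‖η s‖ ^ 4
      = (η 0).re^4 + (η 1).re^4 + (η 2).re^4 + (η 3).re^4 := by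
    rw [Finset.sum_range_succ, Finset.sum_range_succ, Finset.sum_range_succ,
      Finset.sum_range_one, habs 0 (by norm_num), habs 1 (by norm_num),
      habs 2 (by norm_num), habs 3 (by norm_num)]
  rw [hgoal]
  have hp0 : (0:ℝ) < p := by positivity
  have hs0 : 0 ≤ Real.sqrt p := Real.sqrt_nonneg _
  have hsq2 : Real.sqrt p ^ 2 = (p:ℝ) := Real.sq_sqrt (by positivity)
  have hp32 : (p:ℝ) ^ ((3:ℝ)/2) = p * Real.sqrt p := by
    rw [show ((3:ℝ)/2) = 1 + 1/2 by norm_num, Real.rpow_add hp0, Real.rpow_one,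
      ← Real.sqrt_eq_rpow]
  have haleS : |J.re| ≤ Real.sqrt p := by
    rw [← Real.sqrt_sq_eq_abs]
    exact Real.sqrt_le_sqrt (by nlinarith)
  obtain ⟨hb1, hb2⟩ := abs_le.mp haleS
  constructor
  · nlinarith [hR, mul_nonneg hp0.le (sq_nonneg (J.re - 3))]
  · rw [hp32]
    have e1 : (p:ℝ) * (J.re)^2 ≤ p * p := mul_le_mul_of_nonneg_left ha2 hp0.le
    have e2 : (p:ℝ) * (-J.re) ≤ p * Real.sqrt p :=
      mul_le_mul_of_nonneg_left (by linarith) hp0.le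
    nlinarith [hR, e1, e2]
end
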